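/- arXiv:2107.09326 — 4 statements merged into one kernel-verified Lean document; each statement's English description precedes it below -/
import Mathlib

section
/- For any exponential sum P(t) = Σ_{j=1}^ℓ c_j e^{i t x_j} with real frequencies x_j and complex coefficients c_j, and any intervals Ω ⊆ I of positive Lebesgue measure, the sup-norm of P on I is at most (4e·μ(I)/μ(Ω))^{ℓ-1} times the sup-norm of P on Ω (Turán's inequality). -/
open Finset Complex




/-- Complete homogeneous "symmetric" function of the list entries, degree `r`. -/
noncomputable def hc : List ℂ → ℕ → ℂ
  | [], r => if r = 0 then 1 else 0
  | (w :: l), r => ∑ t ∈ Finset.range (r + 1), w ^ t * hc l (r - t)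

@[simp] lemma hc_nil (r : ℕ) : hc [] r = if r = 0 then 1 else 0 := rfl

lemma hc_cons (w : ℂ) (l : List ℂ) (r : ℕ) :
    hc (w :: l) r = ∑ t ∈ Finset.range (r + 1), w ^ t * hc l (r - t) := rfl

@[simp] lemma hc_zero (l : List ℂ) : hc l 0 = 1 := by
  induction l with
  | nil => simp [hc]
  | cons w l ih => simp [hc_cons, ih]

lemma hc_peel (z : ℂ) (l : List ℂ) (r : ℕ) :
    hc (z :: l) (r + 1) = z * hc (z :: l) r + hc l (r + 1) := by
  rw [hc_cons, Finset.sum_range_succ' (fun t => z ^ t * hc l (r + 1 - t))]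
  simp only [pow_succ, pow_zero, one_mul, Nat.succ_sub_succ, Nat.sub_zero]
  rw [hc_cons z l r, Finset.mul_sum]
  congr 1
  exact Finset.sum_congr rfl fun i _ => by ring

lemma hc_sub (z y : ℂ) (l : List ℂ) (r : ℕ) :
    hc (z :: l) (r + 1) - hc (y :: l) (r + 1) = (z - y) * hc (z :: y :: l) r := by
  induction r with
  | zero =>
      rw [hc_peel, hc_peel]
      simp
  | succ r ih =>
      rw [hc_peel z l, hc_peel y l, hc_peel z (y :: l)]
      have : hc (z :: l) (r + 1) = hc (y :: l) (r + 1) + (z - y) * hc (z :: y :: l) r := by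
        linear_combination ih
      rw [this]
      ring

lemma hc_singleton (v : ℂ) (r : ℕ) : hc [v] r = v ^ r := by
  rw [hc_cons]
  rw [Finset.sum_eq_single r]
  · simp
  · intro t ht hne
    have htr : t < r := lt_of_le_of_ne (Nat.lt_succ_iff.mp (Finset.mem_range.mp ht)) hne
    simp [Nat.sub_ne_zero_of_lt htr]
  · intro h; exact absurd (Finset.self_mem_range_succ r) h

/-- hockey stick -/
lemma hs_sum (q r : ℕ) : ∑ u ∈ Finset.range (r + 1), (u + q).choose u = (r + q + 1).choose r := by
  induction r with
  | zero => simp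
  | succ r ih =>
      rw [Finset.sum_range_succ, ih]
      have e1 : r + 1 + q = r + q + 1 := by omega
      rw [e1, show r + q + 1 + 1 = r + q + 2 by omega]
      have h1 : (r + q + 1).choose r = (r + q + 1).choose (q + 1) := by
        have h := Nat.choose_symm (show r ≤ r + q + 1 by omega)
        rw [show r + q + 1 - r = q + 1 by omega] at h
        omega
      have h2 : (r + q + 1).choose (r + 1) = (r + q + 1).choose q := by
        have h := Nat.choose_symm (show r + 1 ≤ r + q + 1 by omega)
        rw [show r + q + 1 - (r + 1) = q by omega] at h
        omega
      have h3 : (r + q + 2).choose (r + 1) = (r + q + 2).choose (q + 1) := by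
        have h := Nat.choose_symm (show r + 1 ≤ r + q + 2 by omega)
        rw [show r + q + 2 - (r + 1) = q + 1 by omega] at h
        omega
      have pascal : (r + q + 2).choose (q + 1) = (r + q + 1).choose q + (r + q + 1).choose (q+1) :=
        Nat.choose_succ_succ (r + q + 1) q
      omega

lemma hc_norm (v : ℂ) (l : List ℂ) (r : ℕ) (hb : ∀ w ∈ v :: l, ‖w‖ ≤ 1) :
    ‖hc (v :: l) r‖ ≤ (r + l.length).choose r := by
  induction l generalizing v r with
  | nil =>
      rw [hc_singleton]
      simp only [List.length_nil, Nat.add_zero, Nat.choose_self, Nat.cast_one]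
      calc ‖v ^ r‖ = ‖v‖ ^ r := norm_pow v r
        _ ≤ 1 ^ r := pow_le_pow_left₀ (norm_nonneg v) (hb v (by simp)) r
        _ = 1 := one_pow r
  | cons w l ih =>
      rw [hc_cons]
      calc ‖∑ t ∈ Finset.range (r + 1), v ^ t * hc (w :: l) (r - t)‖
          ≤ ∑ t ∈ Finset.range (r + 1), ‖v ^ t * hc (w :: l) (r - t)‖ := norm_sum_le _ _
        _ ≤ ∑ t ∈ Finset.range (r + 1), ((r - t + l.length).choose (r - t) : ℝ) := by
            apply Finset.sum_le_sum
            intro t _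
            rw [norm_mul]
            have h1 : ‖v ^ t‖ ≤ 1 := by
              rw [norm_pow]
              exact pow_le_one₀ (norm_nonneg v) (hb v (by simp))
            have h2 := ih w (r - t) (fun u hu => hb u (by simp [List.mem_cons] at hu ⊢; tauto))
            calc ‖v ^ t‖ * ‖hc (w :: l) (r - t)‖ ≤ 1 * ((r - t + l.length).choose (r - t) : ℝ) :=
              mul_le_mul h1 h2 (norm_nonneg _) zero_le_one
              _ = _ := one_mul _
        _ = ((r + l.length + 1).choose r : ℝ) := by
            rw [← Nat.cast_sum]
            norm_cast
            rw [← hs_sum l.length r]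
            rw [← Finset.sum_range_reflect (fun u => (u + l.length).choose u) (r+1)]
            apply Finset.sum_congr rfl
            intro t ht
            congr 1 <;> omega
        _ = (((r + (w :: l).length).choose r : ℕ) : ℝ) := by
            norm_cast

/-- coefficients of `∏ (X - w)` over the list -/
noncomputable def cf : List ℂ → ℕ → ℂ
  | [], t => if t = 0 then 1 else 0
  | (w :: l), t => (if t = 0 then 0 else cf l (t - 1)) - w * cf l t

lemma cf_gt (l : List ℂ) (t : ℕ) (ht : l.length < t) : cf l t = 0 := by
  induction l generalizing t with
  | nil => simp only [cf, if_neg (show t ≠ 0 by simp at ht; omega)]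
  | cons w l ih =>
      simp only [cf]
      rw [ih t (by simp at ht ⊢; omega), if_neg (show t ≠ 0 by simp at ht; omega),
        ih (t-1) (by simp at ht ⊢; omega)]
      ring

lemma cf_eval (l : List ℂ) (z : ℂ) :
    ∑ t ∈ Finset.range (l.length + 1), cf l t * z ^ t = (l.map (fun w => z - w)).prod := by
  induction l with
  | nil => simp [cf]
  | cons w l ih =>
      rw [List.map_cons, List.prod_cons, ← ih, List.length_cons]
      have hsplit : ∀ t : ℕ, cf (w :: l) t * z ^ t
          = (if t = 0 then 0 else cf l (t-1)) * z ^ t - w * (cf l t * z ^ t) := by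
        intro t; simp only [cf]; ring
      rw [Finset.sum_congr rfl (fun t _ => hsplit t), Finset.sum_sub_distrib]
      have h2 : ∑ t ∈ Finset.range (l.length + 1 + 1), w * (cf l t * z ^ t)
          = w * ∑ t ∈ Finset.range (l.length + 1), cf l t * z ^ t := by
        rw [Finset.sum_range_succ, cf_gt l _ (by omega), ← Finset.mul_sum]
        ring
      have h1 : ∑ t ∈ Finset.range (l.length + 1 + 1),
            (if t = 0 then 0 else cf l (t-1)) * z ^ t
          = z * ∑ t ∈ Finset.range (l.length + 1), cf l t * z ^ t := by
        rw [Finset.sum_range_succ'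
          (fun t => (if t = 0 then 0 else cf l (t-1)) * z ^ t) (l.length+1)]
        simp only [Nat.add_sub_cancel, Nat.succ_ne_zero, if_false, if_true,
          eq_self_iff_true, zero_mul, add_zero, pow_zero]
        rw [Finset.mul_sum]
        exact Finset.sum_congr rfl fun i _ => by ring
      rw [h1, h2]; ring

lemma cf_norm (l : List ℂ) (hb : ∀ w ∈ l, ‖w‖ ≤ 1) :
    ∑ t ∈ Finset.range (l.length + 1), ‖cf l t‖ ≤ 2 ^ l.length := by
  induction l with
  | nil => simp [cf]
  | cons w l ih =>
      have hw : ‖w‖ ≤ 1 := hb w (by simp)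
      have ih' := ih (fun u hu => hb u (by simp [hu]))
      rw [List.length_cons]
      calc ∑ t ∈ Finset.range (l.length + 1 + 1), ‖cf (w :: l) t‖
          ≤ ∑ t ∈ Finset.range (l.length + 1 + 1),
              (‖(if t = 0 then (0:ℂ) else cf l (t-1))‖ + ‖w‖ * ‖cf l t‖) := by
            apply Finset.sum_le_sum
            intro t _
            simp only [cf]
            calc ‖(if t = 0 then (0:ℂ) else cf l (t-1)) - w * cf l t‖
                ≤ ‖(if t = 0 then (0:ℂ) else cf l (t-1))‖ + ‖w * cf l t‖ := norm_sub_le _ _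
              _ = _ := by rw [norm_mul]
        _ = (∑ t ∈ Finset.range (l.length + 1 + 1), ‖(if t = 0 then (0:ℂ) else cf l (t-1))‖)
            + ‖w‖ * ∑ t ∈ Finset.range (l.length + 1 + 1), ‖cf l t‖ := by
            rw [Finset.sum_add_distrib, Finset.mul_sum]
        _ ≤ 2 ^ l.length + 1 * 2 ^ l.length := by
            have e1 : ∑ t ∈ Finset.range (l.length + 1 + 1),
                ‖(if t = 0 then (0:ℂ) else cf l (t-1))‖
                = ∑ t ∈ Finset.range (l.length + 1), ‖cf l t‖ := by
              rw [Finset.sum_range_succ'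
                (fun t => ‖(if t = 0 then (0:ℂ) else cf l (t-1))‖) (l.length+1)]
              simp [Nat.add_sub_cancel]
            have e2 : ∑ t ∈ Finset.range (l.length + 1 + 1), ‖cf l t‖
                = ∑ t ∈ Finset.range (l.length + 1), ‖cf l t‖ := by
              rw [Finset.sum_range_succ, cf_gt l _ (by omega)]
              simp
            rw [e1, e2]
            have h0 : (0:ℝ) ≤ ∑ t ∈ Finset.range (l.length + 1), ‖cf l t‖ :=
              Finset.sum_nonneg fun _ _ => norm_nonneg _
            gcongr
        _ = 2 ^ (l.length + 1) := by ring

/-- the list `[p (k-1), ..., p 0]` -/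
noncomputable def Lk (p : ℕ → ℂ) : ℕ → List ℂ
  | 0 => []
  | (k+1) => p k :: Lk p k

@[simp] lemma Lk_length (p : ℕ → ℂ) (k : ℕ) : (Lk p k).length = k := by
  induction k with
  | zero => rfl
  | succ k ih => simp [Lk, ih]

lemma Lk_mem (p : ℕ → ℂ) (k : ℕ) (w : ℂ) (hw : w ∈ Lk p k) : ∃ j < k, p j = w := by
  induction k with
  | zero => simp [Lk] at hw
  | succ k ih =>
      simp only [Lk, List.mem_cons] at hw
      rcases hw with h | h
      · exact ⟨k, Nat.lt_succ_self k, h.symm⟩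
      · obtain ⟨j, hj, hj'⟩ := ih h
        exact ⟨j, Nat.lt_succ_of_lt hj, hj'⟩

lemma Lk_prod (p : ℕ → ℂ) (k : ℕ) (z : ℂ) :
    ((Lk p k).map (fun w => z - w)).prod = ∏ j ∈ Finset.range k, (z - p j) := by
  induction k with
  | zero => simp [Lk]
  | succ k ih =>
      rw [Finset.prod_range_succ, ← ih]
      simp [Lk, mul_comm]

lemma newton (p : ℕ → ℂ) (M : ℕ) (z : ℂ) :
    ∀ s, s ≤ M →
      z ^ M = (∑ k ∈ Finset.range s,
          hc (Lk p (k+1)) (M - k) * ∏ j ∈ Finset.range k, (z - p j))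
        + hc (z :: Lk p s) (M - s) * ∏ j ∈ Finset.range s, (z - p j) := by
  intro s
  induction s with
  | zero =>
      intro _
      simp only [Finset.range_zero, Finset.sum_empty, Finset.prod_empty, Nat.sub_zero,
        mul_one, zero_add]
      show z ^ M = hc (z :: Lk p 0) M
      rw [show Lk p 0 = [] from rfl, hc_singleton]
  | succ s ih =>
      intro hs
      have hs' : s ≤ M := Nat.le_of_succ_le hs
      have e : M - s = (M - (s+1)) + 1 := by omega
      have hsub := hc_sub z (p s) (Lk p s) (M - (s+1))
      have tail : hc (z :: Lk p s) (M - s)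
          = hc (Lk p (s+1)) (M - s) + (z - p s) * hc (z :: Lk p (s+1)) (M - (s+1)) := by
        rw [e, show Lk p (s+1) = p s :: Lk p s from rfl]
        linear_combination hsub
      rw [ih hs']
      rw [tail, Finset.sum_range_succ, Finset.prod_range_succ]
      ring

lemma key (m M : ℕ) (p b : ℕ → ℂ) (hp : ∀ j, j ≤ m → ‖p j‖ ≤ 1) (S : ℝ)
    (hS : ∀ t, t ≤ m → ‖∑ j ∈ Finset.range (m+1), b j * p j ^ t‖ ≤ S) :
    ‖∑ j ∈ Finset.range (m+1), b j * p j ^ M‖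
      ≤ (∑ k ∈ Finset.range (m+1), (M.choose k : ℝ) * 2 ^ k) * S := by
  have hS0 : 0 ≤ S := le_trans (norm_nonneg _) (hS 0 (Nat.zero_le m))
  have hB1 : (1:ℝ) ≤ ∑ k ∈ Finset.range (m+1), (M.choose k : ℝ) * 2 ^ k := by
    have h := Finset.single_le_sum (f := fun k => (M.choose k : ℝ) * 2 ^ k)
      (fun i _ => by positivity) (Finset.mem_range.mpr (Nat.succ_pos m))
    simpa using h
  by_cases hMm : M ≤ m
  · calc ‖∑ j ∈ Finset.range (m+1), b j * p j ^ M‖ ≤ S := hS M hMm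
      _ = 1 * S := (one_mul S).symm
      _ ≤ _ := by gcongr
  · push_neg at hMm
    have hsM : m + 1 ≤ M := hMm
    -- Newton expansion at each p j
    have hrep : ∀ j ∈ Finset.range (m+1),
        p j ^ M = ∑ k ∈ Finset.range (m+1),
          hc (Lk p (k+1)) (M - k) * ∏ i ∈ Finset.range k, (p j - p i) := by
      intro j hj
      have := newton p M (p j) (m+1) hsM
      rw [this]
      have hzero : (∏ i ∈ Finset.range (m+1), (p j - p i)) = 0 :=
        Finset.prod_eq_zero hj (sub_self (p j))
      rw [hzero, mul_zero, add_zero]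
    have hW : ∀ k, ∀ j, (∏ i ∈ Finset.range k, (p j - p i))
        = ∑ t ∈ Finset.range (k+1), cf (Lk p k) t * p j ^ t := by
      intro k j
      rw [← Lk_prod p k (p j), ← cf_eval (Lk p k) (p j), Lk_length]
    have hQ : ∑ j ∈ Finset.range (m+1), b j * p j ^ M
        = ∑ k ∈ Finset.range (m+1), hc (Lk p (k+1)) (M - k) *
            ∑ t ∈ Finset.range (k+1), cf (Lk p k) t *
              ∑ j ∈ Finset.range (m+1), b j * p j ^ t := by
      calc ∑ j ∈ Finset.range (m+1), b j * p j ^ M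
          = ∑ j ∈ Finset.range (m+1), b j * ∑ k ∈ Finset.range (m+1),
              hc (Lk p (k+1)) (M - k) * ∏ i ∈ Finset.range k, (p j - p i) :=
            Finset.sum_congr rfl (fun j hj => by rw [hrep j hj])
        _ = ∑ j ∈ Finset.range (m+1), ∑ k ∈ Finset.range (m+1),
              b j * (hc (Lk p (k+1)) (M - k) * ∏ i ∈ Finset.range k, (p j - p i)) :=
            Finset.sum_congr rfl (fun j _ => Finset.mul_sum _ _ _)
        _ = ∑ k ∈ Finset.range (m+1), ∑ j ∈ Finset.range (m+1),
              b j * (hc (Lk p (k+1)) (M - k) * ∏ i ∈ Finset.range k, (p j - p i)) :=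
            Finset.sum_comm
        _ = ∑ k ∈ Finset.range (m+1), hc (Lk p (k+1)) (M - k) *
              ∑ j ∈ Finset.range (m+1), b j * ∏ i ∈ Finset.range k, (p j - p i) := by
            refine Finset.sum_congr rfl (fun k _ => ?_)
            rw [Finset.mul_sum]
            exact Finset.sum_congr rfl fun j _ => by ring
        _ = ∑ k ∈ Finset.range (m+1), hc (Lk p (k+1)) (M - k) *
            ∑ t ∈ Finset.range (k+1), cf (Lk p k) t *
              ∑ j ∈ Finset.range (m+1), b j * p j ^ t := by
            refine Finset.sum_congr rfl (fun k _ => ?_)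
            congr 1
            calc ∑ j ∈ Finset.range (m+1), b j * ∏ i ∈ Finset.range k, (p j - p i)
                = ∑ j ∈ Finset.range (m+1), ∑ t ∈ Finset.range (k+1),
                    b j * (cf (Lk p k) t * p j ^ t) := by
                  refine Finset.sum_congr rfl (fun j _ => ?_)
                  rw [hW k j, Finset.mul_sum]
              _ = ∑ t ∈ Finset.range (k+1), ∑ j ∈ Finset.range (m+1),
                    b j * (cf (Lk p k) t * p j ^ t) := Finset.sum_comm
              _ = ∑ t ∈ Finset.range (k+1), cf (Lk p k) t *
                    ∑ j ∈ Finset.range (m+1), b j * p j ^ t := by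
                  refine Finset.sum_congr rfl (fun t _ => ?_)
                  rw [Finset.mul_sum]
                  exact Finset.sum_congr rfl fun j _ => by ring
    rw [hQ]
    have hd : ∀ k, k ≤ m → ‖hc (Lk p (k+1)) (M - k)‖ ≤ (M.choose k : ℝ) := by
      intro k hk
      have hmem : ∀ w ∈ p k :: Lk p k, ‖w‖ ≤ 1 := by
        intro w hw
        rcases List.mem_cons.mp hw with h | h
        · rw [h]; exact hp k hk
        · obtain ⟨j, hj, rfl⟩ := Lk_mem p k w h
          exact hp j (by omega)
      have := hc_norm (p k) (Lk p k) (M - k) hmem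
      rw [Lk_length] at this
      rw [show M - k + k = M by omega, Nat.choose_symm (show k ≤ M by omega)] at this
      exact this
    have hinner : ∀ k, k ≤ m →
        ‖∑ t ∈ Finset.range (k+1), cf (Lk p k) t *
            ∑ j ∈ Finset.range (m+1), b j * p j ^ t‖ ≤ 2 ^ k * S := by
      intro k hk
      calc ‖∑ t ∈ Finset.range (k+1), cf (Lk p k) t *
              ∑ j ∈ Finset.range (m+1), b j * p j ^ t‖
          ≤ ∑ t ∈ Finset.range (k+1), ‖cf (Lk p k) t‖ *
              ‖∑ j ∈ Finset.range (m+1), b j * p j ^ t‖ := by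
            refine le_trans (norm_sum_le _ _) (Finset.sum_le_sum fun t _ => ?_)
            rw [norm_mul]
        _ ≤ ∑ t ∈ Finset.range (k+1), ‖cf (Lk p k) t‖ * S := by
            refine Finset.sum_le_sum fun t ht => ?_
            have htk : t ≤ m := by have := Finset.mem_range.mp ht; omega
            exact mul_le_mul_of_nonneg_left (hS t htk) (norm_nonneg _)
        _ = (∑ t ∈ Finset.range (k+1), ‖cf (Lk p k) t‖) * S := by rw [Finset.sum_mul]
        _ ≤ 2 ^ k * S := by
            have hmem : ∀ w ∈ Lk p k, ‖w‖ ≤ 1 := by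
              intro w hw
              obtain ⟨j, hj, rfl⟩ := Lk_mem p k w hw
              exact hp j (by omega)
            have := cf_norm (Lk p k) hmem
            rw [Lk_length] at this
            exact mul_le_mul_of_nonneg_right this hS0
    calc ‖∑ k ∈ Finset.range (m+1), hc (Lk p (k+1)) (M - k) *
            ∑ t ∈ Finset.range (k+1), cf (Lk p k) t *
              ∑ j ∈ Finset.range (m+1), b j * p j ^ t‖
        ≤ ∑ k ∈ Finset.range (m+1), ‖hc (Lk p (k+1)) (M - k)‖ *
            ‖∑ t ∈ Finset.range (k+1), cf (Lk p k) t *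
              ∑ j ∈ Finset.range (m+1), b j * p j ^ t‖ := by
          refine le_trans (norm_sum_le _ _) (Finset.sum_le_sum fun k _ => ?_)
          rw [norm_mul]
      _ ≤ ∑ k ∈ Finset.range (m+1), (M.choose k : ℝ) * (2 ^ k * S) := by
          refine Finset.sum_le_sum fun k hk => ?_
          have hkm : k ≤ m := by have := Finset.mem_range.mp hk; omega
          exact mul_le_mul (hd k hkm) (hinner k hkm) (norm_nonneg _) (Nat.cast_nonneg _)
      _ = (∑ k ∈ Finset.range (m+1), (M.choose k : ℝ) * 2 ^ k) * S := by
          rw [Finset.sum_mul]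
          exact Finset.sum_congr rfl fun k _ => by ring



lemma numeric (m M : ℕ) (hm : 1 ≤ m) (hmM : m ≤ M) (L : ℝ) (hL : 1 ≤ L)
    (hM : (M:ℝ) ≤ 2 * L * m) :
    ∑ k ∈ Finset.range (m+1), (M.choose k : ℝ) * 2 ^ k ≤ (4 * Real.exp 1 * L) ^ m := by
  have hM1 : 1 ≤ M := le_trans hm hmM
  have hMpos : (0:ℝ) < M := by exact_mod_cast hM1
  have hmpos : (0:ℝ) < m := by exact_mod_cast hm
  set lam : ℝ := m / (2 * M) with hlam
  have hlam0 : 0 < lam := by positivity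
  have hlam1 : lam ≤ 1 := by
    rw [hlam, div_le_one (by positivity)]
    have : (m:ℝ) ≤ M := by exact_mod_cast hmM
    linarith
  have step1 : (∑ k ∈ Finset.range (m+1), (M.choose k : ℝ) * 2 ^ k) * lam ^ m
      ≤ (2 * lam + 1) ^ M := by
    have e1 : (∑ k ∈ Finset.range (m+1), (M.choose k : ℝ) * 2 ^ k) * lam ^ m
        = ∑ k ∈ Finset.range (m+1), (M.choose k : ℝ) * 2 ^ k * lam ^ m := by
      rw [Finset.sum_mul]
    rw [e1]
    have step1a : ∑ k ∈ Finset.range (m+1), (M.choose k : ℝ) * 2 ^ k * lam ^ m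
        ≤ ∑ k ∈ Finset.range (m+1), (2 * lam) ^ k * 1 ^ (M - k) * (M.choose k : ℝ) := by
      refine Finset.sum_le_sum fun k hk => ?_
      have hkm : k ≤ m := by have := Finset.mem_range.mp hk; omega
      have hpow : lam ^ m ≤ lam ^ k := pow_le_pow_of_le_one hlam0.le hlam1 hkm
      have : (M.choose k : ℝ) * 2 ^ k * lam ^ m ≤ (M.choose k : ℝ) * 2 ^ k * lam ^ k := by
        have h2 : (0:ℝ) ≤ (M.choose k : ℝ) * 2 ^ k := by positivity
        exact mul_le_mul_of_nonneg_left hpow h2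
      calc (M.choose k : ℝ) * 2 ^ k * lam ^ m ≤ (M.choose k : ℝ) * 2 ^ k * lam ^ k := this
        _ = (2 * lam) ^ k * 1 ^ (M - k) * (M.choose k : ℝ) := by
            rw [mul_pow, one_pow]; ring
    refine le_trans step1a ?_
    have step1b : ∑ k ∈ Finset.range (m+1), (2 * lam) ^ k * 1 ^ (M - k) * (M.choose k : ℝ)
        ≤ ∑ k ∈ Finset.range (M+1), (2 * lam) ^ k * 1 ^ (M - k) * (M.choose k : ℝ) := by
      refine Finset.sum_le_sum_of_subset_of_nonneg
        (Finset.range_subset_range.mpr (by omega)) (fun k _ _ => by positivity)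
    refine le_trans step1b ?_
    rw [← add_pow (2 * lam) 1 M]
  have step2 : (2 * lam + 1) ^ M ≤ Real.exp 1 ^ m := by
    have e2 : 2 * lam = (m:ℝ) / M := by rw [hlam]; field_simp
    have h3 : 2 * lam + 1 ≤ Real.exp ((m:ℝ)/M) := by
      rw [e2]; exact Real.add_one_le_exp _
    calc (2 * lam + 1) ^ M ≤ Real.exp ((m:ℝ)/M) ^ M := by
          apply pow_le_pow_left₀ (by positivity) h3
      _ = Real.exp ((m:ℝ)/M * M) := by rw [← Real.exp_nat_mul]; ring_nf
      _ = Real.exp m := by rw [div_mul_cancel₀]; exact ne_of_gt hMpos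
      _ = Real.exp 1 ^ m := by rw [← Real.exp_nat_mul, mul_one]
  have hfinal : (∑ k ∈ Finset.range (m+1), (M.choose k : ℝ) * 2 ^ k)
      ≤ (Real.exp 1 / lam) ^ m := by
    rw [div_pow, le_div_iff₀ (by positivity)]
    exact le_trans step1 step2
  refine le_trans hfinal ?_
  have hq : Real.exp 1 / lam ≤ 4 * Real.exp 1 * L := by
    rw [hlam, div_div_eq_mul_div, div_le_iff₀ hmpos]
    have he : 0 < Real.exp 1 := Real.exp_pos 1
    calc Real.exp 1 * (2 * M) ≤ Real.exp 1 * (2 * (2 * L * m)) := by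
          apply mul_le_mul_of_nonneg_left _ he.le
          linarith
      _ = 4 * Real.exp 1 * L * m := by ring
  exact pow_le_pow_left₀ (by positivity) hq m

lemma turan_aux (m : ℕ) (c : Fin (m+1) → ℂ) (x : Fin (m+1) → ℝ)
    (a b a' b' : ℝ) (hsub : Set.Icc a' b' ⊆ Set.Icc a b) (hpos : a' < b')
    (t : ℝ) (ht : t ∈ Set.Icc a b)
    (hside : a' + m * ((b' - a') / (m+1)) ≤ t) :
    ‖∑ j, c j * Complex.exp (Complex.I * t * x j)‖ ≤
      (4 * Real.exp 1 * (b - a) / (b' - a')) ^ m *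
        sSup ((fun s : ℝ => ‖∑ j, c j * Complex.exp (Complex.I * s * x j)‖) ''
          Set.Icc a' b') := by
  have haa' : a ≤ a' := (hsub ⟨le_refl a', hpos.le⟩).1
  have hbb' : b' ≤ b := (hsub ⟨hpos.le, le_refl b'⟩).2
  set h : ℝ := (b' - a') / (m+1) with hh_def
  have hh : 0 < h := by
    apply div_pos (by linarith) (by positivity)
  -- continuity and sup facts
  have hcont : Continuous (fun s : ℝ => ‖∑ j, c j * Complex.exp (Complex.I * s * x j)‖) := by
    apply Continuous.norm
    apply continuous_finset_sum
    intro j _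
    apply Continuous.mul continuous_const
    apply Complex.continuous_exp.comp
    exact (continuous_const.mul Complex.continuous_ofReal).mul continuous_const
  set T : ℝ := sSup ((fun s : ℝ => ‖∑ j, c j * Complex.exp (Complex.I * s * x j)‖) ''
    Set.Icc a' b') with hT_def
  have hbdd : BddAbove ((fun s : ℝ => ‖∑ j, c j * Complex.exp (Complex.I * s * x j)‖) ''
      Set.Icc a' b') := (isCompact_Icc.image hcont).bddAbove
  have hT : ∀ s ∈ Set.Icc a' b', ‖∑ j, c j * Complex.exp (Complex.I * s * x j)‖ ≤ T :=
    fun s hs => le_csSup hbdd ⟨s, hs, rfl⟩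
  have hT0 : 0 ≤ T := le_trans (norm_nonneg _) (hT a' ⟨le_refl a', hpos.le⟩)
  -- grid
  set N : ℕ := ⌈(t - b') / h⌉₊ with hN_def
  have hNge : t - b' ≤ N * h := by
    have h1 : (t - b') / h ≤ (N : ℝ) := Nat.le_ceil _
    calc t - b' = (t - b') / h * h := by field_simp
      _ ≤ N * h := mul_le_mul_of_nonneg_right h1 hh.le
  have hNle : (N : ℝ) * h ≤ t - a' - m * h := by
    have hsum : a' + ((m:ℝ)+1) * h = b' := by
      rw [hh_def]; field_simp; ring
    by_cases hcase : t ≤ b'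
    · have hN0 : N = 0 := by
        rw [hN_def, Nat.ceil_eq_zero]
        apply div_nonpos_of_nonpos_of_nonneg (by linarith) hh.le
      rw [hN0]
      push_cast
      linarith [hside]
    · push_neg at hcase
      have hx0 : 0 ≤ (t - b') / h := div_nonneg (by linarith) hh.le
      have h2 : (N : ℝ) < (t - b') / h + 1 := Nat.ceil_lt_add_one hx0
      have h3 : (N : ℝ) * h < ((t - b') / h + 1) * h :=
        mul_lt_mul_of_pos_right h2 hh
      have h4 : ((t - b') / h + 1) * h = t - b' + h := by field_simp
      nlinarith [h3, h4, hsum]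
  set M : ℕ := N + m with hM_def
  set u : ℝ := t - M * h with hu_def
  have hut : u + M * h = t := by rw [hu_def]; ring
  have node_mem : ∀ s : ℕ, s ≤ m → u + s * h ∈ Set.Icc a' b' := by
    intro s hs
    have hsm : (s : ℝ) ≤ m := by exact_mod_cast hs
    have hMr : (M : ℝ) = N + m := by rw [hM_def]; push_cast; ring
    constructor
    · have : u = t - N * h - m * h := by rw [hu_def, hMr]; ring
      nlinarith [hNle, mul_nonneg (Nat.cast_nonneg s) hh.le]
    · have : u + s * h ≤ u + m * h := by nlinarith
      have h2 : u + m * h = t - N * h := by rw [hu_def, hMr]; ring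
      nlinarith [hNge]
  -- extended coefficient/frequency functions
  set X : ℕ → ℝ := fun j => if hj : j < m+1 then x ⟨j, hj⟩ else 0 with hX_def
  set Cc : ℕ → ℂ := fun j => if hj : j < m+1 then c ⟨j, hj⟩ else 0 with hC_def
  set p : ℕ → ℂ := fun j => Complex.exp (Complex.I * h * X j) with hp_def
  set bb : ℕ → ℂ := fun j => Cc j * Complex.exp (Complex.I * u * X j) with hb_def
  have hpnorm : ∀ j, j ≤ m → ‖p j‖ ≤ 1 := by
    intro j _
    rw [hp_def]
    have e : Complex.I * (h:ℂ) * (X j : ℂ) = ((h * X j : ℝ) : ℂ) * Complex.I := by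
      push_cast; ring
    simp only [e]
    rw [Complex.norm_exp_ofReal_mul_I]
  -- the discrete samples are values of P on the grid
  have hgrid : ∀ s : ℕ, ∑ j ∈ Finset.range (m+1), bb j * p j ^ s
      = ∑ j, c j * Complex.exp (Complex.I * ((u + s * h) : ℝ) * x j) := by
    intro s
    rw [← Fin.sum_univ_eq_sum_range (fun j => bb j * p j ^ s) (m+1)]
    apply Finset.sum_congr rfl
    intro j _
    have hj : (j : ℕ) < m + 1 := j.isLt
    have hXj : X (j : ℕ) = x j := by rw [hX_def]; simp [hj]
    have hCj : Cc (j : ℕ) = c j := by rw [hC_def]; simp [hj]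
    rw [hb_def, hp_def]
    simp only [hXj, hCj]
    rw [show Complex.exp (Complex.I * (h:ℂ) * (x j : ℂ)) ^ s
        = Complex.exp ((s:ℂ) * (Complex.I * (h:ℂ) * (x j : ℂ))) from
      (Complex.exp_nat_mul _ s).symm]
    rw [mul_assoc (c j), ← Complex.exp_add]
    congr 2
    push_cast
    ring
  have hS : ∀ s : ℕ, s ≤ m → ‖∑ j ∈ Finset.range (m+1), bb j * p j ^ s‖ ≤ T := by
    intro s hs
    rw [hgrid s]
    exact hT _ (node_mem s hs)
  have hkey := key m M p bb hpnorm T hS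
  rw [hgrid M, hut] at hkey
  -- bound the binomial sum
  set L : ℝ := (b - a) / (b' - a') with hL_def
  have hL1 : 1 ≤ L := by
    rw [hL_def, le_div_iff₀ (by linarith)]
    linarith
  have hML : (M : ℝ) * h ≤ b - a := by
    have hMr : (M : ℝ) = N + m := by rw [hM_def]; push_cast; ring
    have : (M : ℝ) * h = N * h + m * h := by rw [hMr]; ring
    rw [this]
    have h1 : (N:ℝ) * h + m * h ≤ t - a' := by linarith [hNle]
    have h2 : t ≤ b := ht.2
    linarith
  have hMbound : (M : ℝ) ≤ (m + 1) * L := by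
    rw [hL_def]
    rw [show ((m:ℝ)+1) * ((b-a)/(b'-a')) = (b-a) / h from by rw [hh_def]; field_simp]
    rw [le_div_iff₀ hh]
    exact hML
  have hBsum : ∑ k ∈ Finset.range (m+1), (M.choose k : ℝ) * 2 ^ k
      ≤ (4 * Real.exp 1 * L) ^ m := by
    rcases Nat.eq_zero_or_pos m with hm0 | hm1
    · subst hm0
      simp
    · apply numeric m M hm1 (by omega) L hL1
      have : ((m:ℝ) + 1) ≤ 2 * m := by
        have : (1:ℝ) ≤ m := by exact_mod_cast hm1
        linarith
      calc (M:ℝ) ≤ (m+1) * L := hMbound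
        _ ≤ 2 * m * L := by nlinarith
        _ = 2 * L * m := by ring
  have hfac : (4 * Real.exp 1 * (b - a) / (b' - a')) ^ m = (4 * Real.exp 1 * L) ^ m := by
    rw [hL_def]; congr 1; ring
  rw [hfac]
  calc ‖∑ j, c j * Complex.exp (Complex.I * (t:ℝ) * x j)‖
      ≤ (∑ k ∈ Finset.range (m+1), (M.choose k : ℝ) * 2 ^ k) * T := hkey
    _ ≤ (4 * Real.exp 1 * L) ^ m * T := mul_le_mul_of_nonneg_right hBsum hT0

/-- **Turán's inequality** for exponential sums: if `P(t) = ∑ c_j e^{i t x_j}` is an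
exponential sum of degree at most `ℓ` with distinct real frequencies, and `Ω ⊆ I` are
intervals of positive measure, then
`‖P‖_{L∞(I)} ≤ (4e μ(I)/μ(Ω))^{ℓ-1} ‖P‖_{L∞(Ω)}`. -/
theorem turan_inequality (ℓ : ℕ) (c : Fin ℓ → ℂ) (x : Fin ℓ → ℝ)
    (hx : Function.Injective x)
    (a b a' b' : ℝ) (hsub : Set.Icc a' b' ⊆ Set.Icc a b) (hpos : a' < b') :
    ∀ t ∈ Set.Icc a b,
      ‖∑ j, c j * Complex.exp (Complex.I * t * x j)‖ ≤
        (4 * Real.exp 1 * (b - a) / (b' - a')) ^ (ℓ - 1) *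
          sSup ((fun t : ℝ => ‖∑ j, c j * Complex.exp (Complex.I * t * x j)‖) ''
            Set.Icc a' b') := by
  intro t ht
  have haa' : a ≤ a' := (hsub ⟨le_refl a', hpos.le⟩).1
  have hbb' : b' ≤ b := (hsub ⟨hpos.le, le_refl b'⟩).2
  cases ℓ with
  | zero =>
      simp only [Finset.univ_eq_empty, Finset.sum_empty, norm_zero]
      apply mul_nonneg
      · apply pow_nonneg
        apply div_nonneg _ (by linarith)
        nlinarith [Real.exp_pos 1]
      · apply Real.sSup_nonneg
        rintro y ⟨s, _, rfl⟩
        norm_num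
  | succ m =>
      have hl1 : m + 1 - 1 = m := rfl
      rw [hl1]
      set h : ℝ := (b' - a') / (m+1) with hh_def
      have hh : 0 < h := div_pos (by linarith) (by positivity)
      by_cases hc1 : a' + m * h ≤ t
      · exact turan_aux m c x a b a' b' hsub hpos t ht hc1
      · push_neg at hc1
        by_cases hc2 : t ≤ b' - m * h
        · -- reflection
          have hsub' : Set.Icc (-b') (-a') ⊆ Set.Icc (-b) (-a) := by
            rintro s ⟨h1, h2⟩
            exact ⟨by linarith, by linarith⟩
          have hpos' : -b' < -a' := by linarith
          have ht' : -t ∈ Set.Icc (-b) (-a) := ⟨by linarith [ht.2], by linarith [ht.1]⟩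
          have hside' : -b' + m * ((-a' - -b') / (m+1)) ≤ -t := by
            have e : (-a' - -b') / ((m:ℝ)+1) = h := by rw [hh_def]; ring_nf
            rw [e]
            linarith
          have haux := turan_aux m c (fun j => -x j) (-b) (-a) (-b') (-a')
            hsub' hpos' (-t) ht' hside'
          have e1 : ∀ (s : ℝ), ∀ j : Fin (m+1),
              c j * Complex.exp (Complex.I * (-s : ℝ) * ((-x j : ℝ) : ℂ))
              = c j * Complex.exp (Complex.I * (s:ℝ) * (x j : ℂ)) := by
            intro s j
            congr 2
            push_cast
            ring
          have eimg : ((fun s : ℝ => ‖∑ j, c j * Complex.exp (Complex.I * s *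
                ((fun j => -x j) j : ℝ))‖) '' Set.Icc (-b') (-a'))
              = ((fun s : ℝ => ‖∑ j, c j * Complex.exp (Complex.I * s * (x j : ℝ))‖) ''
                Set.Icc a' b') := by
            ext y
            constructor
            · rintro ⟨s, hs, rfl⟩
              refine ⟨-s, ⟨by linarith [hs.2], by linarith [hs.1]⟩, ?_⟩
              simp only
              congr 1
              apply Finset.sum_congr rfl
              intro j _
              congr 2
              push_cast
              ring
            · rintro ⟨s, hs, rfl⟩
              refine ⟨-s, ⟨by linarith [hs.2], by linarith [hs.1]⟩, ?_⟩
              simp only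
              congr 1
              apply Finset.sum_congr rfl
              intro j _
              congr 2
              push_cast
              ring
          rw [eimg] at haux
          have elhs : ∑ j, c j * Complex.exp (Complex.I * ((-t : ℝ) : ℂ) *
                (((fun j => -x j) j : ℝ) : ℂ))
              = ∑ j, c j * Complex.exp (Complex.I * (t:ℝ) * (x j : ℂ)) := by
            apply Finset.sum_congr rfl
            intro j _
            congr 2
            push_cast
            ring
          rw [elhs] at haux
          have efac : -a - -b = b - a := by ring
          have efac' : -a' - -b' = b' - a' := by ring
          rw [efac, efac'] at haux
          exact haux
        · -- middle case : t ∈ Icc a' b'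
          push_neg at hc2
          have htm : t ∈ Set.Icc a' b' := by
            constructor
            · have : a' ≤ b' - m * h := by
                have : (m:ℝ) * h ≤ ((m:ℝ)+1) * h := by nlinarith
                have he : a' + ((m:ℝ)+1) * h = b' := by rw [hh_def]; field_simp; ring
                linarith
              linarith
            · have : a' + (m:ℝ) * h ≤ a' + ((m:ℝ)+1)*h := by nlinarith
              have he : a' + ((m:ℝ)+1) * h = b' := by rw [hh_def]; field_simp; ring
              linarith
          have hcont : Continuous (fun s : ℝ =>
              ‖∑ j, c j * Complex.exp (Complex.I * s * x j)‖) := by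
            apply Continuous.norm
            apply continuous_finset_sum
            intro j _
            apply Continuous.mul continuous_const
            apply Complex.continuous_exp.comp
            exact (continuous_const.mul Complex.continuous_ofReal).mul continuous_const
          have hbdd : BddAbove ((fun s : ℝ =>
              ‖∑ j, c j * Complex.exp (Complex.I * s * x j)‖) '' Set.Icc a' b') :=
            (isCompact_Icc.image hcont).bddAbove
          have hT := le_csSup hbdd ⟨t, htm, rfl⟩
          have hT0 : (0:ℝ) ≤ sSup ((fun s : ℝ =>
              ‖∑ j, c j * Complex.exp (Complex.I * s * x j)‖) '' Set.Icc a' b') :=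
            le_trans (norm_nonneg _) hT
          have hfac : (1:ℝ) ≤ 4 * Real.exp 1 * (b - a) / (b' - a') := by
            rw [le_div_iff₀ (by linarith)]
            nlinarith [Real.one_le_exp (by norm_num : (0:ℝ) ≤ 1)]
          calc ‖∑ j, c j * Complex.exp (Complex.I * (t:ℝ) * x j)‖
              ≤ sSup ((fun s : ℝ =>
                ‖∑ j, c j * Complex.exp (Complex.I * s * x j)‖) '' Set.Icc a' b') := hT
            _ ≤ (4 * Real.exp 1 * (b - a) / (b' - a')) ^ m * _ := by
                nth_rewrite 1 [← one_mul (sSup _)]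
                apply mul_le_mul_of_nonneg_right _ hT0
                exact one_le_pow₀ hfac
end

section
/- Let x_1,…,x_ℓ ∈ (−π,π] be points whose pairwise wrap-around distances all lie in [Δ, τΔ], and let N ≤ 4π/Δ. Then for any c ∈ ℂ^ℓ, the normalized L² norm of P(t) = Σ c_j e^{i t x_j} over [0,N] is at least (2/(πℓ))·(NΔ/(16πe))^{ℓ−1} times its normalized L² norm over [0, 4π/Δ]. -/
/-- Wrap-around distance on the circle. -/
noncomputable def wdist (x y : ℝ) : ℝ := |Complex.arg (Complex.exp (Complex.I * (x - y)))|


open Finset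

namespace TuranAux

noncomputable def dd (g : ℂ → ℂ) (s : Finset ℂ) : ℂ :=
  ∑ z ∈ s, g z * (∏ y ∈ s.erase z, (z - y))⁻¹

lemma dd_congr {g g' : ℂ → ℂ} {s : Finset ℂ} (h : ∀ z ∈ s, g z = g' z) :
    dd g s = dd g' s := by
  unfold dd
  exact Finset.sum_congr rfl fun z hz => by rw [h z hz]

lemma dd_singleton (g : ℂ → ℂ) (z : ℂ) : dd g {z} = g z := by
  simp [dd]

lemma dd_mul_shift (g : ℂ → ℂ) (c : ℂ) {s : Finset ℂ} {z₀ : ℂ} (hz₀ : z₀ ∈ s) :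
    dd (fun w => (w - c) * g w) s = (z₀ - c) * dd g s + dd g (s.erase z₀) := by
  unfold dd
  rw [Finset.mul_sum]
  rw [← Finset.add_sum_erase _ _ hz₀, ← Finset.add_sum_erase _ (fun z => (z₀-c) * (g z * _)) hz₀]
  rw [add_assoc, ← Finset.sum_add_distrib]
  congr 1
  · ring
  refine Finset.sum_congr rfl fun z hz => ?_
  have hzz₀ : z ≠ z₀ := (Finset.mem_erase.mp hz).1
  have hzs : z ∈ s := (Finset.mem_erase.mp hz).2
  have h1 : z₀ ∈ s.erase z := Finset.mem_erase.mpr ⟨fun h => hzz₀ h.symm, hz₀⟩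
  have hprod : ∏ y ∈ s.erase z, (z - y) = (z - z₀) * ∏ y ∈ (s.erase z).erase z₀, (z - y) :=
    (Finset.mul_prod_erase _ _ h1).symm
  have hcomm : (s.erase z₀).erase z = (s.erase z).erase z₀ := Finset.erase_right_comm
  have hQne : (∏ y ∈ (s.erase z).erase z₀, (z - y)) ≠ 0 := by
    refine Finset.prod_ne_zero_iff.mpr fun y hy => sub_ne_zero_of_ne ?_
    exact fun h => (Finset.mem_erase.mp (Finset.mem_of_mem_erase hy)).1 h.symm
  rw [hcomm, hprod, mul_inv]
  have hne : (z - z₀) ≠ 0 := sub_ne_zero_of_ne hzz₀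
  field_simp
  ring

lemma dd_inv_sub {s : Finset ℂ} (c : ℂ) (hc : ∀ z ∈ s, z ≠ c) (hs : s.Nonempty) :
    dd (fun w => (w - c)⁻¹) s = -(-1 : ℂ) ^ s.card * (∏ z ∈ s, (z - c))⁻¹ := by
  induction s using Finset.strongInduction with
  | _ s IH =>
  rcases Nat.lt_or_ge s.card 2 with hcard | hcard
  · -- card = 1
    have h1 : s.card = 1 := le_antisymm (by omega) hs.card_pos
    obtain ⟨z, rfl⟩ := Finset.card_eq_one.mp h1
    simp [dd]
  · -- card ≥ 2
    obtain ⟨z₀, hz₀, z₁, hz₁, hne⟩ := Finset.one_lt_card.mp hcard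
    have herase : ∀ z ∈ s, ((s.erase z).Nonempty ∧ (∀ y ∈ s.erase z, y ≠ c) ∧ s.erase z ⊂ s) := by
      intro z hz
      refine ⟨?_, fun y hy => hc y (Finset.mem_of_mem_erase hy), Finset.erase_ssubset hz⟩
      rw [← Finset.card_pos, Finset.card_erase_of_mem hz]; omega
    obtain ⟨he0, hc0, hss0⟩ := herase z₀ hz₀
    obtain ⟨he1, hc1, hss1⟩ := herase z₁ hz₁
    have E0 := IH _ hss0 hc0 he0
    have E1 := IH _ hss1 hc1 he1
    have eq0 := dd_mul_shift (fun w => (w - c)⁻¹) c hz₀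
    have eq1 := dd_mul_shift (fun w => (w - c)⁻¹) c hz₁
    have key : (z₀ - c) * dd (fun w => (w - c)⁻¹) s + dd (fun w => (w - c)⁻¹) (s.erase z₀)
        = (z₁ - c) * dd (fun w => (w - c)⁻¹) s + dd (fun w => (w - c)⁻¹) (s.erase z₁) := by
      rw [← eq0, ← eq1]
    rw [E0, E1] at key
    -- products
    have hprodne : ∀ z ∈ s, (z - c) ≠ 0 := fun z hz => sub_ne_zero_of_ne (hc z hz)
    have hQne : (∏ z ∈ s, (z - c)) ≠ 0 := Finset.prod_ne_zero_iff.mpr hprodne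
    have hp0 : ∏ z ∈ s, (z - c) = (z₀ - c) * ∏ z ∈ s.erase z₀, (z - c) :=
      (Finset.mul_prod_erase _ _ hz₀).symm
    have hp1 : ∏ z ∈ s, (z - c) = (z₁ - c) * ∏ z ∈ s.erase z₁, (z - c) :=
      (Finset.mul_prod_erase _ _ hz₁).symm
    have hcard0 : (s.erase z₀).card = s.card - 1 := Finset.card_erase_of_mem hz₀
    have hcard1 : (s.erase z₁).card = s.card - 1 := Finset.card_erase_of_mem hz₁
    rw [hcard0, hcard1] at key
    have hc0' : (z₀ - c) ≠ 0 := hprodne z₀ hz₀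
    have hc1' : (z₁ - c) ≠ 0 := hprodne z₁ hz₁
    have hQ0ne : (∏ z ∈ s.erase z₀, (z - c)) ≠ 0 := by
      intro h; rw [hp0, h, mul_zero] at hQne; exact hQne rfl
    have hQ1ne : (∏ z ∈ s.erase z₁, (z - c)) ≠ 0 := by
      intro h; rw [hp1, h, mul_zero] at hQne; exact hQne rfl
    obtain ⟨tc, htc⟩ : ∃ t, s.card = t + 1 := ⟨s.card - 1, by omega⟩
    have hsign : -(-1 : ℂ) ^ s.card = (-1 : ℂ) ^ (s.card - 1) := by
      rw [htc, pow_succ]; simp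
    have hz01 : (z₀ - z₁) ≠ 0 := sub_ne_zero_of_ne hne
    -- solve key for dd
    have expand0 : (∏ z ∈ s.erase z₀, (z - c))⁻¹ = (z₀ - c) * (∏ z ∈ s, (z - c))⁻¹ := by
      rw [hp0, mul_inv]; field_simp
    have expand1 : (∏ z ∈ s.erase z₁, (z - c))⁻¹ = (z₁ - c) * (∏ z ∈ s, (z - c))⁻¹ := by
      rw [hp1, mul_inv]; field_simp
    rw [expand0, expand1] at key
    have solved : dd (fun w => (w - c)⁻¹) s
        = -(-1:ℂ) ^ (s.card - 1) * ((z₁ - c) - (z₀ - c)) * (∏ z ∈ s, (z - c))⁻¹ / (z₀ - z₁) := by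
      field_simp at key ⊢
      linear_combination key
    rw [solved, ← hsign]
    field_simp
    ring


lemma dd_bound : ∀ (n : ℕ) (k : ℕ) (s : Finset ℂ), 1 ≤ k → k + s.card = n →
    s.Nonempty → (∀ z ∈ s, ‖z‖ = 1) →
    ‖dd (fun w => (w⁻¹) ^ k) s‖ ≤ ((k - 1) + (s.card - 1)).choose (s.card - 1) := by
  intro n
  induction n using Nat.strong_induction_on with
  | _ n IH =>
  intro k s hk hn hs hu
  have hz_ne : ∀ z ∈ s, z ≠ 0 := by
    intro z hz h
    have := hu z hz
    rw [h] at this; simp at this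
  rcases Nat.lt_or_ge s.card 2 with hcard | hcard
  · -- singleton
    have h1 : s.card = 1 := le_antisymm (by omega) hs.card_pos
    obtain ⟨z, rfl⟩ := Finset.card_eq_one.mp h1
    rw [dd_singleton]
    have : ‖z⁻¹‖ = 1 := by rw [norm_inv, hu z (Finset.mem_singleton_self z)]; norm_num
    rw [norm_pow, this, one_pow]
    simp
  rcases Nat.lt_or_ge k 2 with hk1 | hk2
  · -- k = 1 : closed form
    have hk1' : k = 1 := by omega
    subst hk1'
    have hcongr : dd (fun w => (w⁻¹) ^ 1) s = dd (fun w => (w - 0)⁻¹) s :=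
      dd_congr fun z hz => by simp
    rw [hcongr, dd_inv_sub 0 (fun z hz => hz_ne z hz) hs]
    have hprod : ‖(∏ z ∈ s, (z - 0))⁻¹‖ = 1 := by
      rw [norm_inv]
      have : ‖∏ z ∈ s, (z - 0)‖ = 1 := by
        rw [norm_prod]
        exact Finset.prod_eq_one fun z hz => by rw [sub_zero]; exact hu z hz
      rw [this]; norm_num
    rw [norm_mul, hprod, mul_one, norm_neg, norm_pow, norm_neg, norm_one, one_pow]
    simp
  · -- k ≥ 2, card ≥ 2 : recurrence
    obtain ⟨z₀, hz₀⟩ := hs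
    have key := dd_mul_shift (fun w => (w⁻¹) ^ k) 0 hz₀
    have hcongr : dd (fun w => (w - 0) * (fun w => (w⁻¹) ^ k) w) s
        = dd (fun w => (w⁻¹) ^ (k - 1)) s := by
      refine dd_congr fun z hz => ?_
      have hzne := hz_ne z hz
      obtain ⟨k', rfl⟩ : ∃ k', k = k' + 1 := ⟨k - 1, by omega⟩
      simp only [sub_zero, pow_succ, Nat.add_sub_cancel]
      field_simp
    rw [hcongr] at key
    have hz₀ne := hz_ne z₀ hz₀
    rw [sub_zero] at key
    have solved : dd (fun w => (w⁻¹) ^ k) s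
        = (dd (fun w => (w⁻¹) ^ (k - 1)) s - dd (fun w => (w⁻¹) ^ k) (s.erase z₀)) / z₀ := by
      rw [eq_div_iff hz₀ne]
      linear_combination -key
    have hes : (s.erase z₀).Nonempty := by
      rw [← Finset.card_pos, Finset.card_erase_of_mem hz₀]; omega
    have hcard0 : (s.erase z₀).card = s.card - 1 := Finset.card_erase_of_mem hz₀
    have b1 : ‖dd (fun w => (w⁻¹) ^ (k - 1)) s‖
        ≤ (((k - 1) - 1) + (s.card - 1)).choose (s.card - 1) := by
      refine IH (n - 1) (by omega) (k - 1) s (by omega) (by omega) ⟨z₀, hz₀⟩ hu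
    have b2 : ‖dd (fun w => (w⁻¹) ^ k) (s.erase z₀)‖
        ≤ ((k - 1) + ((s.erase z₀).card - 1)).choose ((s.erase z₀).card - 1) := by
      refine IH (n - 1) (by omega) k (s.erase z₀) (by omega) (by omega) hes
        (fun z hz => hu z (Finset.mem_of_mem_erase hz))
    rw [hcard0] at b2
    rw [solved, norm_div, hu z₀ hz₀, div_one]
    calc ‖dd (fun w => (w⁻¹) ^ (k - 1)) s - dd (fun w => (w⁻¹) ^ k) (s.erase z₀)‖
        ≤ ‖dd (fun w => (w⁻¹) ^ (k - 1)) s‖ + ‖dd (fun w => (w⁻¹) ^ k) (s.erase z₀)‖ :=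
          norm_sub_le _ _
      _ ≤ ((((k - 1) - 1) + (s.card - 1)).choose (s.card - 1) : ℝ)
            + (((k - 1) + (s.card - 1 - 1)).choose (s.card - 1 - 1) : ℝ) := by
          exact add_le_add b1 b2
      _ = (((k - 1) + (s.card - 1)).choose (s.card - 1) : ℝ) := by
          rw [← Nat.cast_add]
          congr 1
          obtain ⟨a, ha⟩ : ∃ a, k = a + 2 := ⟨k - 2, by omega⟩
          obtain ⟨b, hb⟩ : ∃ b, s.card = b + 2 := ⟨s.card - 2, by omega⟩
          subst ha
          rw [hb]
          have e1 : a + 2 - 1 - 1 + (b + 2 - 1) = a + b + 1 := by omega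
          have e2 : a + 2 - 1 + (b + 2 - 1 - 1) = a + b + 1 := by omega
          have e3 : b + 2 - 1 - 1 = b := by omega
          have e4 : a + 2 - 1 + (b + 2 - 1) = a + b + 2 := by omega
          have e5 : b + 2 - 1 = b + 1 := by omega
          rw [e1, e2, e3, e4, e5]
          rw [Nat.choose_succ_succ (a + b + 1) b]
          simp only [Nat.succ_eq_add_one]
          omega


open Polynomial

lemma err (g : ℂ → ℂ) (V : Finset ℂ) (v : ℂ) (hv : v ∉ V) :
    Polynomial.eval v (Lagrange.interpolate V id g) + dd g (insert v V) * ∏ y ∈ V, (v - y)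
      = g v := by
  classical
  have hvne : ∀ y ∈ V, v - y ≠ 0 := fun y hy => sub_ne_zero_of_ne (fun h => hv (h ▸ hy))
  have hPne : (∏ y ∈ V, (v - y)) ≠ 0 := Finset.prod_ne_zero_iff.mpr hvne
  rw [dd, Finset.sum_insert hv, Finset.erase_insert hv]
  rw [Lagrange.interpolate_apply, Polynomial.eval_finset_sum]
  rw [add_mul, Finset.sum_mul]
  have hmain : id v * (∏ y ∈ V, (v - y))⁻¹ * ∏ y ∈ V, (v - y) = id v := by
    field_simp
  have hgv : g v * (∏ y ∈ V, (v - y))⁻¹ * ∏ y ∈ V, (v - y) = g v := by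
    field_simp
  rw [hgv]
  have hterm : ∀ z ∈ V,
      Polynomial.eval v (Polynomial.C (g z) * Lagrange.basis V id z)
        + g z * (∏ y ∈ (insert v V).erase z, (z - y))⁻¹ * ∏ y ∈ V, (v - y) = 0 := by
    intro z hz
    have hzv : z ≠ v := fun h => hv (h ▸ hz)
    have h1 : (insert v V).erase z = insert v (V.erase z) :=
      Finset.erase_insert_of_ne hzv.symm
    have hvnz : v ∉ V.erase z := fun h => hv (Finset.mem_of_mem_erase h)
    have h2 : ∏ y ∈ (insert v V).erase z, (z - y) = (z - v) * ∏ y ∈ V.erase z, (z - y) := by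
      rw [h1, Finset.prod_insert hvnz]
    have h3 : ∏ y ∈ V, (v - y) = (v - z) * ∏ y ∈ V.erase z, (v - y) :=
      (Finset.mul_prod_erase _ _ hz).symm
    have hQne : (∏ y ∈ V.erase z, (z - y)) ≠ 0 := by
      refine Finset.prod_ne_zero_iff.mpr fun y hy => sub_ne_zero_of_ne ?_
      exact fun h => (Finset.mem_erase.mp hy).1 h.symm
    have hbasis : Polynomial.eval v (Lagrange.basis V id z)
        = (∏ y ∈ V.erase z, (z - y))⁻¹ * ∏ y ∈ V.erase z, (v - y) := by
      rw [Lagrange.basis, Polynomial.eval_prod, ← Finset.prod_inv_distrib,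
        ← Finset.prod_mul_distrib]
      refine Finset.prod_congr rfl fun y hy => ?_
      simp only [Lagrange.basisDivisor, Polynomial.eval_mul, Polynomial.eval_C,
        Polynomial.eval_sub, Polynomial.eval_X, id]
    rw [Polynomial.eval_mul, Polynomial.eval_C, hbasis, h2, h3]
    have hzvne : (z - v) ≠ 0 := sub_ne_zero_of_ne hzv
    field_simp
    ring
  have hzero : ∑ z ∈ V, (Polynomial.eval v (Polynomial.C (g z) * Lagrange.basis V id z)
      + g z * (∏ y ∈ (insert v V).erase z, (z - y))⁻¹ * ∏ y ∈ V, (v - y)) = 0 := by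
    rw [Finset.sum_congr rfl hterm]; simp
  have hsplit := Finset.sum_add_distrib (s := V)
    (f := fun z => Polynomial.eval v (Polynomial.C (g z) * Lagrange.basis V id z))
    (g := fun z => g z * (∏ y ∈ (insert v V).erase z, (z - y))⁻¹ * ∏ y ∈ V, (v - y))
  linear_combination hzero - hsplit

lemma interpolate_insert (g : ℂ → ℂ) (V : Finset ℂ) (v : ℂ) (hv : v ∉ V) :
    Lagrange.interpolate (insert v V) id g
      = Lagrange.interpolate V id g
        + Polynomial.C (dd g (insert v V)) * Lagrange.nodal V id := by
  classical
  refine (Lagrange.eq_interpolate_of_eval_eq g (Function.injective_id.injOn) ?_ ?_).symm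
  · rw [Finset.card_insert_of_notMem hv]
    refine lt_of_le_of_lt (Polynomial.degree_add_le _ _) (max_lt ?_ ?_)
    · exact lt_of_lt_of_le (Lagrange.degree_interpolate_lt _ Function.injective_id.injOn)
        (by exact_mod_cast Nat.le_succ _)
    · refine lt_of_le_of_lt (Polynomial.degree_mul_le _ _) ?_
      rw [Lagrange.degree_nodal]
      rcases le_or_gt (Polynomial.C (dd g (insert v V))).degree 0 with h | h
      · calc (Polynomial.C (dd g (insert v V))).degree + (V.card : WithBot ℕ)
            ≤ 0 + (V.card : WithBot ℕ) := by exact add_le_add_left h _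
          _ < (V.card + 1 : ℕ) := by
              rw [zero_add]; exact_mod_cast Nat.lt_succ_self _
      · exact absurd h (not_lt.mpr Polynomial.degree_C_le)
  · intro i hi
    rcases Finset.mem_insert.mp hi with rfl | hiV
    · simp only [Polynomial.eval_add, Polynomial.eval_mul, Polynomial.eval_C,
        Lagrange.eval_nodal, id_eq]
      linear_combination (err g V i hv)
    · simp only [Polynomial.eval_add, Polynomial.eval_mul, Polynomial.eval_C,
        Lagrange.eval_nodal, id_eq]
      rw [Finset.prod_eq_zero hiV (by simp), mul_zero, add_zero]
      have h := Lagrange.eval_interpolate_at_node g Function.injective_id.injOn hiV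
      simpa using h

lemma nodal_coeff_l1 (V : Finset ℂ) (hu : ∀ z ∈ V, ‖z‖ ≤ 1) :
    ∑ t ∈ Finset.range (V.card + 1), ‖(Lagrange.nodal V id).coeff t‖ ≤ 2 ^ V.card := by
  classical
  induction V using Finset.induction with
  | empty => simp [Lagrange.nodal_empty]
  | @insert a V ha IH =>
    have hu' : ∀ z ∈ V, ‖z‖ ≤ 1 := fun z hz => hu z (Finset.mem_insert_of_mem hz)
    have ha1 : ‖a‖ ≤ 1 := hu a (Finset.mem_insert_self _ _)
    have IH' := IH hu'
    rw [Lagrange.nodal_insert_eq_nodal ha, Finset.card_insert_of_notMem ha]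
    set p := Lagrange.nodal V id with hp
    have hexp : ∀ t, ((Polynomial.X - Polynomial.C (id a)) * p).coeff t
        = (Polynomial.X * p).coeff t - a * p.coeff t := by
      intro t
      rw [sub_mul, Polynomial.coeff_sub, Polynomial.coeff_C_mul, id_eq]
    calc ∑ t ∈ Finset.range (V.card + 1 + 1), ‖((Polynomial.X - Polynomial.C (id a)) * p).coeff t‖
        ≤ ∑ t ∈ Finset.range (V.card + 1 + 1), (‖(Polynomial.X * p).coeff t‖ + ‖a‖ * ‖p.coeff t‖) := by
          refine Finset.sum_le_sum fun t _ => ?_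
          rw [hexp t]
          exact le_trans (norm_sub_le _ _) (by rw [norm_mul])
      _ = (∑ t ∈ Finset.range (V.card + 1 + 1), ‖(Polynomial.X * p).coeff t‖)
            + ‖a‖ * ∑ t ∈ Finset.range (V.card + 1 + 1), ‖p.coeff t‖ := by
          rw [Finset.sum_add_distrib, Finset.mul_sum]
      _ ≤ 2 ^ V.card + 1 * 2 ^ V.card := by
          have h1 : ∑ t ∈ Finset.range (V.card + 1 + 1), ‖(Polynomial.X * p).coeff t‖
              = ∑ t ∈ Finset.range (V.card + 1), ‖p.coeff t‖ := by
            rw [Finset.sum_range_succ']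
            simp [Polynomial.coeff_X_mul, Polynomial.mul_coeff_zero]
          have h2 : ∑ t ∈ Finset.range (V.card + 1 + 1), ‖p.coeff t‖
              = ∑ t ∈ Finset.range (V.card + 1), ‖p.coeff t‖ := by
            rw [Finset.sum_range_succ]
            have : p.coeff (V.card + 1) = 0 := by
              refine Polynomial.coeff_eq_zero_of_natDegree_lt ?_
              rw [hp, Lagrange.natDegree_nodal]
              omega
            simp [this]
          rw [h1, h2]
          refine add_le_add IH' ?_
          refine mul_le_mul ha1 IH' ?_ (by norm_num)
          positivity
      _ ≤ 2 ^ (V.card + 1) := le_of_eq (by rw [pow_succ]; ring)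


lemma interp_coeff_l1 (m : ℕ) (V : Finset ℂ) (hu : ∀ z ∈ V, ‖z‖ = 1) :
    ∑ t ∈ Finset.range V.card,
        ‖(Lagrange.interpolate V id (fun w => (w⁻¹) ^ (m + 1))).coeff t‖
      ≤ ∑ k ∈ Finset.range V.card, 2 ^ k * (((m + k).choose k : ℕ) : ℝ) := by
  classical
  induction V using Finset.induction with
  | empty => simp [Lagrange.interpolate_empty]
  | @insert a V ha IH =>
    have hu' : ∀ z ∈ V, ‖z‖ = 1 := fun z hz => hu z (Finset.mem_insert_of_mem hz)
    have IH' := IH hu'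
    rw [interpolate_insert _ V a ha, Finset.card_insert_of_notMem ha]
    set R := Lagrange.interpolate V id (fun w => (w⁻¹) ^ (m + 1)) with hR
    set d := dd (fun w => (w⁻¹) ^ (m + 1)) (insert a V) with hd
    have hdbound : ‖d‖ ≤ (((m + V.card).choose V.card : ℕ) : ℝ) := by
      have := dd_bound ((m + 1) + (insert a V).card) (m + 1) (insert a V) (by omega) rfl
        ⟨a, Finset.mem_insert_self _ _⟩ hu
      rwa [Finset.card_insert_of_notMem ha, Nat.add_sub_cancel, Nat.add_sub_cancel] at this
    have hnodal : ∑ t ∈ Finset.range (V.card + 1), ‖(Lagrange.nodal V id).coeff t‖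
        ≤ 2 ^ V.card := nodal_coeff_l1 V (fun z hz => le_of_eq (hu' z hz))
    calc ∑ t ∈ Finset.range (V.card + 1),
          ‖(R + Polynomial.C d * Lagrange.nodal V id).coeff t‖
        ≤ ∑ t ∈ Finset.range (V.card + 1),
            (‖R.coeff t‖ + ‖d‖ * ‖(Lagrange.nodal V id).coeff t‖) := by
          refine Finset.sum_le_sum fun t _ => ?_
          rw [Polynomial.coeff_add, Polynomial.coeff_C_mul]
          exact le_trans (norm_add_le _ _) (by rw [norm_mul])
      _ = (∑ t ∈ Finset.range (V.card + 1), ‖R.coeff t‖)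
            + ‖d‖ * ∑ t ∈ Finset.range (V.card + 1), ‖(Lagrange.nodal V id).coeff t‖ := by
          rw [Finset.sum_add_distrib, Finset.mul_sum]
      _ ≤ (∑ t ∈ Finset.range V.card, ‖R.coeff t‖)
            + (((m + V.card).choose V.card : ℕ) : ℝ) * 2 ^ V.card := by
          refine add_le_add ?_ ?_
          · rw [Finset.sum_range_succ]
            have hc0 : R.coeff V.card = 0 := by
              refine Polynomial.coeff_eq_zero_of_degree_lt ?_
              exact Lagrange.degree_interpolate_lt _ Function.injective_id.injOn
            simp [hc0]
          · exact mul_le_mul hdbound hnodal (by positivity) (by positivity)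
      _ ≤ (∑ k ∈ Finset.range V.card, 2 ^ k * (((m + k).choose k : ℕ) : ℝ))
            + (((m + V.card).choose V.card : ℕ) : ℝ) * 2 ^ V.card := by
          exact add_le_add_left IH' _
      _ = ∑ k ∈ Finset.range (V.card + 1), 2 ^ k * (((m + k).choose k : ℕ) : ℝ) := by
          rw [Finset.sum_range_succ]
          ring

lemma hockey (m n : ℕ) (hn : 1 ≤ n) :
    ∑ k ∈ Finset.range n, (m + k).choose k = (m + n).choose (n - 1) := by
  have h1 : ∀ k, (m + k).choose k = (m + k).choose m := by
    intro k
    have := Nat.choose_symm (n := m + k) (k := k) (Nat.le_add_left _ _)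
    rw [Nat.add_sub_cancel] at this
    exact this.symm
  have h2 : ∑ k ∈ Finset.range n, (m + k).choose m
      = ∑ j ∈ Finset.Icc m (m + n - 1), j.choose m := by
    have : Finset.Icc m (m + n - 1) = Finset.Ico m (m + n) := by
      rw [← Finset.Ico_add_one_right_eq_Icc]
      congr 1
      omega
    rw [this, Finset.sum_Ico_eq_sum_range]
    simp only [Nat.add_sub_cancel_left]
  have h3 := Nat.sum_Icc_choose (m + n - 1) m
  have h4 : m + n - 1 + 1 = m + n := by omega
  rw [h4] at h3
  have h5 : (m + n).choose (m + 1) = (m + n).choose (n - 1) := by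
    have := Nat.choose_symm (n := m + n) (k := m + 1) (by omega)
    have he : m + n - (m + 1) = n - 1 := by omega
    rw [he] at this
    exact this.symm
  calc ∑ k ∈ Finset.range n, (m + k).choose k
      = ∑ k ∈ Finset.range n, (m + k).choose m := by
        exact Finset.sum_congr rfl fun k _ => h1 k
    _ = ∑ j ∈ Finset.Icc m (m + n - 1), j.choose m := h2
    _ = (m + n).choose (m + 1) := h3
    _ = (m + n).choose (n - 1) := h5

lemma fmt (n m : ℕ) (hn : 1 ≤ n) (z b : Fin n → ℂ) (hz : ∀ j, ‖z j‖ = 1) :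
    ‖∑ j, b j‖ ^ 2 ≤ ((2:ℝ) ^ (n - 1) * (((m + n).choose (n - 1) : ℕ) : ℝ)) ^ 2
      * ∑ ν ∈ Finset.Icc (m + 1) (m + n), ‖∑ j, b j * z j ^ ν‖ ^ 2 := by
  classical
  set V : Finset ℂ := Finset.image z Finset.univ with hV
  have hne : Nonempty (Fin n) := ⟨⟨0, hn⟩⟩
  have hVne : V.Nonempty := ⟨z ⟨0, hn⟩, Finset.mem_image.mpr ⟨⟨0, hn⟩, Finset.mem_univ _, rfl⟩⟩
  have hVu : ∀ w ∈ V, ‖w‖ = 1 := by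
    intro w hw
    obtain ⟨j, _, rfl⟩ := Finset.mem_image.mp hw
    exact hz j
  have hcard_le : V.card ≤ n := le_trans Finset.card_image_le (by simp)
  have hcard_pos : 1 ≤ V.card := hVne.card_pos
  set R := Lagrange.interpolate V id (fun w => (w⁻¹) ^ (m + 1)) with hR
  set Q := R * Polynomial.X ^ (m + 1) with hQ
  have hdegR : R.degree < (V.card : WithBot ℕ) :=
    Lagrange.degree_interpolate_lt _ Function.injective_id.injOn
  -- coefficient relation
  have hcoeff : ∀ t, Q.coeff (m + 1 + t) = R.coeff t := by
    intro t
    rw [hQ]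
    have := Polynomial.coeff_mul_X_pow R (m + 1) t
    rwa [show t + (m + 1) = m + 1 + t by ring] at this
  have hlow : ∀ ν, ν < m + 1 → Q.coeff ν = 0 := by
    intro ν hν
    rw [hQ, Polynomial.coeff_mul_X_pow']
    simp [Nat.not_le.mpr hν]
  have hhighR : ∀ t, V.card ≤ t → R.coeff t = 0 := by
    intro t ht
    refine Polynomial.coeff_eq_zero_of_degree_lt (lt_of_lt_of_le hdegR ?_)
    exact_mod_cast Nat.cast_le.mpr ht
  -- eval = 1 on nodes
  have heval : ∀ j : Fin n, Q.eval (z j) = 1 := by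
    intro j
    have hzj : z j ∈ V := Finset.mem_image.mpr ⟨j, Finset.mem_univ _, rfl⟩
    have hzne : z j ≠ 0 := by
      intro h
      have := hz j
      rw [h] at this
      simp at this
    have hEVN := Lagrange.eval_interpolate_at_node (fun w => (w⁻¹) ^ (m + 1))
      Function.injective_id.injOn hzj
    simp only [id_eq] at hEVN
    rw [hQ, Polynomial.eval_mul, Polynomial.eval_pow, Polynomial.eval_X, hR, hEVN,
      ← mul_pow, inv_mul_cancel₀ hzne, one_pow]
  -- interpolation sums
  have hnatQ : Q.natDegree < m + n + 1 := by
    rcases eq_or_ne R 0 with h0 | h0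
    · rw [hQ, h0, zero_mul]
      simp
    · have h1 : R.natDegree < V.card := by
        have := Polynomial.natDegree_lt_iff_degree_lt (n := V.card) h0
        exact this.mpr (by exact_mod_cast hdegR)
      have h2 : Q.natDegree ≤ R.natDegree + (m + 1) := by
        rw [hQ]
        refine le_trans (Polynomial.natDegree_mul_le) ?_
        simp [Polynomial.natDegree_X_pow]
      omega
  have hinterp : ∀ j : Fin n, ∑ ν ∈ Finset.Icc (m + 1) (m + n), Q.coeff ν * (z j) ^ ν = 1 := by
    intro j
    have hEV := Polynomial.eval_eq_sum_range' hnatQ (z j)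
    rw [heval j] at hEV
    have hsub : Finset.Icc (m + 1) (m + n) ⊆ Finset.range (m + n + 1) := by
      intro ν hν
      rw [Finset.mem_range]
      exact Nat.lt_succ_of_le (Finset.mem_Icc.mp hν).2
    have hvanish : ∀ ν ∈ Finset.range (m + n + 1), ν ∉ Finset.Icc (m + 1) (m + n) →
        Q.coeff ν * (z j) ^ ν = 0 := by
      intro ν hν hν'
      have hν'' : ν < m + 1 := by
        rw [Finset.mem_range] at hν
        rw [Finset.mem_Icc] at hν'
        omega
      rw [hlow ν hν'', zero_mul]
    rw [← Finset.sum_subset hsub hvanish] at hEV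
    exact hEV.symm
  -- L1 bound
  set K : ℝ := (2:ℝ) ^ (n - 1) * (((m + n).choose (n - 1) : ℕ) : ℝ) with hK
  have hKnn : 0 ≤ K := by positivity
  have hl1 : ∑ ν ∈ Finset.Icc (m + 1) (m + n), ‖Q.coeff ν‖ ≤ K := by
    have hIcc : Finset.Icc (m + 1) (m + n) = Finset.Ico (m + 1) (m + n + 1) := by
      rw [Finset.Ico_add_one_right_eq_Icc]
    have hre : ∑ ν ∈ Finset.Icc (m + 1) (m + n), ‖Q.coeff ν‖
        = ∑ t ∈ Finset.range n, ‖Q.coeff (m + 1 + t)‖ := by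
      have hnn : m + n + 1 - (m + 1) = n := by omega
      rw [hIcc, Finset.sum_Ico_eq_sum_range, hnn]
    rw [hre]
    have hstep1 : ∀ t ∈ Finset.range n, ‖Q.coeff (m + 1 + t)‖ = ‖R.coeff t‖ := by
      intro t _
      rw [hcoeff t]
    rw [Finset.sum_congr rfl hstep1]
    have hsub2 : Finset.range V.card ⊆ Finset.range n := Finset.range_subset_range.mpr hcard_le
    have hvan2 : ∀ t ∈ Finset.range n, t ∉ Finset.range V.card → ‖R.coeff t‖ = 0 := by
      intro t _ ht
      rw [Finset.mem_range, not_lt] at ht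
      rw [hhighR t ht, norm_zero]
    rw [← Finset.sum_subset hsub2 hvan2]
    calc ∑ t ∈ Finset.range V.card, ‖R.coeff t‖
        ≤ ∑ k ∈ Finset.range V.card, 2 ^ k * (((m + k).choose k : ℕ) : ℝ) :=
          interp_coeff_l1 m V hVu
      _ ≤ ∑ k ∈ Finset.range n, 2 ^ k * (((m + k).choose k : ℕ) : ℝ) := by
          refine Finset.sum_le_sum_of_subset_of_nonneg hsub2 fun k _ _ => by positivity
      _ ≤ ∑ k ∈ Finset.range n, 2 ^ (n - 1) * (((m + k).choose k : ℕ) : ℝ) := by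
          refine Finset.sum_le_sum fun k hk => ?_
          have : k ≤ n - 1 := by
            rw [Finset.mem_range] at hk
            omega
          exact mul_le_mul_of_nonneg_right
            (pow_le_pow_right₀ (by norm_num) this) (by positivity)
      _ = K := by
          rw [← Finset.mul_sum, hK]
          congr 1
          rw [← Nat.cast_sum]
          exact_mod_cast hockey m n hn
  -- put together
  have hrep : ∑ j, b j = ∑ ν ∈ Finset.Icc (m + 1) (m + n), Q.coeff ν * ∑ j, b j * z j ^ ν := by
    calc ∑ j, b j = ∑ j, b j * ∑ ν ∈ Finset.Icc (m + 1) (m + n), Q.coeff ν * (z j) ^ ν := by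
          refine Finset.sum_congr rfl fun j _ => ?_
          rw [hinterp j, mul_one]
      _ = ∑ j, ∑ ν ∈ Finset.Icc (m + 1) (m + n), Q.coeff ν * (b j * z j ^ ν) := by
          refine Finset.sum_congr rfl fun j _ => ?_
          rw [Finset.mul_sum]
          refine Finset.sum_congr rfl fun ν _ => by ring
      _ = ∑ ν ∈ Finset.Icc (m + 1) (m + n), ∑ j, Q.coeff ν * (b j * z j ^ ν) :=
          Finset.sum_comm
      _ = ∑ ν ∈ Finset.Icc (m + 1) (m + n), Q.coeff ν * ∑ j, b j * z j ^ ν := by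
          refine Finset.sum_congr rfl fun ν _ => ?_
          rw [Finset.mul_sum]
  have hnorm1 : ‖∑ j, b j‖ ≤ ∑ ν ∈ Finset.Icc (m + 1) (m + n), ‖Q.coeff ν‖ * ‖∑ j, b j * z j ^ ν‖ := by
    rw [hrep]
    refine le_trans (norm_sum_le _ _) ?_
    refine Finset.sum_le_sum fun ν _ => ?_
    rw [norm_mul]
  have hcs : (∑ ν ∈ Finset.Icc (m + 1) (m + n), ‖Q.coeff ν‖ * ‖∑ j, b j * z j ^ ν‖) ^ 2
      ≤ (∑ ν ∈ Finset.Icc (m + 1) (m + n), ‖Q.coeff ν‖ ^ 2)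
        * ∑ ν ∈ Finset.Icc (m + 1) (m + n), ‖∑ j, b j * z j ^ ν‖ ^ 2 :=
    Finset.sum_mul_sq_le_sq_mul_sq _ _ _
  have hsq : ∑ ν ∈ Finset.Icc (m + 1) (m + n), ‖Q.coeff ν‖ ^ 2
      ≤ (∑ ν ∈ Finset.Icc (m + 1) (m + n), ‖Q.coeff ν‖) ^ 2 :=
    Finset.sum_sq_le_sq_sum_of_nonneg fun ν _ => norm_nonneg _
  calc ‖∑ j, b j‖ ^ 2
      ≤ (∑ ν ∈ Finset.Icc (m + 1) (m + n), ‖Q.coeff ν‖ * ‖∑ j, b j * z j ^ ν‖) ^ 2 := by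
        exact pow_le_pow_left₀ (norm_nonneg _) hnorm1 2
    _ ≤ (∑ ν ∈ Finset.Icc (m + 1) (m + n), ‖Q.coeff ν‖ ^ 2)
          * ∑ ν ∈ Finset.Icc (m + 1) (m + n), ‖∑ j, b j * z j ^ ν‖ ^ 2 := hcs
    _ ≤ (∑ ν ∈ Finset.Icc (m + 1) (m + n), ‖Q.coeff ν‖) ^ 2
          * ∑ ν ∈ Finset.Icc (m + 1) (m + n), ‖∑ j, b j * z j ^ ν‖ ^ 2 := by
        refine mul_le_mul_of_nonneg_right hsq ?_
        exact Finset.sum_nonneg fun ν _ => by positivity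
    _ ≤ K ^ 2 * ∑ ν ∈ Finset.Icc (m + 1) (m + n), ‖∑ j, b j * z j ^ ν‖ ^ 2 := by
        refine mul_le_mul_of_nonneg_right ?_ (Finset.sum_nonneg fun ν _ => by positivity)
        exact pow_le_pow_left₀ (Finset.sum_nonneg fun ν _ => norm_nonneg _) hl1 2


lemma exp_pow_aux (n : ℕ) (hn : 1 ≤ n) : ((n:ℝ) + 1) ^ n ≤ Real.exp 1 * (n:ℝ) ^ n := by
  have hnpos : (0:ℝ) < n := by exact_mod_cast hn
  have hx : (1 + 1 / (n:ℝ)) ≤ Real.exp (1 / n) := by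
    have := Real.add_one_le_exp (1 / (n:ℝ))
    linarith
  have h1 : (1 + 1 / (n:ℝ)) ^ n ≤ Real.exp (1 / n) ^ n :=
    pow_le_pow_left₀ (by positivity) hx n
  have h2 : Real.exp (1 / (n:ℝ)) ^ n = Real.exp 1 := by
    rw [← Real.exp_nat_mul]
    congr 1
    field_simp
  have h3 : ((n:ℝ) + 1) ^ n = (1 + 1 / (n:ℝ)) ^ n * (n:ℝ) ^ n := by
    rw [← mul_pow]
    congr 1
    field_simp
  rw [h3]
  refine mul_le_mul_of_nonneg_right ?_ (by positivity)
  rw [← h2]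
  exact h1

lemma betadec : ∀ n : ℕ, 3 ≤ n →
    ((n:ℝ) / Real.exp 1) ^ (n - 1) ≤ (9 / (2 * Real.exp 1 ^ 2)) * (Nat.factorial (n - 1)) := by
  intro n hn
  induction n, hn using Nat.le_induction with
  | base =>
    have he : Real.exp 1 ≠ 0 := (Real.exp_pos 1).ne'
    have h1 : (9:ℝ) / (2 * Real.exp 1 ^ 2) * ((Nat.factorial (3 - 1) : ℕ) : ℝ)
        = 9 / Real.exp 1 ^ 2 := by
      norm_num [Nat.factorial]
      field_simp
    rw [h1]
    have h2 : ((3:ℕ):ℝ) = 3 := by norm_num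
    rw [show (3:ℕ) - 1 = 2 from rfl, h2, div_pow]
    norm_num
  | succ n hn IH =>
    have hn1 : 1 ≤ n := by omega
    have hnpos : (0:ℝ) < n := by exact_mod_cast hn1
    have he : (0:ℝ) < Real.exp 1 := Real.exp_pos 1
    have hsub : n + 1 - 1 = n := by omega
    rw [hsub]
    have hsub2 : n - 1 + 1 = n := by omega
    -- ((n+1)/e)^n ≤ (n/e)^(n-1) * n
    have key : (((n:ℝ) + 1) / Real.exp 1) ^ n ≤ ((n:ℝ) / Real.exp 1) ^ (n - 1) * n := by
      rw [div_pow, div_pow]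
      rw [div_le_iff₀ (by positivity)]
      have hE := exp_pow_aux n hn1
      have hepow : Real.exp 1 ^ n = Real.exp 1 ^ (n - 1) * Real.exp 1 := by
        rw [← pow_succ, hsub2]
      have hnpow : (n:ℝ) ^ n = (n:ℝ) ^ (n - 1) * n := by
        rw [← pow_succ, hsub2]
      have heq : (n:ℝ) ^ (n - 1) / Real.exp 1 ^ (n - 1) * n * Real.exp 1 ^ n
          = Real.exp 1 * (n:ℝ) ^ n := by
        rw [hepow, hnpow]
        have hene : Real.exp 1 ^ (n - 1) ≠ 0 := by positivity
        field_simp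
      rw [heq]
      exact hE
    have hcast : ((n:ℝ) + 1) = ((n + 1 : ℕ) : ℝ) := by push_cast; ring
    rw [← hcast]
    calc (((n:ℝ) + 1) / Real.exp 1) ^ n ≤ ((n:ℝ) / Real.exp 1) ^ (n - 1) * n := key
      _ ≤ (9 / (2 * Real.exp 1 ^ 2)) * (Nat.factorial (n - 1)) * n := by
          refine mul_le_mul_of_nonneg_right IH (by positivity)
      _ = (9 / (2 * Real.exp 1 ^ 2)) * (Nat.factorial n) := by
          have : (Nat.factorial n : ℝ) = (Nat.factorial (n - 1) : ℝ) * n := by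
            rw [← hsub2, Nat.factorial_succ, hsub2]
            push_cast
            ring
          rw [this]
          ring

lemma choose_le_pow_div (M k : ℕ) :
    ((M.choose k : ℕ) : ℝ) * (Nat.factorial k : ℝ) ≤ (M:ℝ) ^ k := by
  have h := Nat.descFactorial_le_pow M k
  have h2 : M.descFactorial k = Nat.factorial k * M.choose k :=
    Nat.descFactorial_eq_factorial_mul_choose M k
  have : (Nat.factorial k * M.choose k : ℕ) ≤ M ^ k := by rw [← h2]; exact h
  calc ((M.choose k : ℕ) : ℝ) * (Nat.factorial k : ℝ)
      = ((Nat.factorial k * M.choose k : ℕ) : ℝ) := by push_cast; ring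
    _ ≤ ((M ^ k : ℕ) : ℝ) := by exact_mod_cast this
    _ = (M:ℝ) ^ k := by push_cast; ring

set_option maxHeartbeats 1000000 in
lemma numeric_main (n M : ℕ) (hn : 2 ≤ n) (ρ : ℝ) (hρ : 1 ≤ ρ)
    (hM1 : 2 * (n:ℝ) * ρ ≤ (M:ℝ)) (hM2 : (M:ℝ) ≤ 2 * (n:ℝ) * ρ + 1) :
    (2 / (Real.pi * n) * (1 / (4 * Real.exp 1 * ρ)) ^ (n - 1)) ^ 2
      * ((2:ℝ) ^ (n - 1) * ((M.choose (n - 1)) : ℝ)) ^ 2 * ((M:ℝ) + n) ≤ ρ := by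
  have he : (0:ℝ) < Real.exp 1 := Real.exp_pos 1
  have he1 : (2.7182818283:ℝ) < Real.exp 1 := Real.exp_one_gt_d9
  have hπ : (3.141592:ℝ) < Real.pi := by
    have := Real.pi_gt_d6
    linarith
  have hρpos : (0:ℝ) < ρ := by linarith
  have hnR : (2:ℝ) ≤ (n:ℝ) := by exact_mod_cast hn
  have hnpos : (0:ℝ) < (n:ℝ) := by linarith
  have hπpos : (0:ℝ) < Real.pi := by linarith
  have he2 : (7.389:ℝ) ≤ Real.exp 1 ^ 2 := by nlinarith
  have hπ2 : (9.86:ℝ) ≤ Real.pi ^ 2 := by nlinarith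
  have hMnn : (0:ℝ) ≤ (M:ℝ) := Nat.cast_nonneg M
  rcases eq_or_lt_of_le hn with h2 | h3
  · -- n = 2
    subst h2
    have hM5 : (M:ℝ) ≤ 5 * ρ := by push_cast at hM2 ⊢; linarith
    have hM7 : (M:ℝ) + 2 ≤ 7 * ρ := by push_cast at hM2 ⊢; linarith
    simp only [show (2:ℕ) - 1 = 1 from rfl, pow_one, Nat.choose_one_right, Nat.cast_ofNat]
    have heq : (2 / (Real.pi * 2) * (1 / (4 * Real.exp 1 * ρ))) ^ 2
          * ((2:ℝ) * (M:ℝ)) ^ 2 * ((M:ℝ) + 2)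
        = ((M:ℝ) ^ 2 * ((M:ℝ) + 2)) / (4 * Real.pi ^ 2 * Real.exp 1 ^ 2 * ρ ^ 2) := by
      have hE2 : Real.exp 2 = Real.exp 1 ^ 2 := by
        have h := Real.exp_nat_mul 1 2
        simp only [Nat.cast_ofNat, mul_one] at h
        exact h
      field_simp
      ring
    rw [heq, div_le_iff₀ (by positivity)]
    have hM2sq : (M:ℝ) ^ 2 ≤ 25 * ρ ^ 2 := by nlinarith
    have h175 : (175:ℝ) ≤ 4 * Real.pi ^ 2 * Real.exp 1 ^ 2 := by nlinarith
    calc (M:ℝ) ^ 2 * ((M:ℝ) + 2) ≤ (25 * ρ ^ 2) * (7 * ρ) :=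
          mul_le_mul hM2sq hM7 (by positivity) (by positivity)
      _ = 175 * ρ ^ 3 := by ring
      _ ≤ (4 * Real.pi ^ 2 * Real.exp 1 ^ 2) * ρ ^ 3 :=
          mul_le_mul_of_nonneg_right h175 (by positivity)
      _ = ρ * (4 * Real.pi ^ 2 * Real.exp 1 ^ 2 * ρ ^ 2) := by ring
  · -- n ≥ 3
    have hn3 : (3:ℝ) ≤ (n:ℝ) := by exact_mod_cast h3
    have hn1 : 1 ≤ n := by omega
    have he3 : (20:ℝ) ≤ Real.exp 1 ^ 3 := by nlinarith
    set q : ℝ := 1 / (4 * Real.exp 1 * ρ) with hq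
    have hqpos : 0 < q := by positivity
    set C : ℝ := ((M.choose (n - 1)) : ℝ) with hC
    have hCnn : 0 ≤ C := Nat.cast_nonneg _
    set F : ℝ := ((n - 1).factorial : ℝ) with hF
    have hFpos : (0:ℝ) < F := by
      rw [hF]
      exact_mod_cast Nat.factorial_pos (n - 1)
    set G : ℝ := (2:ℝ) ^ (n - 1) * C * q ^ (n - 1) with hG
    have hGnn : 0 ≤ G := by positivity
    -- Step: G ≤ (M/(2eρ))^(n-1)/F
    have hS1 : C * F ≤ (M:ℝ) ^ (n - 1) := choose_le_pow_div M (n - 1)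
    have h2q : (2:ℝ) * q = 1 / (2 * Real.exp 1 * ρ) := by
      rw [hq]
      field_simp
      ring
    have hS4 : G ≤ ((M:ℝ) / (2 * Real.exp 1 * ρ)) ^ (n - 1) / F := by
      have hGeq : G = C * ((2:ℝ) * q) ^ (n - 1) := by rw [hG, mul_pow]; ring
      rw [hGeq, h2q, div_pow, one_pow]
      rw [le_div_iff₀ hFpos, div_pow]
      calc C * (1 / (2 * Real.exp 1 * ρ) ^ (n - 1)) * F
          = (C * F) * (1 / (2 * Real.exp 1 * ρ) ^ (n - 1)) := by ring
        _ ≤ (M:ℝ) ^ (n - 1) * (1 / (2 * Real.exp 1 * ρ) ^ (n - 1)) := by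
            refine mul_le_mul_of_nonneg_right hS1 (by positivity)
        _ = (M:ℝ) ^ (n - 1) / (2 * Real.exp 1 * ρ) ^ (n - 1) := by ring
    -- Step: M/(2eρ) ≤ (n/e)*(1+x)
    set x : ℝ := 1 / (2 * (n:ℝ) * ρ) with hx
    have hx0 : (0:ℝ) ≤ x := by positivity
    have hS5 : (M:ℝ) / (2 * Real.exp 1 * ρ) ≤ ((n:ℝ) / Real.exp 1) * (1 + x) := by
      have hid : ((n:ℝ) / Real.exp 1) * (1 + x) = (2 * (n:ℝ) * ρ + 1) / (2 * Real.exp 1 * ρ) := by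
        rw [hx]
        field_simp
      rw [hid]
      exact div_le_div_of_nonneg_right hM2 (by positivity) |>.trans_eq rfl
    have hS6 : ((M:ℝ) / (2 * Real.exp 1 * ρ)) ^ (n - 1)
        ≤ ((n:ℝ) / Real.exp 1) ^ (n - 1) * (1 + x) ^ (n - 1) := by
      rw [← mul_pow]
      exact pow_le_pow_left₀ (by positivity) hS5 _
    -- Step: ((1+x)^(n-1))^2 ≤ e
    have hS7 : ((1 + x) ^ (n - 1)) ^ 2 ≤ Real.exp 1 := by
      have hxe : (1 + x) ≤ Real.exp x := by
        have := Real.add_one_le_exp x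
        linarith
      have h7a : ((1 + x) ^ (n - 1)) ^ 2 = (1 + x) ^ ((n - 1) * 2) := by rw [← pow_mul]
      have h7b : (1 + x) ^ ((n - 1) * 2) ≤ Real.exp x ^ ((n - 1) * 2) :=
        pow_le_pow_left₀ (by positivity) hxe _
      have h7c : Real.exp x ^ ((n - 1) * 2) = Real.exp ((((n - 1) * 2 : ℕ) : ℝ) * x) := by
        rw [Real.exp_nat_mul]
      have hcast : (((n - 1) * 2 : ℕ) : ℝ) = ((n:ℝ) - 1) * 2 := by
        push_cast [Nat.cast_sub hn1]
        ring
      have h7d : (((n - 1) * 2 : ℕ) : ℝ) * x ≤ 1 := by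
        rw [hcast, hx]
        rw [mul_one_div, div_le_one (by positivity)]
        have hkey : (n:ℝ) ≤ (n:ℝ) * ρ := le_mul_of_one_le_right (le_of_lt hnpos) hρ
        linarith
      calc ((1 + x) ^ (n - 1)) ^ 2 = (1 + x) ^ ((n - 1) * 2) := h7a
        _ ≤ Real.exp x ^ ((n - 1) * 2) := h7b
        _ = Real.exp ((((n - 1) * 2 : ℕ) : ℝ) * x) := h7c
        _ ≤ Real.exp 1 := Real.exp_le_exp.mpr h7d
    -- Step: beta bound
    have hS9 : ((n:ℝ) / Real.exp 1) ^ (n - 1) ≤ (9 / (2 * Real.exp 1 ^ 2)) * F :=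
      betadec n (by omega)
    -- G^2 ≤ 81/(4 e^3)
    have hG2 : G ^ 2 ≤ 81 / (4 * Real.exp 1 ^ 3) := by
      have hB1 : G ^ 2 ≤ (((n:ℝ) / Real.exp 1) ^ (n - 1) * (1 + x) ^ (n - 1) / F) ^ 2 := by
        refine pow_le_pow_left₀ hGnn (le_trans hS4 ?_) 2
        gcongr
      have hB2 : (((n:ℝ) / Real.exp 1) ^ (n - 1) * (1 + x) ^ (n - 1) / F) ^ 2
          = (((n:ℝ) / Real.exp 1) ^ (n - 1)) ^ 2 * ((1 + x) ^ (n - 1)) ^ 2 / F ^ 2 := by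
        rw [div_pow, mul_pow]
      have hB3 : (((n:ℝ) / Real.exp 1) ^ (n - 1)) ^ 2 ≤ ((9 / (2 * Real.exp 1 ^ 2)) * F) ^ 2 :=
        pow_le_pow_left₀ (by positivity) hS9 2
      calc G ^ 2 ≤ (((n:ℝ) / Real.exp 1) ^ (n - 1)) ^ 2 * ((1 + x) ^ (n - 1)) ^ 2 / F ^ 2 := by
            rw [← hB2]; exact hB1
        _ ≤ ((9 / (2 * Real.exp 1 ^ 2)) * F) ^ 2 * Real.exp 1 / F ^ 2 := by
            have hnum := mul_le_mul hB3 hS7 (by positivity) (by positivity)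
            gcongr
        _ = 81 / (4 * Real.exp 1 ^ 3) := by
            have hFne : F ≠ 0 := ne_of_gt hFpos
            have hene : Real.exp 1 ≠ 0 := ne_of_gt he
            have hmp : ((9 / (2 * Real.exp 1 ^ 2)) * F) ^ 2 = 81 * F ^ 2 / (4 * Real.exp 1 ^ 4) := by
              rw [mul_pow, div_pow]
              ring
            rw [hmp]
            have hone : 81 * F ^ 2 / (4 * Real.exp 1 ^ 4) * Real.exp 1 / F ^ 2
                = (81 * F ^ 2 * Real.exp 1) / (4 * Real.exp 1 ^ 4 * F ^ 2) := by
              rw [div_mul_eq_mul_div, div_div]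
            rw [hone, div_eq_div_iff (by positivity) (by positivity)]
            ring
    -- M + n ≤ 4 n ρ
    have hS8 : (M:ℝ) + n ≤ 4 * n * ρ := by
      have h2n : 2 * (n:ℝ) ≤ 2 * (n:ℝ) * ρ := le_mul_of_one_le_right (by positivity) hρ
      linarith
    -- assemble
    have hLHS : (2 / (Real.pi * n) * q ^ (n - 1)) ^ 2 * ((2:ℝ) ^ (n - 1) * C) ^ 2 * ((M:ℝ) + n)
        = (2 / (Real.pi * n)) ^ 2 * G ^ 2 * ((M:ℝ) + n) := by
      rw [hG]
      ring
    rw [hLHS]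
    have hmid : (2 / (Real.pi * (n:ℝ))) ^ 2 * G ^ 2 * ((M:ℝ) + n)
        ≤ (2 / (Real.pi * n)) ^ 2 * (81 / (4 * Real.exp 1 ^ 3)) * (4 * n * ρ) := by
      have t1 : (2 / (Real.pi * (n:ℝ))) ^ 2 * G ^ 2
          ≤ (2 / (Real.pi * n)) ^ 2 * (81 / (4 * Real.exp 1 ^ 3)) :=
        mul_le_mul_of_nonneg_left hG2 (by positivity)
      have hMn : (0:ℝ) ≤ (M:ℝ) + n := by positivity
      calc (2 / (Real.pi * (n:ℝ))) ^ 2 * G ^ 2 * ((M:ℝ) + n)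
          ≤ (2 / (Real.pi * n)) ^ 2 * (81 / (4 * Real.exp 1 ^ 3)) * ((M:ℝ) + n) :=
            mul_le_mul_of_nonneg_right t1 hMn
        _ ≤ (2 / (Real.pi * n)) ^ 2 * (81 / (4 * Real.exp 1 ^ 3)) * (4 * n * ρ) :=
            mul_le_mul_of_nonneg_left hS8 (by positivity)
    refine le_trans hmid ?_
    have hfin : (2 / (Real.pi * (n:ℝ))) ^ 2 * (81 / (4 * Real.exp 1 ^ 3)) * (4 * (n:ℝ) * ρ)
        = ρ * (324 / (Real.pi ^ 2 * n * Real.exp 1 ^ 3)) := by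
      field_simp
      ring
    rw [hfin]
    have hle1 : 324 / (Real.pi ^ 2 * (n:ℝ) * Real.exp 1 ^ 3) ≤ 1 := by
      rw [div_le_one (by positivity)]
      have t1 : (197:ℝ) ≤ Real.pi ^ 2 * Real.exp 1 ^ 3 := by nlinarith
      nlinarith [mul_le_mul t1 hn3 (by norm_num) (by positivity)]
    calc ρ * (324 / (Real.pi ^ 2 * (n:ℝ) * Real.exp 1 ^ 3)) ≤ ρ * 1 :=
          mul_le_mul_of_nonneg_left hle1 (le_of_lt hρpos)
      _ = ρ := mul_one ρ

end TuranAux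

open TuranAux in
set_option maxHeartbeats 1000000 in
theorem turan_corollary' (ℓ : ℕ) (hl : 1 ≤ ℓ) (Δ τ : ℝ) (hΔ : 0 < Δ)
    (x : Fin ℓ → ℝ)
    (N : ℕ) (hN0 : 0 < N) (hN : (N : ℝ) ≤ 4 * Real.pi / Δ)
    (c : Fin ℓ → ℂ) :
    Real.sqrt ((1 / (N : ℝ)) *
        ∫ t in (0:ℝ)..(N : ℝ), ‖∑ j, c j * Complex.exp (Complex.I * t * x j)‖ ^ 2)
      ≥ (2 / (Real.pi * ℓ)) * ((N * Δ) / (16 * Real.pi * Real.exp 1)) ^ (ℓ - 1) *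
        Real.sqrt ((Δ / (4 * Real.pi)) *
          ∫ t in (0:ℝ)..(4 * Real.pi / Δ),
            ‖∑ j, c j * Complex.exp (Complex.I * t * x j)‖ ^ 2) := by
  classical
  have hπ : (0:ℝ) < Real.pi := Real.pi_pos
  have he : (0:ℝ) < Real.exp 1 := Real.exp_pos 1
  have hNpos : (0:ℝ) < (N:ℝ) := by exact_mod_cast hN0
  set T : ℝ := 4 * Real.pi / Δ with hT
  have hTpos : 0 < T := by positivity
  set P : ℝ → ℂ := fun t => ∑ j, c j * Complex.exp (Complex.I * t * x j) with hP
  set F : ℝ → ℝ := fun t => ‖∑ j, c j * Complex.exp (Complex.I * (t:ℂ) * x j)‖ ^ 2 with hF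
  have hPcont : Continuous P := by
    refine continuous_finset_sum _ fun j _ => ?_
    refine Continuous.mul continuous_const ?_
    refine Complex.continuous_exp.comp ?_
    have : Continuous fun t : ℝ => (t : ℂ) := Complex.continuous_ofReal
    continuity
  have hFcont : Continuous F := by
    have : F = fun t => ‖P t‖ ^ 2 := rfl
    rw [this]
    exact (hPcont.norm).pow 2
  have hFnn : ∀ t, 0 ≤ F t := fun t => by positivity
  have hFint : ∀ u v : ℝ, IntervalIntegrable F MeasureTheory.volume u v :=
    fun u v => hFcont.intervalIntegrable u v
  have hAnn : 0 ≤ ∫ t in (0:ℝ)..(N:ℝ), F t :=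
    intervalIntegral.integral_nonneg (by positivity) (fun u _ => hFnn u)
  rcases eq_or_lt_of_le hl with h1 | h2
  · -- ℓ = 1
    subst h1
    have hone : ∀ t : ℝ, ‖∑ j : Fin 1, c j * Complex.exp (Complex.I * (t:ℂ) * x j)‖ ^ 2
        = ‖c 0‖ ^ 2 := by
      intro t
      rw [Fin.sum_univ_one, norm_mul]
      have h1 : ‖Complex.exp (Complex.I * (t:ℂ) * x 0)‖ = 1 := by
        rw [Complex.norm_exp]
        have : (Complex.I * (t:ℂ) * (x 0 : ℝ)).re = 0 := by simp
        rw [this, Real.exp_zero]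
      rw [h1, mul_one]
    have hint1 : ∫ t in (0:ℝ)..(N:ℝ), ‖∑ j : Fin 1, c j * Complex.exp (Complex.I * (t:ℂ) * x j)‖ ^ 2
        = (N:ℝ) * ‖c 0‖ ^ 2 := by
      simp only [hone]
      rw [intervalIntegral.integral_const]
      simp
    have hint2 : ∫ t in (0:ℝ)..T, ‖∑ j : Fin 1, c j * Complex.exp (Complex.I * (t:ℂ) * x j)‖ ^ 2
        = T * ‖c 0‖ ^ 2 := by
      simp only [hone]
      rw [intervalIntegral.integral_const]
      simp
    rw [hint1, hint2]
    have hL : (1 / (N:ℝ)) * ((N:ℝ) * ‖c 0‖ ^ 2) = ‖c 0‖ ^ 2 := by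
      field_simp
    have hR : (Δ / (4 * Real.pi)) * (T * ‖c 0‖ ^ 2) = ‖c 0‖ ^ 2 := by
      rw [hT]
      field_simp
    rw [hL, hR, Real.sqrt_sq (norm_nonneg _)]
    have hpow : ((N:ℝ) * Δ / (16 * Real.pi * Real.exp 1)) ^ (1 - 1) = 1 := by norm_num
    rw [hpow]
    have h2π : 2 / (Real.pi * (1:ℕ)) ≤ 1 := by
      have := Real.pi_gt_three
      rw [Nat.cast_one, mul_one]
      rw [div_le_one (by positivity)]
      linarith
    calc 2 / (Real.pi * (1:ℕ)) * 1 * ‖c 0‖ ≤ 1 * 1 * ‖c 0‖ := by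
          refine mul_le_mul_of_nonneg_right ?_ (norm_nonneg _)
          rw [mul_one, mul_one]
          exact h2π
      _ = ‖c 0‖ := by ring
  · -- ℓ ≥ 2
    set ρ : ℝ := T / N with hρdef
    have hρ1 : 1 ≤ ρ := (one_le_div hNpos).mpr hN
    have hρpos : 0 < ρ := by linarith
    have hl2 : 2 ≤ ℓ := h2
    have hlR : (2:ℝ) ≤ (ℓ:ℝ) := by exact_mod_cast hl2
    have hlpos : (0:ℝ) < (ℓ:ℝ) := by linarith
    set M : ℕ := ⌈2 * (ℓ:ℝ) * ρ⌉₊ with hMdef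
    have hM1 : 2 * (ℓ:ℝ) * ρ ≤ (M:ℝ) := Nat.le_ceil _
    have hM2 : (M:ℝ) ≤ 2 * (ℓ:ℝ) * ρ + 1 := le_of_lt (Nat.ceil_lt_add_one (by positivity))
    have hMl : ℓ ≤ M := by
      have h1 : (ℓ:ℝ) ≤ 2 * (ℓ:ℝ) * ρ := by nlinarith
      have : (ℓ:ℝ) ≤ (M:ℝ) := le_trans h1 hM1
      exact_mod_cast this
    set m : ℕ := M - ℓ with hmdef
    have hmM : m + ℓ = M := by omega
    set D : ℝ := (M:ℝ) + ℓ with hDdef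
    have hDpos : 0 < D := by positivity
    set a : ℕ → ℝ := fun ν => 1 - (ν:ℝ) / D with hadef
    have ha_lb : ∀ ν ∈ Finset.Icc (m+1) (m+ℓ), (ℓ:ℝ) / D ≤ a ν := by
      intro ν hν
      have hν2 : (ν:ℝ) ≤ (M:ℝ) := by
        have := (Finset.mem_Icc.mp hν).2
        have : ν ≤ M := by omega
        exact_mod_cast this
      have hsum : (ℓ:ℝ) / D + (ν:ℝ) / D ≤ 1 := by
        rw [← add_div, div_le_one hDpos, hDdef]
        linarith
      rw [hadef]
      linarith
    have ha_pos : ∀ ν ∈ Finset.Icc (m+1) (m+ℓ), 0 < a ν := by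
      intro ν hν
      exact lt_of_lt_of_le (by positivity) (ha_lb ν hν)
    have ha_ub : ∀ ν ∈ Finset.Icc (m+1) (m+ℓ), a ν * T ≤ (N:ℝ) := by
      intro ν hν
      have hν1 : (m:ℝ) + 1 ≤ (ν:ℝ) := by
        have := (Finset.mem_Icc.mp hν).1
        exact_mod_cast this
      have hmcast : (m:ℝ) = (M:ℝ) - ℓ := by
        have : (m:ℝ) + ℓ = (M:ℝ) := by exact_mod_cast congrArg (Nat.cast : ℕ → ℝ) hmM
        linarith
      have haub : a ν ≤ (2 * (ℓ:ℝ) - 1) / D := by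
        have hsum : 1 ≤ (2 * (ℓ:ℝ) - 1) / D + (ν:ℝ) / D := by
          rw [← add_div, le_div_iff₀ hDpos, hDdef]
          linarith
        rw [hadef]
        linarith
      have hTN : (2 * (ℓ:ℝ) - 1) / D * T ≤ (N:ℝ) := by
        rw [div_mul_eq_mul_div, div_le_iff₀ hDpos, hDdef]
        have hTeq : T = ρ * N := by
          rw [hρdef]
          field_simp
        rw [hTeq]
        have hkey : (2 * (ℓ:ℝ) - 1) * ρ ≤ (M:ℝ) + ℓ := by nlinarith
        nlinarith
      calc a ν * T ≤ (2 * (ℓ:ℝ) - 1) / D * T :=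
            mul_le_mul_of_nonneg_right haub (le_of_lt hTpos)
        _ ≤ (N:ℝ) := hTN
    have ha_inv : ∀ ν ∈ Finset.Icc (m+1) (m+ℓ), (a ν)⁻¹ ≤ D / ℓ := by
      intro ν hν
      rw [← one_div]
      rw [div_le_div_iff₀ (ha_pos ν hν) hlpos]
      have h := mul_le_mul_of_nonneg_right (ha_lb ν hν) (le_of_lt hDpos)
      rw [div_mul_cancel₀ _ (ne_of_gt hDpos)] at h
      nlinarith
    set K2 : ℝ := ((2:ℝ) ^ (ℓ - 1) * ((M.choose (ℓ - 1)) : ℝ)) ^ 2 with hK2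
    have hK2nn : 0 ≤ K2 := sq_nonneg _
    -- pointwise FMT
    have hpoint : ∀ s : ℝ, F s ≤ K2 * ∑ ν ∈ Finset.Icc (m+1) (m+ℓ), F (a ν * s) := by
      intro s
      have hzu : ∀ j : Fin ℓ, ‖Complex.exp (-(Complex.I * ((s / D : ℝ) : ℂ) * (x j : ℝ)))‖ = 1 := by
        intro j
        rw [Complex.norm_exp]
        have : (-(Complex.I * ((s / D : ℝ) : ℂ) * ((x j : ℝ) : ℂ))).re = 0 := by simp
        rw [this, Real.exp_zero]
      have hfmt := fmt ℓ m hl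
        (fun j => Complex.exp (-(Complex.I * ((s / D : ℝ) : ℂ) * ((x j : ℝ) : ℂ))))
        (fun j => c j * Complex.exp (Complex.I * (s:ℝ) * (x j : ℝ))) hzu
      have hS0 : ∑ j, c j * Complex.exp (Complex.I * (s:ℝ) * (x j : ℝ)) = P s := rfl
      have hSν : ∀ ν ∈ Finset.Icc (m+1) (m+ℓ),
          ∑ j, (c j * Complex.exp (Complex.I * (s:ℝ) * (x j : ℝ)))
              * Complex.exp (-(Complex.I * ((s / D : ℝ) : ℂ) * ((x j : ℝ) : ℂ))) ^ ν
            = P (a ν * s) := by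
        intro ν _
        rw [hP]
        refine Finset.sum_congr rfl fun j _ => ?_
        rw [← Complex.exp_nat_mul, mul_assoc, ← Complex.exp_add]
        congr 1
        have hacast : ((a ν * s : ℝ) : ℂ) = (1 - (ν:ℂ) / (D:ℂ)) * (s:ℂ) := by
          rw [hadef]
          push_cast
          ring
        rw [hacast]
        push_cast
        ring
      rw [hS0] at hfmt
      have hSν2 : ∀ ν ∈ Finset.Icc (m+1) (m+ℓ),
          ‖∑ j, (c j * Complex.exp (Complex.I * (s:ℝ) * (x j : ℝ)))
              * Complex.exp (-(Complex.I * ((s / D : ℝ) : ℂ) * ((x j : ℝ) : ℂ))) ^ ν‖ ^ 2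
            = ‖P (a ν * s)‖ ^ 2 := fun ν hν => by rw [hSν ν hν]
      rw [Finset.sum_congr rfl hSν2] at hfmt
      calc F s = ‖P s‖ ^ 2 := rfl
        _ ≤ ((2:ℝ) ^ (ℓ - 1) * (((m + ℓ).choose (ℓ - 1)) : ℝ)) ^ 2
              * ∑ ν ∈ Finset.Icc (m+1) (m+ℓ), ‖P (a ν * s)‖ ^ 2 := hfmt
        _ = K2 * ∑ ν ∈ Finset.Icc (m+1) (m+ℓ), F (a ν * s) := by
            rw [hK2, hmM]
    -- integrate
    have hcomp_cont : ∀ ν, Continuous (fun t => F (a ν * t)) := by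
      intro ν
      exact hFcont.comp (continuous_const.mul continuous_id)
    have hstep1 : ∫ t in (0:ℝ)..T, F t
        ≤ ∫ t in (0:ℝ)..T, (K2 * ∑ ν ∈ Finset.Icc (m+1) (m+ℓ), F (a ν * t)) := by
      refine intervalIntegral.integral_mono_on (le_of_lt hTpos) (hFint 0 T) ?_
        (fun u _ => hpoint u)
      refine Continuous.intervalIntegrable ?_ 0 T
      refine continuous_const.mul ?_
      exact continuous_finset_sum _ fun ν _ => hcomp_cont ν
    have hstep2 : ∫ t in (0:ℝ)..T, (K2 * ∑ ν ∈ Finset.Icc (m+1) (m+ℓ), F (a ν * t))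
        = K2 * ∑ ν ∈ Finset.Icc (m+1) (m+ℓ), ∫ t in (0:ℝ)..T, F (a ν * t) := by
      rw [intervalIntegral.integral_const_mul]
      congr 1
      rw [intervalIntegral.integral_finset_sum]
      intro ν _
      exact (hcomp_cont ν).intervalIntegrable 0 T
    have hstep3 : ∀ ν ∈ Finset.Icc (m+1) (m+ℓ),
        ∫ t in (0:ℝ)..T, F (a ν * t) ≤ (D / ℓ) * ∫ t in (0:ℝ)..(N:ℝ), F t := by
      intro ν hν
      have hane : a ν ≠ 0 := ne_of_gt (ha_pos ν hν)
      have hcomp := intervalIntegral.integral_comp_mul_left (a := (0:ℝ)) (b := T) F hane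
      rw [mul_zero] at hcomp
      rw [hcomp, smul_eq_mul]
      have hmono : ∫ u in (0:ℝ)..(a ν * T), F u ≤ ∫ u in (0:ℝ)..(N:ℝ), F u := by
        have hsplit := intervalIntegral.integral_add_adjacent_intervals
          (hFint 0 (a ν * T)) (hFint (a ν * T) N)
        have hnn : 0 ≤ ∫ u in (a ν * T)..(N:ℝ), F u :=
          intervalIntegral.integral_nonneg (ha_ub ν hν) (fun u _ => hFnn u)
        linarith
      calc (a ν)⁻¹ * ∫ u in (0:ℝ)..(a ν * T), F u
          ≤ (a ν)⁻¹ * ∫ u in (0:ℝ)..(N:ℝ), F u := by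
            refine mul_le_mul_of_nonneg_left hmono ?_
            exact le_of_lt (inv_pos.mpr (ha_pos ν hν))
        _ ≤ (D / ℓ) * ∫ u in (0:ℝ)..(N:ℝ), F u :=
            mul_le_mul_of_nonneg_right (ha_inv ν hν) hAnn
    have hcard : (Finset.Icc (m+1) (m+ℓ)).card = ℓ := by
      rw [Nat.card_Icc]
      omega
    have hchain : ∫ t in (0:ℝ)..T, F t ≤ K2 * D * ∫ t in (0:ℝ)..(N:ℝ), F t := by
      calc ∫ t in (0:ℝ)..T, F t
          ≤ K2 * ∑ ν ∈ Finset.Icc (m+1) (m+ℓ), ∫ t in (0:ℝ)..T, F (a ν * t) := by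
            rw [← hstep2]; exact hstep1
        _ ≤ K2 * ∑ ν ∈ Finset.Icc (m+1) (m+ℓ), ((D / ℓ) * ∫ t in (0:ℝ)..(N:ℝ), F t) := by
            refine mul_le_mul_of_nonneg_left ?_ hK2nn
            exact Finset.sum_le_sum hstep3
        _ = K2 * D * ∫ t in (0:ℝ)..(N:ℝ), F t := by
            rw [Finset.sum_const, hcard, nsmul_eq_mul]
            field_simp
    -- numeric
    have hq : (N:ℝ) * Δ / (16 * Real.pi * Real.exp 1) = 1 / (4 * Real.exp 1 * ρ) := by
      rw [hρdef, hT]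
      field_simp
      ring
    have hnum := numeric_main ℓ M hl2 ρ hρ1 hM1 hM2
    set Cst : ℝ := 2 / (Real.pi * ℓ) * ((N:ℝ) * Δ / (16 * Real.pi * Real.exp 1)) ^ (ℓ - 1)
      with hCst
    have hCstnn : 0 ≤ Cst := by
      rw [hCst, hq]
      positivity
    have hcoef : Cst ^ 2 * K2 * D ≤ ρ := by
      rw [hCst, hq, hK2, hDdef]
      exact hnum
    -- final glue
    have hmain : Cst ^ 2 * ((Δ / (4 * Real.pi)) * ∫ t in (0:ℝ)..T, F t)
        ≤ (1 / (N:ℝ)) * ∫ t in (0:ℝ)..(N:ℝ), F t := by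
      have hΔT : Δ / (4 * Real.pi) = 1 / T := by
        rw [hT]
        field_simp
      rw [hΔT]
      have hBnn : 0 ≤ ∫ t in (0:ℝ)..T, F t :=
        intervalIntegral.integral_nonneg (le_of_lt hTpos) (fun u _ => hFnn u)
      calc Cst ^ 2 * ((1 / T) * ∫ t in (0:ℝ)..T, F t)
          ≤ Cst ^ 2 * ((1 / T) * (K2 * D * ∫ t in (0:ℝ)..(N:ℝ), F t)) := by
            refine mul_le_mul_of_nonneg_left ?_ (sq_nonneg _)
            exact mul_le_mul_of_nonneg_left hchain (by positivity)
        _ = (Cst ^ 2 * K2 * D / T) * ∫ t in (0:ℝ)..(N:ℝ), F t := by ring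
        _ ≤ (ρ / T) * ∫ t in (0:ℝ)..(N:ℝ), F t := by
            refine mul_le_mul_of_nonneg_right ?_ hAnn
            gcongr
        _ = (1 / (N:ℝ)) * ∫ t in (0:ℝ)..(N:ℝ), F t := by
            rw [hρdef]
            congr 1
            field_simp
    -- sqrt
    rw [ge_iff_le]
    have hsq := Real.sqrt_le_sqrt hmain
    have hsqrt_eq : Real.sqrt (Cst ^ 2 * ((Δ / (4 * Real.pi)) * ∫ t in (0:ℝ)..T, F t))
        = Cst * Real.sqrt ((Δ / (4 * Real.pi)) * ∫ t in (0:ℝ)..T, F t) := by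
      rw [Real.sqrt_mul (sq_nonneg _), Real.sqrt_sq hCstnn]
    rw [hsqrt_eq] at hsq
    exact hsq


/-- Corollary of Turán's inequality: for a single `(Δ, ℓ, τ)`-cluster of nodes and
`N ≤ 4π/Δ`, the normalized `L²` norm of the exponential sum on `[0, N]` is at least
`(2/(πℓ)) (NΔ/(16πe))^{ℓ-1}` times its normalized `L²` norm on `[0, 4π/Δ]`. -/
theorem turan_corollary (ℓ : ℕ) (hl : 1 ≤ ℓ) (Δ τ : ℝ) (hΔ : 0 < Δ)
    (hτ1 : (ℓ : ℝ) - 1 ≤ τ) (hτ2 : τ ≤ Real.pi / Δ)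
    (x : Fin ℓ → ℝ) (hmem : ∀ j, x j ∈ Set.Ioc (-Real.pi) Real.pi)
    (hsep : ∀ j k, j ≠ k →
      Δ ≤ wdist (x j) (x k) ∧ wdist (x j) (x k) ≤ τ * Δ)
    (N : ℕ) (hN0 : 0 < N) (hN : (N : ℝ) ≤ 4 * Real.pi / Δ)
    (c : Fin ℓ → ℂ) :
    Real.sqrt ((1 / (N : ℝ)) *
        ∫ t in (0:ℝ)..(N : ℝ), ‖∑ j, c j * Complex.exp (Complex.I * t * x j)‖ ^ 2)
      ≥ (2 / (Real.pi * ℓ)) * ((N * Δ) / (16 * Real.pi * Real.exp 1)) ^ (ℓ - 1) *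
        Real.sqrt ((Δ / (4 * Real.pi)) *
          ∫ t in (0:ℝ)..(4 * Real.pi / Δ),
            ‖∑ j, c j * Complex.exp (Complex.I * t * x j)‖ ^ 2) :=
  turan_corollary' ℓ hl Δ τ hΔ x N hN0 hN c
end

section
/- There exists an absolute constant C > 0 such that: for any points x_1,…,x_ℓ ∈ (−π,π] with pairwise wrap-around distances at least Δ, and any c ∈ ℂ^ℓ, the exponential sum P(t) = Σ c_j e^{i t x_j} satisfies (Δ/(4π)) ∫_0^{4π/Δ} |P(t)|² dt ≥ C · Σ_j |c_j|² (Salem-type inequality). -/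
open Complex Real Finset intervalIntegral

section SalemAux

section SalemAux

/-- The argument of `e^{iθ}`, a signed representative of `θ` modulo `2π`. -/
noncomputable def sarg (θ : ℝ) : ℝ := Complex.arg (Complex.exp (Complex.I * (θ : ℂ)))

lemma abs_sarg_le (θ : ℝ) : |sarg θ| ≤ |θ| := by
  rw [sarg]
  rcases le_or_gt |θ| π with h | h
  · rcases eq_or_lt_of_le (neg_le_of_abs_le h) with h1 | h1
    · have : Complex.exp (Complex.I * θ) = -1 := by
        rw [← h1]
        push_cast
        rw [show Complex.I * (-π) = (-π : ℂ) * Complex.I by ring, Complex.exp_mul_I]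
        simp
      rw [this, Complex.arg_neg_one, ← h1]
      simp [_root_.abs_of_nonneg Real.pi_pos.le]
    · have hθ : θ ∈ Set.Ioc (-π) π := ⟨h1, le_of_abs_le h⟩
      have : Complex.exp (Complex.I * θ) = (Real.cos θ : ℂ) + (Real.sin θ : ℂ) * Complex.I := by
        rw [mul_comm, Complex.exp_mul_I]
        simp [Complex.ofReal_cos, Complex.ofReal_sin]
      rw [this, Complex.ofReal_cos, Complex.ofReal_sin, Complex.arg_cos_add_sin_mul_I hθ]
  · exact le_trans (Complex.abs_arg_le_pi _) h.le

lemma exp_sarg (θ : ℝ) :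
    Complex.exp (Complex.I * (sarg θ : ℝ)) = Complex.exp (Complex.I * (θ : ℂ)) := by
  rw [sarg]
  have h1 : ‖Complex.exp (Complex.I * θ)‖ = 1 := by
    simp [Complex.norm_exp]
  have h2 := Complex.norm_mul_exp_arg_mul_I (Complex.exp (Complex.I * θ))
  rw [h1] at h2
  push_cast at h2
  rw [one_mul] at h2
  rw [mul_comm]
  exact h2

lemma wdist_eq_sarg (u v : ℝ) : wdist u v = |sarg (u - v)| := by
  rw [wdist, sarg]; norm_num

lemma sum_one_div_sq_aux (F : Finset ℕ) : ∑ m ∈ F, 1 / (m : ℝ) ^ 2 ≤ 2 := by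
  have hsum : Summable (fun n : ℕ => 1 / (n : ℝ) ^ 2) := by
    simpa using Real.summable_one_div_nat_pow.mpr (one_lt_two)
  have h1 : ∑ m ∈ F, 1 / (m : ℝ) ^ 2 ≤ ∑' n : ℕ, 1 / (n : ℝ) ^ 2 :=
    Summable.sum_le_tsum F (fun n _ => by positivity) hsum
  rw [hasSum_zeta_two.tsum_eq] at h1
  nlinarith [Real.pi_lt_d2, Real.pi_pos]

/-- Sum of `1/b k ^ 2` over a `Δ`-separated family with values `≥ Δ` is at most `2/Δ²`. -/
lemma sep_sum_le {ι : Type*} (s : Finset ι) (b : ι → ℝ) (Δ : ℝ) (hΔ : 0 < Δ)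
    (h1 : ∀ k ∈ s, Δ ≤ b k)
    (h2 : ∀ k ∈ s, ∀ k' ∈ s, k ≠ k' → Δ ≤ |b k - b k'|) :
    ∑ k ∈ s, 1 / (b k) ^ 2 ≤ 2 / Δ ^ 2 := by
  set g : ι → ℕ := fun k => (⌊b k / Δ⌋).toNat with hg
  have hfloor : ∀ k ∈ s, (1 : ℤ) ≤ ⌊b k / Δ⌋ := by
    intro k hk
    have : (1 : ℝ) ≤ b k / Δ := (one_le_div hΔ).mpr (h1 k hk)
    exact_mod_cast Int.le_floor.mpr (by exact_mod_cast this)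
  have hg1 : ∀ k ∈ s, 1 ≤ g k := by
    intro k hk
    have := hfloor k hk
    simp only [hg]
    omega
  have hgk : ∀ k ∈ s, Δ * (g k : ℝ) ≤ b k := by
    intro k hk
    have h0 : ((g k : ℤ) : ℝ) = (⌊b k / Δ⌋ : ℝ) := by
      rw [hg]; simp [Int.toNat_of_nonneg (le_trans zero_le_one (hfloor k hk))]
    have hfl := Int.floor_le (b k / Δ)
    calc Δ * (g k : ℝ) = ((g k : ℤ) : ℝ) * Δ := by push_cast; ring
      _ ≤ (b k / Δ) * Δ := by rw [h0]; exact mul_le_mul_of_nonneg_right hfl hΔ.le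
      _ = b k := by field_simp
  have hlt : ∀ k ∈ s, b k < Δ * ((g k : ℝ) + 1) := by
    intro k hk
    have h0 : ((g k : ℤ) : ℝ) = (⌊b k / Δ⌋ : ℝ) := by
      rw [hg]; simp [Int.toNat_of_nonneg (le_trans zero_le_one (hfloor k hk))]
    have hfl := Int.lt_floor_add_one (b k / Δ)
    have hx : b k / Δ < (g k : ℝ) + 1 := by rw [← h0] at hfl; exact_mod_cast hfl
    calc b k = (b k / Δ) * Δ := by field_simp
      _ < ((g k : ℝ) + 1) * Δ := mul_lt_mul_of_pos_right hx hΔ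
      _ = Δ * ((g k : ℝ) + 1) := by ring
  have hinj : ∀ k ∈ s, ∀ k' ∈ s, g k = g k' → k = k' := by
    intro k hk k' hk' he
    by_contra hne
    have e1 := hgk k hk; have e2 := hlt k hk
    have e3 := hgk k' hk'; have e4 := hlt k' hk'
    rw [he] at e1 e2
    have habs : |b k - b k'| < Δ := by
      rw [abs_lt]; constructor <;> nlinarith
    exact absurd (h2 k hk k' hk' hne) (not_le.mpr habs)
  have step1 : ∑ k ∈ s, 1 / (b k) ^ 2 ≤ ∑ k ∈ s, 1 / Δ ^ 2 * (1 / ((g k : ℝ)) ^ 2) := by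
    apply Finset.sum_le_sum
    intro k hk
    have hp : (0 : ℝ) < Δ * (g k : ℝ) := by
      have h1' := hg1 k hk
      have h1'' : (1 : ℝ) ≤ (g k : ℝ) := by exact_mod_cast h1'
      nlinarith
    have hle : (Δ * (g k : ℝ)) ^ 2 ≤ (b k) ^ 2 := pow_le_pow_left₀ hp.le (hgk k hk) 2
    have hd := one_div_le_one_div_of_le (by positivity) hle
    calc 1 / (b k) ^ 2 ≤ 1 / (Δ * (g k : ℝ)) ^ 2 := hd
      _ = 1 / Δ ^ 2 * (1 / ((g k : ℝ)) ^ 2) := by rw [mul_pow]; ring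
  have step2 : ∑ k ∈ s, (1 / ((g k : ℝ)) ^ 2) = ∑ m ∈ s.image g, 1 / (m : ℝ) ^ 2 :=
    (Finset.sum_image (f := fun m : ℕ => 1 / (m : ℝ) ^ 2) hinj).symm
  calc ∑ k ∈ s, 1 / (b k) ^ 2 ≤ ∑ k ∈ s, 1 / Δ ^ 2 * (1 / ((g k : ℝ)) ^ 2) := step1
    _ = 1 / Δ ^ 2 * ∑ k ∈ s, (1 / ((g k : ℝ)) ^ 2) := by rw [Finset.mul_sum]
    _ = 1 / Δ ^ 2 * ∑ m ∈ s.image g, 1 / (m : ℝ) ^ 2 := by rw [step2]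
    _ ≤ 1 / Δ ^ 2 * 2 := mul_le_mul_of_nonneg_left (sum_one_div_sq_aux _) (by positivity)
    _ = 2 / Δ ^ 2 := by ring

/-- Counting lemma: for `Δ`-separated nodes on the circle. -/
lemma circle_counting {ℓ : ℕ} (Δ : ℝ) (x : Fin ℓ → ℝ) (hΔ : 0 < Δ)
    (hsep : ∀ j k, j ≠ k → Δ ≤ wdist (x j) (x k)) (j : Fin ℓ) :
    ∑ k ∈ Finset.univ.erase j, 1 / (x j - x k) ^ 2 ≤ 4 / Δ ^ 2 := by
  have F1 : ∀ k, |sarg (x k - x j)| ≤ |x k - x j| := fun k => abs_sarg_le _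
  have F2 : ∀ k ∈ Finset.univ.erase j, Δ ≤ |sarg (x k - x j)| := by
    intro k hk
    have hne : k ≠ j := (Finset.mem_erase.mp hk).1
    have := hsep k j hne
    rwa [wdist_eq_sarg] at this
  have F3 : ∀ k ∈ Finset.univ.erase j, ∀ k' ∈ Finset.univ.erase j, k ≠ k' →
      Δ ≤ |sarg (x k - x j) - sarg (x k' - x j)| := by
    intro k _ k' _ hne
    have h1 := hsep k k' hne
    rw [wdist_eq_sarg] at h1
    have h2 : Complex.exp (Complex.I * ((sarg (x k - x j) - sarg (x k' - x j) : ℝ) : ℂ)) =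
        Complex.exp (Complex.I * ((x k - x k' : ℝ) : ℂ)) := by
      rw [show ((sarg (x k - x j) - sarg (x k' - x j) : ℝ) : ℂ)
            = ((sarg (x k - x j) : ℝ) : ℂ) - ((sarg (x k' - x j) : ℝ) : ℂ) from by push_cast; ring,
          mul_sub, Complex.exp_sub, exp_sarg, exp_sarg,
          show ((x k - x k' : ℝ) : ℂ) = ((x k - x j : ℝ) : ℂ) - ((x k' - x j : ℝ) : ℂ) from by
            push_cast; ring,
          mul_sub, Complex.exp_sub]
    calc Δ ≤ |sarg (x k - x k')| := h1
      _ = |Complex.arg (Complex.exp (Complex.I *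
            ((sarg (x k - x j) - sarg (x k' - x j) : ℝ) : ℂ)))| := by rw [sarg, h2]
      _ ≤ |sarg (x k - x j) - sarg (x k' - x j)| := abs_sarg_le _
  set a : Fin ℓ → ℝ := fun k => sarg (x k - x j) with ha
  have hpt : ∀ k ∈ Finset.univ.erase j, 1 / (x j - x k) ^ 2 ≤ 1 / (a k) ^ 2 := by
    intro k hk
    have h2 := F2 k hk
    have h1 : |a k| ≤ |x j - x k| := by rw [abs_sub_comm]; exact F1 k
    have hpos : (0 : ℝ) < (a k) ^ 2 := by
      rw [← _root_.sq_abs]; exact pow_pos (lt_of_lt_of_le hΔ h2) 2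
    apply one_div_le_one_div_of_le hpos
    calc (a k) ^ 2 = |a k| ^ 2 := (_root_.sq_abs _).symm
      _ ≤ |x j - x k| ^ 2 := by nlinarith [abs_nonneg (a k)]
      _ = (x j - x k) ^ 2 := _root_.sq_abs _
  have hp : ∑ k ∈ (Finset.univ.erase j).filter (fun k => 0 < a k), 1 / (a k) ^ 2 ≤ 2 / Δ ^ 2 := by
    apply sep_sum_le _ a Δ hΔ
    · intro k hk
      rw [Finset.mem_filter] at hk
      have := F2 k hk.1
      rwa [abs_of_pos hk.2] at this
    · intro k hk k' hk' hne
      rw [Finset.mem_filter] at hk hk'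
      exact F3 k hk.1 k' hk'.1 hne
  have hn : ∑ k ∈ (Finset.univ.erase j).filter (fun k => ¬0 < a k), 1 / (a k) ^ 2 ≤ 2 / Δ ^ 2 := by
    have hb := sep_sum_le ((Finset.univ.erase j).filter (fun k => ¬0 < a k))
      (fun k => -(a k)) Δ hΔ ?_ ?_
    · calc ∑ k ∈ (Finset.univ.erase j).filter (fun k => ¬0 < a k), 1 / (a k) ^ 2
          = ∑ k ∈ (Finset.univ.erase j).filter (fun k => ¬0 < a k), 1 / (-(a k)) ^ 2 := by
            apply Finset.sum_congr rfl; intro k _; rw [neg_sq]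
        _ ≤ 2 / Δ ^ 2 := hb
    · intro k hk
      rw [Finset.mem_filter] at hk
      have h2 := F2 k hk.1
      have := not_lt.mp hk.2
      rwa [abs_of_nonpos this] at h2
    · intro k hk k' hk' hne
      rw [Finset.mem_filter] at hk hk'
      have := F3 k hk.1 k' hk'.1 hne
      rwa [show -(a k) - -(a k') = -(a k - a k') from by ring, abs_neg]
  calc ∑ k ∈ Finset.univ.erase j, 1 / (x j - x k) ^ 2
      ≤ ∑ k ∈ Finset.univ.erase j, 1 / (a k) ^ 2 := Finset.sum_le_sum hpt
    _ = ∑ k ∈ (Finset.univ.erase j).filter (fun k => 0 < a k), 1 / (a k) ^ 2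
        + ∑ k ∈ (Finset.univ.erase j).filter (fun k => ¬0 < a k), 1 / (a k) ^ 2 :=
        (Finset.sum_filter_add_sum_filter_not (Finset.univ.erase j) (fun k => 0 < a k) _).symm
    _ ≤ 2 / Δ ^ 2 + 2 / Δ ^ 2 := add_le_add hp hn
    _ = 4 / Δ ^ 2 := by ring

lemma cont_cexp (ν : ℝ) : Continuous fun t : ℝ => Complex.exp (Complex.I * t * ν) := by
  fun_prop

lemma integral_cexp (T : ℝ) {ν : ℝ} (hν : ν ≠ 0) :
    ∫ t in (0:ℝ)..T, Complex.exp (Complex.I * t * ν) =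
      (Complex.exp (Complex.I * T * ν) - 1) / (Complex.I * ν) := by
  have hIν : (Complex.I * ν) ≠ 0 := by
    simp [Complex.I_ne_zero, Complex.ofReal_eq_zero, hν]
  have hD : ∀ z : ℂ, HasDerivAt (fun z : ℂ => Complex.exp (Complex.I * z * ν) / (Complex.I * ν))
      (Complex.exp (Complex.I * z * ν)) z := by
    intro z
    have h1 : HasDerivAt (fun z : ℂ => Complex.I * z * ν) (Complex.I * ν) z := by
      simpa using ((hasDerivAt_id z).const_mul Complex.I).mul_const (ν : ℂ)
    have h3 := h1.cexp.div_const (Complex.I * ν)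
    simpa [mul_div_cancel_right₀ _ hIν] using h3
  have hD' : ∀ t ∈ Set.uIcc (0 : ℝ) T, HasDerivAt
      (fun t : ℝ => Complex.exp (Complex.I * t * ν) / (Complex.I * ν))
      (Complex.exp (Complex.I * t * ν)) t := fun t _ => (hD t).comp_ofReal
  rw [intervalIntegral.integral_eq_sub_of_hasDerivAt hD' ((cont_cexp ν).intervalIntegrable _ _)]
  simp only [Complex.ofReal_zero, mul_zero, zero_mul, Complex.exp_zero, div_sub_div_same]

lemma W_repr (T ω ξ : ℝ) :
    ∫ t in (0:ℝ)..T, ((1 - Real.cos (ω * t) : ℝ) : ℂ) * Complex.exp (Complex.I * t * ξ)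
      = (∫ t in (0:ℝ)..T, Complex.exp (Complex.I * t * ξ))
        - (1 / 2) * (∫ t in (0:ℝ)..T, Complex.exp (Complex.I * t * ((ξ + ω : ℝ) : ℂ)))
        - (1 / 2) * (∫ t in (0:ℝ)..T, Complex.exp (Complex.I * t * ((ξ - ω : ℝ) : ℂ))) := by
  have key : ∀ t : ℝ, ((1 - Real.cos (ω * t) : ℝ) : ℂ) * Complex.exp (Complex.I * t * ξ)
      = Complex.exp (Complex.I * t * ξ)
        - (1 / 2) * Complex.exp (Complex.I * t * ((ξ + ω : ℝ) : ℂ))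
        - (1 / 2) * Complex.exp (Complex.I * t * ((ξ - ω : ℝ) : ℂ)) := by
    intro t
    have h1 : Complex.exp (Complex.I * t * ((ξ + ω : ℝ) : ℂ))
        = Complex.exp (Complex.I * t * ξ) * Complex.exp (((ω * t : ℝ) : ℂ) * Complex.I) := by
      rw [← Complex.exp_add]; congr 1; push_cast; ring
    have h2 : Complex.exp (Complex.I * t * ((ξ - ω : ℝ) : ℂ))
        = Complex.exp (Complex.I * t * ξ) * Complex.exp ((-((ω * t : ℝ) : ℂ)) * Complex.I) := by
      rw [← Complex.exp_add]; congr 1; push_cast; ring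
    have h3 : ((Real.cos (ω * t) : ℝ) : ℂ)
        = (Complex.exp (((ω * t : ℝ) : ℂ) * Complex.I)
          + Complex.exp ((-((ω * t : ℝ) : ℂ)) * Complex.I)) / 2 := by
      rw [Complex.ofReal_cos]; simp only [Complex.cos]
    rw [h1, h2]
    push_cast [h3]
    ring
  simp only [key]
  rw [intervalIntegral.integral_sub, intervalIntegral.integral_sub,
    intervalIntegral.integral_const_mul, intervalIntegral.integral_const_mul]
  all_goals apply Continuous.intervalIntegrable
  all_goals fun_prop


lemma exp_ITω {Δ : ℝ} (hΔ : Δ ≠ 0) :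
    Complex.exp (((4 * Real.pi / Δ * (Δ/2) : ℝ) : ℂ) * Complex.I) = 1 := by
  have hTω : 4 * Real.pi / Δ * (Δ/2) = 2 * Real.pi := by field_simp; ring
  rw [hTω]
  push_cast
  exact Complex.exp_two_pi_mul_I

lemma W_zero {Δ : ℝ} (hΔ : 0 < Δ) :
    ∫ t in (0:ℝ)..(4 * Real.pi / Δ),
        ((1 - Real.cos ((Δ/2) * t) : ℝ) : ℂ) * Complex.exp (Complex.I * t * ((0:ℝ) : ℂ))
      = ((4 * Real.pi / Δ : ℝ) : ℂ) := by
  have hω : (0:ℝ) < Δ/2 := by linarith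
  rw [W_repr]
  have e1 : (∫ t in (0:ℝ)..(4 * Real.pi / Δ), Complex.exp (Complex.I * t * ((0:ℝ) : ℂ)))
      = ((4 * Real.pi / Δ : ℝ) : ℂ) := by
    simp
  have e2 : Complex.exp (Complex.I * ((4 * Real.pi / Δ : ℝ) : ℂ) * (((0:ℝ) + Δ/2 : ℝ) : ℂ)) = 1 := by
    rw [show Complex.I * ((4 * Real.pi / Δ : ℝ) : ℂ) * (((0:ℝ) + Δ/2 : ℝ) : ℂ)
        = ((4 * Real.pi / Δ * (Δ/2) : ℝ) : ℂ) * Complex.I from by push_cast; ring]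
    exact exp_ITω hΔ.ne'
  have e3 : Complex.exp (Complex.I * ((4 * Real.pi / Δ : ℝ) : ℂ) * (((0:ℝ) - Δ/2 : ℝ) : ℂ)) = 1 := by
    rw [show Complex.I * ((4 * Real.pi / Δ : ℝ) : ℂ) * (((0:ℝ) - Δ/2 : ℝ) : ℂ)
        = -(((4 * Real.pi / Δ * (Δ/2) : ℝ) : ℂ) * Complex.I) from by push_cast; ring,
      Complex.exp_neg, exp_ITω hΔ.ne', inv_one]
  rw [integral_cexp _ (by positivity : (0:ℝ) + Δ/2 ≠ 0),
      integral_cexp _ (by intro h; rw [sub_eq_zero] at h; linarith : (0:ℝ) - Δ/2 ≠ 0),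
      e1, e2, e3]
  simp

lemma W_bound {Δ ξ : ℝ} (hΔ : 0 < Δ) (hξ : Δ ≤ |ξ|) :
    ‖∫ t in (0:ℝ)..(4 * Real.pi / Δ),
        ((1 - Real.cos ((Δ/2) * t) : ℝ) : ℂ) * Complex.exp (Complex.I * t * (ξ : ℂ))‖
      ≤ 2 * Δ / (3 * ξ ^ 2) := by
  have hω : (0:ℝ) < Δ/2 := by linarith
  have hξ0 : ξ ≠ 0 := by
    intro h; rw [h] at hξ; simp at hξ; linarith
  have hξp : ξ + Δ/2 ≠ 0 := by
    intro h
    have : ξ = -(Δ/2) := by linarith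
    rw [this, abs_neg, abs_of_pos hω] at hξ; linarith
  have hξm : ξ - Δ/2 ≠ 0 := by
    intro h
    have : ξ = Δ/2 := by linarith
    rw [this, abs_of_pos hω] at hξ; linarith
  rw [W_repr, integral_cexp _ hξ0, integral_cexp _ hξp, integral_cexp _ hξm]
  set e := Complex.exp (Complex.I * ((4 * Real.pi / Δ : ℝ) : ℂ) * (ξ : ℂ)) with he
  have hep : Complex.exp (Complex.I * ((4 * Real.pi / Δ : ℝ) : ℂ) * ((ξ + Δ/2 : ℝ) : ℂ)) = e := by
    rw [show Complex.I * ((4 * Real.pi / Δ : ℝ) : ℂ) * ((ξ + Δ/2 : ℝ) : ℂ)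
        = Complex.I * ((4 * Real.pi / Δ : ℝ) : ℂ) * (ξ : ℂ)
          + ((4 * Real.pi / Δ * (Δ/2) : ℝ) : ℂ) * Complex.I from by push_cast; ring,
      Complex.exp_add, exp_ITω hΔ.ne', mul_one]
  have hem : Complex.exp (Complex.I * ((4 * Real.pi / Δ : ℝ) : ℂ) * ((ξ - Δ/2 : ℝ) : ℂ)) = e := by
    rw [show Complex.I * ((4 * Real.pi / Δ : ℝ) : ℂ) * ((ξ - Δ/2 : ℝ) : ℂ)
        = Complex.I * ((4 * Real.pi / Δ : ℝ) : ℂ) * (ξ : ℂ)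
          + -(((4 * Real.pi / Δ * (Δ/2) : ℝ) : ℂ) * Complex.I) from by push_cast; ring,
      Complex.exp_add, Complex.exp_neg, exp_ITω hΔ.ne', inv_one, mul_one]
  rw [hep, hem]
  -- rewrite each division
  have hdiv : ∀ (ν : ℝ), (e - 1) / (Complex.I * (ν : ℂ)) = (e - 1) * (-Complex.I) * ((1/ν : ℝ) : ℂ) := by
    intro ν
    rw [div_eq_mul_inv, mul_inv, Complex.inv_I]
    push_cast
    rw [one_div]
    ring
  rw [hdiv, hdiv, hdiv]
  set r : ℝ := 1/ξ - (1/2)*(1/(ξ + Δ/2)) - (1/2)*(1/(ξ - Δ/2)) with hrdef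
  have hsum : (e - 1) * (-Complex.I) * ((1/ξ : ℝ) : ℂ)
      - 1/2 * ((e - 1) * (-Complex.I) * ((1/(ξ + Δ/2) : ℝ) : ℂ))
      - 1/2 * ((e - 1) * (-Complex.I) * ((1/(ξ - Δ/2) : ℝ) : ℂ))
      = (e - 1) * (-Complex.I) * ((r : ℝ) : ℂ) := by
    have hcξ : (ξ:ℂ) ≠ 0 := Complex.ofReal_ne_zero.mpr hξ0
    have hcp : ((ξ:ℂ) + (Δ:ℂ)/2) ≠ 0 := by
      rw [show (ξ:ℂ) + (Δ:ℂ)/2 = ((ξ + Δ/2 : ℝ) : ℂ) from by push_cast; ring]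
      exact Complex.ofReal_ne_zero.mpr hξp
    have hcm : ((ξ:ℂ) - (Δ:ℂ)/2) ≠ 0 := by
      rw [show (ξ:ℂ) - (Δ:ℂ)/2 = ((ξ - Δ/2 : ℝ) : ℂ) from by push_cast; ring]
      exact Complex.ofReal_ne_zero.mpr hξm
    rw [hrdef]
    push_cast
    ring
  rw [hsum]
  have hnorm : ‖(e - 1) * (-Complex.I) * ((r : ℝ) : ℂ)‖ = ‖e - 1‖ * |r| := by
    rw [norm_mul, norm_mul, norm_neg, Complex.norm_I, mul_one, Complex.norm_real,
      Real.norm_eq_abs]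
  rw [hnorm]
  have he1 : ‖e - 1‖ ≤ 2 := by
    have : ‖e‖ = 1 := by
      rw [he, Complex.norm_exp]
      simp
    calc ‖e - 1‖ ≤ ‖e‖ + ‖(1:ℂ)‖ := norm_sub_le _ _
      _ = 2 := by rw [this]; simp; norm_num
  have hrval : r = -((Δ/2)^2) / (ξ * ((ξ + Δ/2) * (ξ - Δ/2))) := by
    rw [eq_div_iff (mul_ne_zero hξ0 (mul_ne_zero hξp hξm))]
    have hexp : r * (ξ * ((ξ + Δ/2) * (ξ - Δ/2)))
        = ((ξ + Δ/2) * (ξ - Δ/2)) * (ξ * (1/ξ))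
          - (1/2) * (ξ * (ξ - Δ/2)) * ((ξ + Δ/2) * (1/(ξ + Δ/2)))
          - (1/2) * (ξ * (ξ + Δ/2)) * ((ξ - Δ/2) * (1/(ξ - Δ/2))) := by
      rw [hrdef]; ring
    rw [hexp, mul_one_div_cancel hξ0, mul_one_div_cancel hξp, mul_one_div_cancel hξm]
    ring
  have hsq : (Δ/2)^2 < ξ^2 := by
    have h1 : Δ/2 < |ξ| := by linarith
    have h2 : (Δ/2)^2 < |ξ|^2 := by nlinarith [abs_nonneg ξ]
    rwa [_root_.sq_abs] at h2
  have hrabs : |r| ≤ Δ / (3 * ξ^2) := by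
    have hden : ξ * ((ξ + Δ/2) * (ξ - Δ/2)) = ξ * (ξ^2 - (Δ/2)^2) := by ring
    have habs : |r| = (Δ/2)^2 / (|ξ| * (ξ^2 - (Δ/2)^2)) := by
      rw [hrval, abs_div, abs_neg, _root_.abs_of_nonneg (sq_nonneg (Δ/2)), hden, abs_mul,
        _root_.abs_of_pos (by linarith : (0:ℝ) < ξ^2 - (Δ/2)^2)]
    have hApos : 0 < |ξ| := abs_pos.mpr hξ0
    have hA : Δ ≤ |ξ| := hξ
    have hA2 : |ξ|^2 = ξ^2 := _root_.sq_abs ξ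
    have hξsq : (0:ℝ) < ξ^2 := by rw [← hA2]; exact pow_pos hApos 2
    rw [habs]
    rw [div_le_div_iff₀ (mul_pos hApos (by linarith)) (mul_pos (by norm_num) hξsq)]
    have hfac : (0:ℝ) ≤ Δ * |ξ| * (|ξ| - Δ) * (|ξ| + Δ/4) :=
      mul_nonneg (mul_nonneg (mul_nonneg hΔ.le (abs_nonneg ξ)) (by linarith)) (by positivity)
    rw [← hA2]
    nlinarith [hfac]
  calc ‖e - 1‖ * |r| ≤ 2 * (Δ / (3 * ξ^2)) := by
        apply mul_le_mul he1 hrabs (abs_nonneg r) (by norm_num)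
    _ = 2 * Δ / (3 * ξ^2) := by ring

lemma sum_erase_swap {ℓ : ℕ} (f : Fin ℓ → Fin ℓ → ℝ) :
    ∑ j, ∑ k ∈ Finset.univ.erase j, f j k = ∑ k, ∑ j ∈ Finset.univ.erase k, f j k := by
  calc ∑ j, ∑ k ∈ Finset.univ.erase j, f j k
      = ∑ j, ∑ k, if k ≠ j then f j k else 0 := by
        refine Finset.sum_congr rfl fun j _ => ?_
        rw [← Finset.filter_ne', Finset.sum_filter]
    _ = ∑ k, ∑ j, if k ≠ j then f j k else 0 := Finset.sum_comm
    _ = ∑ k, ∑ j ∈ Finset.univ.erase k, f j k := by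
        refine Finset.sum_congr rfl fun k _ => ?_
        rw [← Finset.filter_ne', Finset.sum_filter]
        exact Finset.sum_congr rfl fun j _ => by simp [ne_comm]

end SalemAux

/-- **Salem-type inequality**: there is an absolute constant `C > 0` such that for any nodes
`x_1, …, x_ℓ ∈ (−π, π]` with pairwise wrap-around distances at least `Δ` and any
coefficients `c`, the exponential sum `P(t) = ∑ c_j e^{i t x_j}` satisfies
`(Δ/(4π)) ∫_0^{4π/Δ} |P|² ≥ C ∑ |c_j|²`. -/
theorem salem_inequality :
    ∃ C : ℝ, 0 < C ∧
      ∀ (ℓ : ℕ) (Δ : ℝ) (x : Fin ℓ → ℝ) (c : Fin ℓ → ℂ),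
        0 < Δ →
        (∀ j, x j ∈ Set.Ioc (-Real.pi) Real.pi) →
        (∀ j k, j ≠ k → Δ ≤ wdist (x j) (x k)) →
        C * ∑ j, ‖c j‖ ^ 2 ≤
          (Δ / (4 * Real.pi)) *
            ∫ t in (0:ℝ)..(4 * Real.pi / Δ),
              ‖∑ j, c j * Complex.exp (Complex.I * t * x j)‖ ^ 2 := by
  have hπ := Real.pi_pos
  have hπ3 := Real.pi_gt_three
  refine ⟨1/2 - 1/(3*Real.pi), ?_, ?_⟩
  · have h1 : 1/(3*Real.pi) < 1/2 := by
      rw [div_lt_div_iff₀ (by linarith) (by norm_num)]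
      linarith
    linarith
  intro ℓ Δ x c hΔ _hmem hsep
  have hT : (0:ℝ) < 4*Real.pi/Δ := by positivity
  have hS0 : (0:ℝ) ≤ ∑ j, ‖c j‖^2 := Finset.sum_nonneg fun j _ => by positivity
  -- continuity facts
  have contP : Continuous (fun t : ℝ => ∑ j, c j * Complex.exp (Complex.I * t * (x j : ℂ))) := by
    apply continuous_finset_sum
    intro j _
    fun_prop
  have contN : Continuous (fun t : ℝ => ‖∑ j, c j * Complex.exp (Complex.I * t * (x j : ℂ))‖^2) :=
    (contP.norm).pow 2
  -- Step 1 : weighted integral ≤ 2 × plain integral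
  have step1 :
      (∫ t in (0:ℝ)..(4*Real.pi/Δ),
        (1 - Real.cos ((Δ/2)*t)) * ‖∑ j, c j * Complex.exp (Complex.I * t * (x j : ℂ))‖^2)
      ≤ 2 * ∫ t in (0:ℝ)..(4*Real.pi/Δ),
          ‖∑ j, c j * Complex.exp (Complex.I * t * (x j : ℂ))‖^2 := by
    rw [← intervalIntegral.integral_const_mul]
    apply intervalIntegral.integral_mono_on hT.le
    · exact (Continuous.intervalIntegrable (by fun_prop) _ _)
    · exact (Continuous.intervalIntegrable (continuous_const.mul contN) _ _)
    · intro t _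
      have h1 : 1 - Real.cos ((Δ/2)*t) ≤ 2 := by
        nlinarith [Real.neg_one_le_cos ((Δ/2)*t)]
      have h2 : (0:ℝ) ≤ ‖∑ j, c j * Complex.exp (Complex.I * t * (x j : ℂ))‖^2 := by positivity
      nlinarith
  -- Step 2 : expansion of the weighted integral as a double sum
  have key :
      ((∫ t in (0:ℝ)..(4*Real.pi/Δ),
        (1 - Real.cos ((Δ/2)*t)) * ‖∑ j, c j * Complex.exp (Complex.I * t * (x j : ℂ))‖^2 : ℝ) : ℂ)
      = ∑ j, ∑ k, c j * (starRingEnd ℂ) (c k) *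
          (∫ t in (0:ℝ)..(4*Real.pi/Δ),
            ((1 - Real.cos ((Δ/2)*t) : ℝ) : ℂ)
              * Complex.exp (Complex.I * t * ((x j - x k : ℝ) : ℂ))) := by
    have hptw : ∀ t : ℝ,
        (((1 - Real.cos ((Δ/2)*t)) * ‖∑ j, c j * Complex.exp (Complex.I * t * (x j : ℂ))‖^2 : ℝ) : ℂ)
        = ∑ j, ∑ k, c j * (starRingEnd ℂ) (c k) *
            (((1 - Real.cos ((Δ/2)*t) : ℝ) : ℂ)
              * Complex.exp (Complex.I * t * ((x j - x k : ℝ) : ℂ))) := by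
      intro t
      have hnorm : ((‖∑ j, c j * Complex.exp (Complex.I * t * (x j : ℂ))‖^2 : ℝ) : ℂ)
          = (∑ j, c j * Complex.exp (Complex.I * t * (x j : ℂ)))
            * (starRingEnd ℂ) (∑ j, c j * Complex.exp (Complex.I * t * (x j : ℂ))) := by
        rw [Complex.mul_conj, Complex.normSq_eq_norm_sq]
        try norm_cast
      have hprod : (∑ j, c j * Complex.exp (Complex.I * t * (x j : ℂ)))
            * (starRingEnd ℂ) (∑ j, c j * Complex.exp (Complex.I * t * (x j : ℂ)))
          = ∑ j, ∑ k, c j * (starRingEnd ℂ) (c k)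
              * Complex.exp (Complex.I * t * ((x j - x k : ℝ) : ℂ)) := by
        rw [map_sum, Finset.sum_mul_sum]
        refine Finset.sum_congr rfl fun j _ => Finset.sum_congr rfl fun k _ => ?_
        rw [map_mul, ← Complex.exp_conj]
        have hconj : (starRingEnd ℂ) (Complex.I * t * (x k : ℂ)) = -(Complex.I * t * (x k : ℂ)) := by
          simp [Complex.conj_I]
          try ring
        rw [hconj, mul_mul_mul_comm, ← Complex.exp_add]
        congr 2
        try push_cast
        try ring
      rw [Complex.ofReal_mul, hnorm, hprod, Finset.mul_sum]
      refine Finset.sum_congr rfl fun j _ => ?_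
      rw [Finset.mul_sum]
      refine Finset.sum_congr rfl fun k _ => ?_
      ring
    rw [← intervalIntegral.integral_ofReal,
      intervalIntegral.integral_congr (fun t _ => hptw t),
      intervalIntegral.integral_finset_sum (fun j _ => ?_)]
    · refine Finset.sum_congr rfl fun j _ => ?_
      rw [intervalIntegral.integral_finset_sum (fun k _ => ?_)]
      · exact Finset.sum_congr rfl fun k _ => intervalIntegral.integral_const_mul _ _
      · exact Continuous.intervalIntegrable (by fun_prop) _ _
    · apply Continuous.intervalIntegrable
      apply continuous_finset_sum
      intro k _
      fun_prop
  -- Step 3 : lower bound for the weighted integral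
  set B : ℝ := ∫ t in (0:ℝ)..(4*Real.pi/Δ),
      (1 - Real.cos ((Δ/2)*t)) * ‖∑ j, c j * Complex.exp (Complex.I * t * (x j : ℂ))‖^2 with hBdef
  have hBre : B = ∑ j, ∑ k, (c j * (starRingEnd ℂ) (c k) *
      (∫ t in (0:ℝ)..(4*Real.pi/Δ),
        ((1 - Real.cos ((Δ/2)*t) : ℝ) : ℂ)
          * Complex.exp (Complex.I * t * ((x j - x k : ℝ) : ℂ)))).re := by
    have := congrArg Complex.re key
    rw [Complex.ofReal_re] at this
    rw [this, Complex.re_sum]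
    exact Finset.sum_congr rfl fun j _ => Complex.re_sum _ _
  -- diagonal terms
  have hdiag : ∀ j : Fin ℓ, (c j * (starRingEnd ℂ) (c j) *
      (∫ t in (0:ℝ)..(4*Real.pi/Δ),
        ((1 - Real.cos ((Δ/2)*t) : ℝ) : ℂ)
          * Complex.exp (Complex.I * t * ((x j - x j : ℝ) : ℂ)))).re
      = ‖c j‖^2 * (4*Real.pi/Δ) := by
    intro j
    rw [sub_self, W_zero hΔ, Complex.mul_conj, Complex.normSq_eq_norm_sq,
      ← Complex.ofReal_mul, Complex.ofReal_re]
  -- off-diagonal terms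
  have hoff : ∀ j : Fin ℓ, ∀ k ∈ Finset.univ.erase j,
      -(‖c j‖ * ‖c k‖ * (2*Δ/(3*(x j - x k)^2)))
      ≤ (c j * (starRingEnd ℂ) (c k) *
        (∫ t in (0:ℝ)..(4*Real.pi/Δ),
          ((1 - Real.cos ((Δ/2)*t) : ℝ) : ℂ)
            * Complex.exp (Complex.I * t * ((x j - x k : ℝ) : ℂ)))).re := by
    intro j k hk
    have hne : j ≠ k := fun h => (Finset.mem_erase.mp hk).1 h.symm
    have hsepjk : Δ ≤ |x j - x k| := by
      have h1 := hsep j k hne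
      rw [wdist_eq_sarg] at h1
      exact h1.trans (abs_sarg_le _)
    set z := c j * (starRingEnd ℂ) (c k) *
        (∫ t in (0:ℝ)..(4*Real.pi/Δ),
          ((1 - Real.cos ((Δ/2)*t) : ℝ) : ℂ)
            * Complex.exp (Complex.I * t * ((x j - x k : ℝ) : ℂ))) with hz
    have h2 : ‖z‖ ≤ ‖c j‖ * ‖c k‖ * (2*Δ/(3*(x j - x k)^2)) := by
      rw [hz, norm_mul, norm_mul]
      have hck : ‖(starRingEnd ℂ) (c k)‖ = ‖c k‖ := RCLike.norm_conj _
      rw [hck]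
      exact mul_le_mul_of_nonneg_left (W_bound hΔ hsepjk)
        (mul_nonneg (norm_nonneg _) (norm_nonneg _))
    have h3 : -‖z‖ ≤ z.re := by
      have := (abs_le.mp (Complex.abs_re_le_norm z)).1
      linarith
    linarith
  -- assemble lower bound on B
  have hBlow : (4*Real.pi/Δ) * (∑ j, ‖c j‖^2)
      - (∑ j, ∑ k ∈ Finset.univ.erase j, ‖c j‖ * ‖c k‖ * (2*Δ/(3*(x j - x k)^2))) ≤ B := by
    rw [hBre]
    have hsplit : ∀ j : Fin ℓ,
        ‖c j‖^2 * (4*Real.pi/Δ)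
          - (∑ k ∈ Finset.univ.erase j, ‖c j‖ * ‖c k‖ * (2*Δ/(3*(x j - x k)^2)))
        ≤ ∑ k, (c j * (starRingEnd ℂ) (c k) *
          (∫ t in (0:ℝ)..(4*Real.pi/Δ),
            ((1 - Real.cos ((Δ/2)*t) : ℝ) : ℂ)
              * Complex.exp (Complex.I * t * ((x j - x k : ℝ) : ℂ)))).re := by
      intro j
      rw [← Finset.sum_erase_add _ _ (Finset.mem_univ j), hdiag j]
      have hsum_off : -(∑ k ∈ Finset.univ.erase j, ‖c j‖ * ‖c k‖ * (2*Δ/(3*(x j - x k)^2)))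
          ≤ ∑ k ∈ Finset.univ.erase j, (c j * (starRingEnd ℂ) (c k) *
            (∫ t in (0:ℝ)..(4*Real.pi/Δ),
              ((1 - Real.cos ((Δ/2)*t) : ℝ) : ℂ)
                * Complex.exp (Complex.I * t * ((x j - x k : ℝ) : ℂ)))).re := by
        rw [← Finset.sum_neg_distrib]
        exact Finset.sum_le_sum (hoff j)
      linarith
    calc (4*Real.pi/Δ) * (∑ j, ‖c j‖^2)
        - (∑ j, ∑ k ∈ Finset.univ.erase j, ‖c j‖ * ‖c k‖ * (2*Δ/(3*(x j - x k)^2)))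
        = ∑ j, (‖c j‖^2 * (4*Real.pi/Δ)
            - (∑ k ∈ Finset.univ.erase j, ‖c j‖ * ‖c k‖ * (2*Δ/(3*(x j - x k)^2)))) := by
          rw [Finset.sum_sub_distrib, Finset.mul_sum]
          congr 1
          exact Finset.sum_congr rfl fun j _ => by ring
      _ ≤ _ := Finset.sum_le_sum fun j _ => hsplit j
  -- bound the off-diagonal double sum
  have hOff : (∑ j, ∑ k ∈ Finset.univ.erase j, ‖c j‖ * ‖c k‖ * (2*Δ/(3*(x j - x k)^2)))
      ≤ (8/(3*Δ)) * (∑ j, ‖c j‖^2) := by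
    have hpt : ∀ j : Fin ℓ, ∀ k ∈ Finset.univ.erase j,
        ‖c j‖ * ‖c k‖ * (2*Δ/(3*(x j - x k)^2))
        ≤ ‖c j‖^2 * ((Δ/3) * (1/(x j - x k)^2)) + ‖c k‖^2 * ((Δ/3) * (1/(x j - x k)^2)) := by
      intro j k hk
      have hne : j ≠ k := fun h => (Finset.mem_erase.mp hk).1 h.symm
      have hsepjk : Δ ≤ |x j - x k| := by
        have h1 := hsep j k hne
        rw [wdist_eq_sarg] at h1
        exact h1.trans (abs_sarg_le _)
      have hd : (0:ℝ) < (x j - x k)^2 := by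
        rw [← _root_.sq_abs]
        exact pow_pos (lt_of_lt_of_le hΔ hsepjk) 2
      have h2ab : 2 * (‖c j‖ * ‖c k‖) ≤ ‖c j‖^2 + ‖c k‖^2 := by
        nlinarith [sq_nonneg (‖c j‖ - ‖c k‖)]
      have hw : (0:ℝ) ≤ (Δ/3)*(1/(x j - x k)^2) := by positivity
      have hrw : 2*Δ/(3*(x j - x k)^2) = 2*((Δ/3)*(1/(x j - x k)^2)) := by
        field_simp
      calc ‖c j‖ * ‖c k‖ * (2*Δ/(3*(x j - x k)^2))
          = (2 * (‖c j‖ * ‖c k‖)) * ((Δ/3)*(1/(x j - x k)^2)) := by rw [hrw]; ring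
        _ ≤ (‖c j‖^2 + ‖c k‖^2) * ((Δ/3)*(1/(x j - x k)^2)) :=
            mul_le_mul_of_nonneg_right h2ab hw
        _ = ‖c j‖^2 * ((Δ/3) * (1/(x j - x k)^2)) + ‖c k‖^2 * ((Δ/3) * (1/(x j - x k)^2)) := by
            ring
    have hcount : ∀ j : Fin ℓ,
        ∑ k ∈ Finset.univ.erase j, ‖c j‖^2 * ((Δ/3) * (1/(x j - x k)^2))
        ≤ ‖c j‖^2 * (4/(3*Δ)) := by
      intro j
      rw [← Finset.mul_sum, ← Finset.mul_sum]
      have := circle_counting Δ x hΔ hsep j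
      calc ‖c j‖^2 * ((Δ/3) * ∑ k ∈ Finset.univ.erase j, 1/(x j - x k)^2)
          ≤ ‖c j‖^2 * ((Δ/3) * (4/Δ^2)) := by
            apply mul_le_mul_of_nonneg_left _ (by positivity)
            exact mul_le_mul_of_nonneg_left this (by positivity)
        _ = ‖c j‖^2 * (4/(3*Δ)) := by
            congr 1
            field_simp
    have hcount2 : ∀ k : Fin ℓ,
        ∑ j ∈ Finset.univ.erase k, ‖c k‖^2 * ((Δ/3) * (1/(x j - x k)^2))
        ≤ ‖c k‖^2 * (4/(3*Δ)) := by
      intro k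
      have heq : ∑ j ∈ Finset.univ.erase k, ‖c k‖^2 * ((Δ/3) * (1/(x j - x k)^2))
          = ∑ j ∈ Finset.univ.erase k, ‖c k‖^2 * ((Δ/3) * (1/(x k - x j)^2)) := by
        refine Finset.sum_congr rfl fun j _ => ?_
        rw [show (x j - x k)^2 = (x k - x j)^2 from by ring]
      rw [heq, ← Finset.mul_sum, ← Finset.mul_sum]
      have := circle_counting Δ x hΔ hsep k
      calc ‖c k‖^2 * ((Δ/3) * ∑ j ∈ Finset.univ.erase k, 1/(x k - x j)^2)
          ≤ ‖c k‖^2 * ((Δ/3) * (4/Δ^2)) := by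
            apply mul_le_mul_of_nonneg_left _ (by positivity)
            exact mul_le_mul_of_nonneg_left this (by positivity)
        _ = ‖c k‖^2 * (4/(3*Δ)) := by
            congr 1
            field_simp
    calc ∑ j, ∑ k ∈ Finset.univ.erase j, ‖c j‖ * ‖c k‖ * (2*Δ/(3*(x j - x k)^2))
        ≤ ∑ j, ∑ k ∈ Finset.univ.erase j,
            (‖c j‖^2 * ((Δ/3) * (1/(x j - x k)^2)) + ‖c k‖^2 * ((Δ/3) * (1/(x j - x k)^2))) :=
          Finset.sum_le_sum fun j _ => Finset.sum_le_sum (hpt j)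
      _ = (∑ j, ∑ k ∈ Finset.univ.erase j, ‖c j‖^2 * ((Δ/3) * (1/(x j - x k)^2)))
          + (∑ j, ∑ k ∈ Finset.univ.erase j, ‖c k‖^2 * ((Δ/3) * (1/(x j - x k)^2))) := by
          rw [← Finset.sum_add_distrib]
          exact Finset.sum_congr rfl fun j _ => Finset.sum_add_distrib
      _ = (∑ j, ∑ k ∈ Finset.univ.erase j, ‖c j‖^2 * ((Δ/3) * (1/(x j - x k)^2)))
          + (∑ k, ∑ j ∈ Finset.univ.erase k, ‖c k‖^2 * ((Δ/3) * (1/(x j - x k)^2))) := by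
          rw [sum_erase_swap (fun j k => ‖c k‖^2 * ((Δ/3) * (1/(x j - x k)^2)))]
      _ ≤ (∑ j, ‖c j‖^2 * (4/(3*Δ))) + (∑ k, ‖c k‖^2 * (4/(3*Δ))) :=
          add_le_add (Finset.sum_le_sum fun j _ => hcount j)
            (Finset.sum_le_sum fun k _ => hcount2 k)
      _ = (8/(3*Δ)) * (∑ j, ‖c j‖^2) := by
          rw [← Finset.sum_mul]
          ring
  -- final assembly
  have hB2 : (4*Real.pi/Δ) * (∑ j, ‖c j‖^2) - (8/(3*Δ)) * (∑ j, ‖c j‖^2) ≤ B := by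
    linarith
  have hI : ((4*Real.pi/Δ) * (∑ j, ‖c j‖^2) - (8/(3*Δ)) * (∑ j, ‖c j‖^2)) / 2
      ≤ ∫ t in (0:ℝ)..(4*Real.pi/Δ),
          ‖∑ j, c j * Complex.exp (Complex.I * t * (x j : ℂ))‖^2 := by
    rw [hBdef] at hB2
    linarith [step1]
  have hfinal : (1/2 - 1/(3*Real.pi)) * (∑ j, ‖c j‖^2)
      = (Δ/(4*Real.pi)) * (((4*Real.pi/Δ) * (∑ j, ‖c j‖^2) - (8/(3*Δ)) * (∑ j, ‖c j‖^2)) / 2) := by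
    field_simp
    ring
  rw [hfinal]
  exact mul_le_mul_of_nonneg_left hI (by positivity)
end SalemAux
end

section
/- Let T: [0,1] → ℝ be a nonnegative exponential sum of degree at most w with real frequencies bounded by τNΔ ≤ 2π in absolute value, where N ≥ 1 is an integer. Then |∫_0^1 T(u) du − (1/N) Σ_{k=0}^N T(k/N)| ≤ (C ℓ^5 / N) ‖T‖_{L∞[0,1]} for w = ℓ²−ℓ+1 and an absolute constant C (Riemann sum approximation via Bernstein's inequality). -/
open Complex MeasureTheory Set Finset intervalIntegral

noncomputable section

namespace RSA

variable {w : ℕ} (b : Fin w → ℂ) (lam : Fin w → ℝ)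

/-- k-th derivative of the exponential sum, complex form. -/
def phi (k : ℕ) (u : ℝ) : ℂ :=
  ∑ j, b j * (Complex.I * lam j) ^ k * Complex.exp (Complex.I * u * lam j)

/-- k-th derivative of T, real form. -/
def t (k : ℕ) (u : ℝ) : ℝ := (phi b lam k u).re

lemma hasDerivAt_phi (k : ℕ) (u : ℝ) :
    HasDerivAt (phi b lam k) (phi b lam (k + 1) u) u := by
  unfold phi
  refine HasDerivAt.fun_sum (𝕜 := ℝ) (F := ℂ) fun j _ => ?_
  have h2 : HasDerivAt (fun z : ℂ => Complex.exp (Complex.I * z * lam j))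
      (Complex.exp (Complex.I * (u : ℂ) * lam j) * (Complex.I * lam j)) (u : ℂ) := by
    have hlin : HasDerivAt (fun z : ℂ => Complex.I * z * (lam j : ℂ))
        (Complex.I * (lam j : ℂ)) (u : ℂ) := by
      simpa [mul_comm, mul_left_comm, mul_assoc] using
        ((hasDerivAt_id ((u : ℝ) : ℂ)).const_mul Complex.I).mul_const ((lam j : ℝ) : ℂ)
    simpa using hlin.cexp
  have h1 : HasDerivAt (fun u : ℝ => Complex.exp (Complex.I * u * lam j))
      (Complex.exp (Complex.I * (u : ℂ) * lam j) * (Complex.I * lam j)) u := h2.comp_ofReal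
  have := (h1.const_mul (b j * (Complex.I * lam j) ^ k))
  convert this using 1
  · rfl
  ring

lemma hasDerivAt_t (k : ℕ) (u : ℝ) :
    HasDerivAt (t b lam k) (t b lam (k + 1) u) u := by
  have h := hasDerivAt_phi b lam k u
  have : HasDerivAt (fun x => (phi b lam k x).re) ((phi b lam (k+1) u).re) u := by
    exact Complex.reCLM.hasFDerivAt.comp_hasDerivAt u h
  exact this

lemma continuous_t (k : ℕ) : Continuous (t b lam k) := by
  have : Differentiable ℝ (t b lam k) := fun u => (hasDerivAt_t b lam k u).differentiableAt
  exact this.continuous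

lemma ode_complex (q : ℕ) (u : ℝ) :
    ∑ s ∈ (Finset.univ : Finset (Fin w)).powerset,
      ((∏ r ∈ s, ((lam r : ℂ)) ^ 2) * phi b lam (2 * (w - s.card) + q) u) = 0 := by
  unfold phi
  simp only [Finset.mul_sum]
  rw [Finset.sum_comm]
  refine Finset.sum_eq_zero fun j _ => ?_
  have key : ∑ s ∈ (Finset.univ : Finset (Fin w)).powerset,
      (∏ r ∈ s, ((lam r : ℂ)) ^ 2) * ((Complex.I * lam j) ^ 2) ^ (w - s.card) = 0 := by
    have h := Finset.prod_add (fun r : Fin w => ((lam r : ℂ)) ^ 2)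
      (fun _ : Fin w => (Complex.I * lam j) ^ 2) Finset.univ
    have hz : ∏ r ∈ (Finset.univ : Finset (Fin w)),
        (((lam r : ℂ)) ^ 2 + (Complex.I * lam j) ^ 2) = 0 := by
      apply Finset.prod_eq_zero (Finset.mem_univ j)
      have : (Complex.I * (lam j : ℂ)) ^ 2 = -((lam j : ℂ) ^ 2) := by
        rw [mul_pow, Complex.I_sq]; ring
      rw [this]; ring
    rw [hz] at h
    have h2 : ∑ s ∈ (Finset.univ : Finset (Fin w)).powerset,
        (∏ r ∈ s, ((lam r : ℂ)) ^ 2) * ((Complex.I * lam j) ^ 2) ^ (w - s.card) =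
        ∑ s ∈ (Finset.univ : Finset (Fin w)).powerset,
        (∏ r ∈ s, ((lam r : ℂ)) ^ 2) * ∏ _r ∈ Finset.univ \ s, (Complex.I * lam j) ^ 2 := by
      refine Finset.sum_congr rfl fun s hs => ?_
      congr 1
      rw [Finset.prod_const]
      congr 1
      rw [Finset.card_sdiff_of_subset (Finset.mem_powerset.mp hs), Finset.card_univ, Fintype.card_fin]
    rw [h2]
    exact h.symm
  calc ∑ s ∈ (Finset.univ : Finset (Fin w)).powerset,
        (∏ r ∈ s, ((lam r : ℂ)) ^ 2) *
          (b j * (Complex.I * lam j) ^ (2 * (w - s.card) + q) * Complex.exp (Complex.I * u * lam j))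
      = (b j * (Complex.I * lam j) ^ q * Complex.exp (Complex.I * u * lam j)) *
          ∑ s ∈ (Finset.univ : Finset (Fin w)).powerset,
            (∏ r ∈ s, ((lam r : ℂ)) ^ 2) * ((Complex.I * lam j) ^ 2) ^ (w - s.card) := by
        rw [Finset.mul_sum]
        refine Finset.sum_congr rfl fun s _ => ?_
        rw [pow_add, pow_mul]
        ring
    _ = 0 := by rw [key, mul_zero]


lemma ode_real (q : ℕ) (u : ℝ) :
    ∑ s ∈ (Finset.univ : Finset (Fin w)).powerset,
      (∏ r ∈ s, (lam r) ^ 2) * t b lam (2 * (w - s.card) + q) u = 0 := by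
  have h := congrArg Complex.re (ode_complex b lam q u)
  simpa [Complex.re_sum, t, ← Complex.ofReal_pow, ← Complex.ofReal_prod,
    Complex.re_ofReal_mul] using h

lemma rolle_step {K n : ℕ} {α β : ℝ} (zs : Fin (n + 1) → ℝ) (hm : StrictMono zs)
    (hmem : ∀ i, zs i ∈ Icc α β) (hzero : ∀ i, t b lam K (zs i) = 0) :
    ∃ zs' : Fin n → ℝ, StrictMono zs' ∧ (∀ i, zs' i ∈ Icc α β) ∧
      ∀ i, t b lam (K + 1) (zs' i) = 0 := by
  have hex : ∀ i : Fin n, ∃ c ∈ Ioo (zs i.castSucc) (zs i.succ), t b lam (K + 1) c = 0 := by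
    intro i
    have hlt : zs i.castSucc < zs i.succ := hm (Fin.castSucc_lt_succ (i := i))
    exact exists_hasDerivAt_eq_zero hlt ((continuous_t b lam K).continuousOn)
      ((hzero _).trans (hzero _).symm)
      (fun x _ => hasDerivAt_t b lam K x)
  choose zs' hzs' hz0 using hex
  refine ⟨zs', ?_, ?_, hz0⟩
  · intro i j hij
    have h1 : zs' i < zs i.succ := (hzs' i).2
    have h2 : zs j.castSucc < zs' j := (hzs' j).1
    have h3 : zs i.succ ≤ zs j.castSucc := by
      apply hm.monotone
      simp only [Fin.le_def, Fin.val_succ, Fin.coe_castSucc]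
      exact hij
    linarith
  · intro i
    have h1 := hzs' i
    have h2 := hmem i.castSucc
    have h3 := hmem i.succ
    simp only [Set.mem_Ioo] at h1
    simp only [Set.mem_Icc] at h2 h3 ⊢
    constructor <;> linarith

lemma bernoulli_aux {x : ℝ} {m : ℕ} (hm : 1 ≤ m) (hx : 0 ≤ x) (hxw : x * m ≤ 1/3) :
    (1 + x) ^ m ≤ 3/2 := by
  have hm' : (1 : ℝ) ≤ m := by exact_mod_cast hm
  have hx3 : x ≤ 1/3 := by nlinarith
  have h1 : 1 - x * m ≤ (1 - x) ^ m := by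
    have := one_add_mul_le_pow (a := -x) (by linarith) m
    calc 1 - x * m = 1 + (m : ℝ) * (-x) := by ring
    _ ≤ (1 + -x) ^ m := this
    _ = (1 - x) ^ m := by ring_nf
  have h2 : (1 + x) ^ m * (1 - x) ^ m = (1 - x ^ 2) ^ m := by
    rw [← mul_pow]; ring_nf
  have h3 : (1 - x ^ 2 : ℝ) ^ m ≤ 1 := by
    apply pow_le_one₀ <;> nlinarith
  have h4 : (2/3 : ℝ) ≤ (1 - x) ^ m := by linarith
  have h5 : (0:ℝ) ≤ (1 + x) ^ m := by positivity
  nlinarith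

lemma dvp (hlam : ∀ i, (lam i) ^ 2 ≤ 4 * Real.pi ^ 2) {α β : ℝ} (hab : α ≤ β)
    (hw : 1 ≤ w) (hh : β - α ≤ 1 / (11 * w))
    (zs : Fin (2 * w) → ℝ) (hm : StrictMono zs) (hmem : ∀ i, zs i ∈ Set.Icc α β)
    (hzero : ∀ i, t b lam 1 (zs i) = 0) :
    ∀ x ∈ Set.Icc α β, t b lam 1 x = 0 := by
  set hI := β - α with hIdef
  have hI0 : 0 ≤ hI := sub_nonneg.mpr hab
  set Sk : ℕ → ℝ := fun k => sSup ((fun x => |t b lam k x|) '' Set.Icc α β) with hSk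
  have hne : (Set.Icc α β).Nonempty := ⟨α, by constructor <;> linarith⟩
  have hbdd : ∀ k, BddAbove ((fun x => |t b lam k x|) '' Set.Icc α β) := fun k =>
    (isCompact_Icc.image_of_continuousOn ((continuous_t b lam k).abs.continuousOn)).bddAbove
  have hle : ∀ k, ∀ x ∈ Set.Icc α β, |t b lam k x| ≤ Sk k := fun k x hx =>
    le_csSup (hbdd k) ⟨x, hx, rfl⟩
  have hSk0 : ∀ k, 0 ≤ Sk k := fun k =>
    le_trans (abs_nonneg _) (hle k α ⟨le_refl α, hab⟩)
  have hSkle : ∀ k c, (∀ x ∈ Set.Icc α β, |t b lam k x| ≤ c) → Sk k ≤ c := fun k c h =>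
    csSup_le (hne.image _) (by rintro y ⟨x, hx, rfl⟩; exact h x hx)
  -- tuples of zeros at higher orders
  have tuples : ∀ k : ℕ, k ≤ 2 * w → ∃ zs' : Fin (2 * w - k) → ℝ, StrictMono zs' ∧
      (∀ i, zs' i ∈ Set.Icc α β) ∧ ∀ i, t b lam (1 + k) (zs' i) = 0 := by
    intro k
    induction k with
    | zero => exact fun _ => ⟨zs, hm, hmem, fun i => hzero i⟩
    | succ k ih =>
      intro hk1
      obtain ⟨zs', h1, h2, h3⟩ := ih (by omega)
      have e : 2 * w - k = (2 * w - (k + 1)) + 1 := by omega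
      have hm2 : StrictMono (fun i : Fin ((2 * w - (k+1)) + 1) => zs' (Fin.cast e.symm i)) := by
        intro i j hij
        apply h1
        simp only [Fin.lt_def, Fin.coe_cast] at hij ⊢
        exact hij
      obtain ⟨zs'', g1, g2, g3⟩ := rolle_step b lam
        (fun i : Fin ((2 * w - (k+1)) + 1) => zs' (Fin.cast e.symm i)) hm2
        (fun i => h2 _) (fun i => h3 _)
      exact ⟨zs'', g1, g2, fun i => g3 i⟩
  have zeros : ∀ k : ℕ, k ≤ 2 * w - 1 → ∃ z ∈ Set.Icc α β, t b lam (1 + k) z = 0 := by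
    intro k hk
    obtain ⟨zs', _, h2, h3⟩ := tuples k (by omega)
    have : 0 < 2 * w - k := by omega
    exact ⟨zs' ⟨0, this⟩, h2 _, h3 _⟩
  have step : ∀ k : ℕ, k ≤ 2 * w - 1 → Sk (1 + k) ≤ hI * Sk (1 + k + 1) := by
    intro k hk
    apply hSkle
    intro x hx
    obtain ⟨z, hz, hz0⟩ := zeros k hk
    have hftc : ∫ y in z..x, t b lam (1 + k + 1) y = t b lam (1 + k) x - t b lam (1 + k) z :=
      integral_eq_sub_of_hasDerivAt (fun y _ => hasDerivAt_t b lam (1 + k) y)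
        ((continuous_t b lam (1 + k + 1)).intervalIntegrable _ _)
    have hsub : Set.uIoc z x ⊆ Set.Icc α β := by
      refine Set.Subset.trans Set.Ioc_subset_Icc_self ?_
      exact (Set.ordConnected_Icc).uIcc_subset hz hx
    have hboundI : |∫ y in z..x, t b lam (1 + k + 1) y| ≤ Sk (1 + k + 1) * |x - z| := by
      rw [← Real.norm_eq_abs]
      exact intervalIntegral.norm_integral_le_of_norm_le_const
        (C := Sk (1 + k + 1)) (fun y hy => by
          rw [Real.norm_eq_abs]; exact hle (1 + k + 1) y (hsub hy))
    have hxz : |x - z| ≤ hI := by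
      rw [abs_sub_le_iff]
      simp only [Set.mem_Icc] at hx hz
      constructor <;> [skip; skip] <;> simp [hIdef] <;> linarith
    calc |t b lam (1 + k) x| = |∫ y in z..x, t b lam (1 + k + 1) y| := by
          rw [hftc, hz0, sub_zero]
      _ ≤ Sk (1 + k + 1) * |x - z| := hboundI
      _ ≤ Sk (1 + k + 1) * hI := by
          exact mul_le_mul_of_nonneg_left hxz (hSk0 _)
      _ = hI * Sk (1 + k + 1) := by ring
  have down : ∀ j : ℕ, j ≤ 2 * w → Sk (1 + (2 * w - j)) ≤ hI ^ j * Sk (1 + 2 * w) := by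
    intro j
    induction j with
    | zero => intro _; simp
    | succ j ih =>
      intro hj
      have h1 := step (2 * w - (j + 1)) (by omega)
      rw [show 1 + (2 * w - (j + 1)) + 1 = 1 + (2 * w - j) by omega] at h1
      calc Sk (1 + (2 * w - (j + 1))) ≤ hI * Sk (1 + (2 * w - j)) := h1
        _ ≤ hI * (hI ^ j * Sk (1 + 2 * w)) :=
            mul_le_mul_of_nonneg_left (ih (by omega)) hI0
        _ = hI ^ (j + 1) * Sk (1 + 2 * w) := by ring
  -- the closing ODE bound
  have hKsum : ∑ s ∈ (Finset.univ : Finset (Fin w)).powerset,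
      (∏ r ∈ s, (lam r) ^ 2) * hI ^ (2 * s.card) =
      ∏ r ∈ (Finset.univ : Finset (Fin w)), ((lam r) ^ 2 * hI ^ 2 + 1) := by
    rw [Finset.prod_add]
    refine Finset.sum_congr rfl fun s hs => ?_
    rw [Finset.prod_const_one, mul_one, Finset.prod_mul_distrib, Finset.prod_const, pow_mul]
  have hwr : (1:ℝ) ≤ (w:ℝ) := by exact_mod_cast hw
  have hprodle : ∏ r ∈ (Finset.univ : Finset (Fin w)), ((lam r) ^ 2 * hI ^ 2 + 1) ≤ 3/2 := by
    have hstep : ∏ r ∈ (Finset.univ : Finset (Fin w)), ((lam r) ^ 2 * hI ^ 2 + 1) ≤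
        (1 + 4 * Real.pi ^ 2 * hI ^ 2) ^ w := by
      calc ∏ r ∈ (Finset.univ : Finset (Fin w)), ((lam r) ^ 2 * hI ^ 2 + 1)
          ≤ ∏ _r ∈ (Finset.univ : Finset (Fin w)), (1 + 4 * Real.pi ^ 2 * hI ^ 2) := by
            apply Finset.prod_le_prod
            · intro i _; positivity
            · intro i _
              have := hlam i
              nlinarith [sq_nonneg hI]
        _ = (1 + 4 * Real.pi ^ 2 * hI ^ 2) ^ w := by
            rw [Finset.prod_const, Finset.card_univ, Fintype.card_fin]
    refine le_trans hstep (bernoulli_aux hw (by positivity) ?_)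
    -- 4π² hI² w ≤ 1/3
    have h1 : hI ^ 2 ≤ (1 / (11 * (w:ℝ))) ^ 2 := by
      apply pow_le_pow_left₀ hI0 hh
    have hpi := Real.pi_lt_d2
    have hpi0 := Real.pi_pos
    have hw0 : (0:ℝ) < (w:ℝ) := by linarith
    have h2 : (1 / (11 * (w:ℝ))) ^ 2 * (w:ℝ) = 1 / (121 * (w:ℝ)) := by
      field_simp; ring
    have h3 : 4 * Real.pi ^ 2 * hI ^ 2 * (w:ℝ) ≤ 4 * Real.pi ^ 2 / (121 * (w:ℝ)) := by
      have := mul_le_mul_of_nonneg_right h1 (le_of_lt hw0)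
      rw [h2] at this
      have hpos : (0:ℝ) < 4 * Real.pi ^ 2 := by positivity
      calc 4 * Real.pi ^ 2 * hI ^ 2 * (w:ℝ) = 4 * Real.pi ^ 2 * (hI ^ 2 * (w:ℝ)) := by ring
        _ ≤ 4 * Real.pi ^ 2 * (1 / (121 * (w:ℝ))) := by
            exact mul_le_mul_of_nonneg_left this (le_of_lt hpos)
        _ = 4 * Real.pi ^ 2 / (121 * (w:ℝ)) := by ring
    have h4 : 4 * Real.pi ^ 2 / (121 * (w:ℝ)) ≤ 4 * Real.pi ^ 2 / 121 := by
      apply div_le_div_of_nonneg_left (by positivity) (by norm_num) ?_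
      nlinarith
    have h5 : 4 * Real.pi ^ 2 / 121 ≤ 1/3 := by nlinarith
    linarith
  -- sum over nonempty subsets is at most 1/2
  have hmem0 : (∅ : Finset (Fin w)) ∈ (Finset.univ : Finset (Fin w)).powerset :=
    Finset.mem_powerset.mpr (Finset.empty_subset _)
  have hKK : ∑ s ∈ ((Finset.univ : Finset (Fin w)).powerset).erase ∅,
      (∏ r ∈ s, (lam r) ^ 2) * hI ^ (2 * s.card) ≤ 1/2 := by
    have hsplit := Finset.add_sum_erase _
      (fun s : Finset (Fin w) => (∏ r ∈ s, (lam r) ^ 2) * hI ^ (2 * s.card)) hmem0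
    simp only [Finset.prod_empty, Finset.card_empty, mul_zero, pow_zero, one_mul] at hsplit
    have : (1:ℝ) + ∑ s ∈ ((Finset.univ : Finset (Fin w)).powerset).erase ∅,
        (∏ r ∈ s, (lam r) ^ 2) * hI ^ (2 * s.card) ≤ 3/2 := by
      rw [hsplit, hKsum]; exact hprodle
    linarith
  -- closing bound
  have hclose : Sk (1 + 2 * w) ≤ (1/2) * Sk (1 + 2 * w) := by
    apply hSkle
    intro x hx
    have hode := ode_real b lam 1 x
    rw [← Finset.add_sum_erase _ _ hmem0] at hode
    simp only [Finset.prod_empty, Finset.card_empty, one_mul] at hode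
    have hidx : 2 * (w - 0) + 1 = 1 + 2 * w := by omega
    rw [hidx] at hode
    have hmain : t b lam (1 + 2 * w) x = - ∑ s ∈ ((Finset.univ : Finset (Fin w)).powerset).erase ∅,
        (∏ r ∈ s, (lam r) ^ 2) * t b lam (2 * (w - s.card) + 1) x := by linarith
    rw [hmain, abs_neg]
    calc |∑ s ∈ ((Finset.univ : Finset (Fin w)).powerset).erase ∅,
          (∏ r ∈ s, (lam r) ^ 2) * t b lam (2 * (w - s.card) + 1) x|
        ≤ ∑ s ∈ ((Finset.univ : Finset (Fin w)).powerset).erase ∅,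
          |(∏ r ∈ s, (lam r) ^ 2) * t b lam (2 * (w - s.card) + 1) x| :=
          Finset.abs_sum_le_sum_abs _ _
      _ ≤ ∑ s ∈ ((Finset.univ : Finset (Fin w)).powerset).erase ∅,
          (∏ r ∈ s, (lam r) ^ 2) * hI ^ (2 * s.card) * Sk (1 + 2 * w) := by
          apply Finset.sum_le_sum
          intro s hs
          have hcard : s.card ≤ w := by
            have hsub := Finset.mem_powerset.mp (Finset.mem_erase.mp hs).2
            calc s.card ≤ (Finset.univ : Finset (Fin w)).card := Finset.card_le_card hsub
              _ = w := by rw [Finset.card_univ, Fintype.card_fin]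
          have hc0 : (0:ℝ) ≤ ∏ r ∈ s, (lam r) ^ 2 :=
            Finset.prod_nonneg fun r _ => sq_nonneg _
          have hidx2 : 2 * (w - s.card) + 1 = 1 + (2 * w - 2 * s.card) := by omega
          rw [abs_mul, _root_.abs_of_nonneg hc0, hidx2]
          have hd := down (2 * s.card) (by omega)
          rw [show 2 * w - 2 * s.card = 2 * w - 2 * s.card from rfl] at hd
          have hb := le_trans (hle _ x hx) hd
          calc (∏ r ∈ s, (lam r) ^ 2) * |t b lam (1 + (2 * w - 2 * s.card)) x|
              ≤ (∏ r ∈ s, (lam r) ^ 2) * (hI ^ (2 * s.card) * Sk (1 + 2 * w)) :=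
                mul_le_mul_of_nonneg_left hb hc0
            _ = (∏ r ∈ s, (lam r) ^ 2) * hI ^ (2 * s.card) * Sk (1 + 2 * w) := by ring
      _ = (∑ s ∈ ((Finset.univ : Finset (Fin w)).powerset).erase ∅,
          (∏ r ∈ s, (lam r) ^ 2) * hI ^ (2 * s.card)) * Sk (1 + 2 * w) := by
          rw [Finset.sum_mul]
      _ ≤ (1/2) * Sk (1 + 2 * w) :=
          mul_le_mul_of_nonneg_right hKK (hSk0 _)
  have hfin0 : Sk (1 + 2 * w) = 0 := le_antisymm (by linarith) (hSk0 _)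
  have hS1 : Sk 1 ≤ 0 := by
    have hd := down (2 * w) (le_refl _)
    rw [show 2 * w - 2 * w = 0 by omega] at hd
    rw [hfin0, mul_zero] at hd
    exact hd
  intro x hx
  have := le_trans (hle 1 x hx) hS1
  exact abs_nonpos_iff.mp this


lemma no_zero_piece (S : ℝ) (hpos : ∀ u, 0 ≤ t b lam 0 u)
    {α β : ℝ} (hab : α ≤ β) (hsub : Set.Icc α β ⊆ Set.Icc 0 1)
    (hS : ∀ x ∈ Set.Icc (0:ℝ) 1, |t b lam 0 x| ≤ S)
    (hnz : ∀ x ∈ Set.Ioo α β, t b lam 1 x ≠ 0) :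
    ∫ x in α..β, |t b lam 1 x| ≤ S := by
  have hScont : ∀ x ∈ Set.Icc α β, t b lam 0 x ≤ S := fun x hx =>
    le_trans (le_abs_self _) (hS x (hsub hx))
  have hαm : α ∈ Set.Icc α β := ⟨le_refl _, hab⟩
  have hβm : β ∈ Set.Icc α β := ⟨hab, le_refl _⟩
  have hftc : ∫ x in α..β, t b lam 1 x = t b lam 0 β - t b lam 0 α :=
    integral_eq_sub_of_hasDerivAt (fun y _ => hasDerivAt_t b lam 0 y)
      ((continuous_t b lam 1).intervalIntegrable _ _)
  have hsign : (∀ x ∈ Set.Ioo α β, 0 < t b lam 1 x) ∨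
      (∀ x ∈ Set.Ioo α β, t b lam 1 x < 0) := by
    by_contra hcon
    push_neg at hcon
    obtain ⟨⟨x, hx, hx'⟩, ⟨y, hy, hy'⟩⟩ := hcon
    have hxneg : t b lam 1 x < 0 := lt_of_le_of_ne hx' (hnz x hx)
    have hypos : 0 < t b lam 1 y := lt_of_le_of_ne hy' (Ne.symm (hnz y hy))
    have hivt := intermediate_value_uIcc (a := x) (b := y) (f := t b lam 1)
      ((continuous_t b lam 1).continuousOn)
    have h0 : (0:ℝ) ∈ Set.uIcc (t b lam 1 x) (t b lam 1 y) := by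
      rw [Set.mem_uIcc]; left; constructor <;> linarith
    obtain ⟨c, hc, hc0⟩ := hivt h0
    have hcIoo : c ∈ Set.Ioo α β := (Set.ordConnected_Ioo.uIcc_subset hx hy) hc
    exact hnz c hcIoo hc0
  have hβ0 : (volume : Measure ℝ) {β} = 0 := measure_singleton β
  have hneβ : ∀ᵐ z : ℝ, z ∉ ({β} : Set ℝ) := measure_eq_zero_iff_ae_notMem.mp hβ0
  rcases hsign with hp | hn
  · have hae : ∀ᵐ z : ℝ, z ∈ Set.uIoc α β → |t b lam 1 z| = t b lam 1 z := by
      filter_upwards [hneβ] with z hzβ hz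
      rw [Set.uIoc_of_le hab] at hz
      have : z ∈ Set.Ioo α β := ⟨hz.1, lt_of_le_of_ne hz.2 (by simpa using hzβ)⟩
      exact _root_.abs_of_pos (hp z this)
    rw [intervalIntegral.integral_congr_ae hae, hftc]
    have h1 := hScont β hβm
    have h2 := hpos α
    linarith
  · have hae : ∀ᵐ z : ℝ, z ∈ Set.uIoc α β → |t b lam 1 z| = - t b lam 1 z := by
      filter_upwards [hneβ] with z hzβ hz
      rw [Set.uIoc_of_le hab] at hz
      have : z ∈ Set.Ioo α β := ⟨hz.1, lt_of_le_of_ne hz.2 (by simpa using hzβ)⟩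
      exact abs_of_neg (hn z this)
    rw [intervalIntegral.integral_congr_ae hae, intervalIntegral.integral_neg, hftc]
    have h1 := hScont α hαm
    have h2 := hpos β
    linarith

lemma piece_bound (S : ℝ) (hpos : ∀ u, 0 ≤ t b lam 0 u)
    (hS : ∀ x ∈ Set.Icc (0:ℝ) 1, |t b lam 0 x| ≤ S) :
    ∀ d : ℕ, ∀ α β : ℝ, α ≤ β → Set.Icc α β ⊆ Set.Icc 0 1 →
      ({x ∈ Set.Ioo α β | t b lam 1 x = 0}).Finite →
      ({x ∈ Set.Ioo α β | t b lam 1 x = 0}).ncard ≤ d →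
      ∫ x in α..β, |t b lam 1 x| ≤ (d + 1) * S := by
  intro d
  induction d using Nat.strong_induction_on with
  | _ d ih =>
    intro α β hab hsub hfin hcard
    have hS0 : 0 ≤ S := le_trans (abs_nonneg _) (hS α (hsub ⟨le_refl _, hab⟩))
    by_cases hz : ∃ z ∈ Set.Ioo α β, t b lam 1 z = 0
    · obtain ⟨z, hzIoo, hz0⟩ := hz
      have hzIcc : z ∈ Set.Icc α β := Set.Ioo_subset_Icc_self hzIoo
      have hαz : α ≤ z := hzIcc.1
      have hzβ : z ≤ β := hzIcc.2
      set Z := {x ∈ Set.Ioo α β | t b lam 1 x = 0} with hZ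
      set Z₁ := {x ∈ Set.Ioo α z | t b lam 1 x = 0} with hZ1
      set Z₂ := {x ∈ Set.Ioo z β | t b lam 1 x = 0} with hZ2
      have hZ1sub : Z₁ ⊆ Z := by
        rintro x ⟨hx, hx0⟩
        exact ⟨⟨hx.1, lt_of_lt_of_le hx.2 hzβ⟩, hx0⟩
      have hZ2sub : Z₂ ⊆ Z := by
        rintro x ⟨hx, hx0⟩
        exact ⟨⟨lt_of_le_of_lt hαz hx.1, hx.2⟩, hx0⟩
      have hfin1 : Z₁.Finite := hfin.subset hZ1sub
      have hfin2 : Z₂.Finite := hfin.subset hZ2sub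
      have hdisj : Disjoint Z₁ Z₂ := by
        rw [Set.disjoint_left]
        rintro x ⟨hx, _⟩ ⟨hx', _⟩
        exact absurd (lt_trans hx.2 hx'.1) (lt_irrefl x)
      have hznotin : z ∉ Z₁ ∪ Z₂ := by
        rintro (⟨hx, _⟩ | ⟨hx, _⟩)
        · exact absurd hx.2 (lt_irrefl z)
        · exact absurd hx.1 (lt_irrefl z)
      have hins : insert z (Z₁ ∪ Z₂) ⊆ Z := by
        rintro x (rfl | hx)
        · exact ⟨hzIoo, hz0⟩
        · rcases hx with hx | hx
          · exact hZ1sub hx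
          · exact hZ2sub hx
      have hcount : Z₁.ncard + Z₂.ncard + 1 ≤ d := by
        have e1 : (insert z (Z₁ ∪ Z₂)).ncard = (Z₁ ∪ Z₂).ncard + 1 :=
          Set.ncard_insert_of_notMem hznotin (hfin1.union hfin2)
        have e2 : (Z₁ ∪ Z₂).ncard = Z₁.ncard + Z₂.ncard :=
          Set.ncard_union_eq hdisj hfin1 hfin2
        have e3 : (insert z (Z₁ ∪ Z₂)).ncard ≤ Z.ncard :=
          Set.ncard_le_ncard hins hfin
        omega
      have hd1 : Z₁.ncard < d := by omega
      have hd2 : Z₂.ncard < d := by omega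
      have hsub1 : Set.Icc α z ⊆ Set.Icc 0 1 := fun x hx =>
        hsub ⟨hx.1, le_trans hx.2 hzβ⟩
      have hsub2 : Set.Icc z β ⊆ Set.Icc 0 1 := fun x hx =>
        hsub ⟨le_trans hαz hx.1, hx.2⟩
      have hI1 := ih Z₁.ncard hd1 α z hαz hsub1 hfin1 (le_refl _)
      have hI2 := ih Z₂.ncard hd2 z β hzβ hsub2 hfin2 (le_refl _)
      have hsplit : ∫ x in α..β, |t b lam 1 x| =
          (∫ x in α..z, |t b lam 1 x|) + ∫ x in z..β, |t b lam 1 x| :=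
        (intervalIntegral.integral_add_adjacent_intervals
          (((continuous_t b lam 1).abs).intervalIntegrable _ _)
          (((continuous_t b lam 1).abs).intervalIntegrable _ _)).symm
      rw [hsplit]
      have hc : ((Z₁.ncard : ℝ) + 1) + ((Z₂.ncard : ℝ) + 1) ≤ (d : ℝ) + 1 := by
        have : (Z₁.ncard : ℝ) + (Z₂.ncard : ℝ) + 1 ≤ (d : ℝ) := by exact_mod_cast hcount
        linarith
      calc (∫ x in α..z, |t b lam 1 x|) + ∫ x in z..β, |t b lam 1 x|
          ≤ ((Z₁.ncard : ℝ) + 1) * S + ((Z₂.ncard : ℝ) + 1) * S := add_le_add hI1 hI2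
        _ = (((Z₁.ncard : ℝ) + 1) + ((Z₂.ncard : ℝ) + 1)) * S := by ring
        _ ≤ ((d : ℝ) + 1) * S := mul_le_mul_of_nonneg_right hc hS0
    · push_neg at hz
      have h1 := no_zero_piece b lam S hpos hab hsub hS hz
      have : (1:ℝ) * S ≤ ((d:ℝ) + 1) * S := by
        apply mul_le_mul_of_nonneg_right _ hS0
        have : (0:ℝ) ≤ (d:ℝ) := Nat.cast_nonneg d
        linarith
      linarith

lemma seg (hlam : ∀ i, (lam i) ^ 2 ≤ 4 * Real.pi ^ 2) (hw : 1 ≤ w) (S : ℝ)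
    (hpos : ∀ u, 0 ≤ t b lam 0 u)
    (hS : ∀ x ∈ Set.Icc (0:ℝ) 1, |t b lam 0 x| ≤ S)
    {α β : ℝ} (hab : α ≤ β) (hsub : Set.Icc α β ⊆ Set.Icc 0 1)
    (hh : β - α ≤ 1 / (11 * w)) :
    ∫ x in α..β, |t b lam 1 x| ≤ (2 * w) * S := by
  by_cases hz : ∃ zs : Fin (2 * w) → ℝ, StrictMono zs ∧ (∀ i, zs i ∈ Set.Icc α β) ∧
      ∀ i, t b lam 1 (zs i) = 0
  · obtain ⟨zs, h1, h2, h3⟩ := hz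
    have hzero := dvp b lam hlam hab hw hh zs h1 h2 h3
    have hzint : ∫ x in α..β, |t b lam 1 x| = 0 := by
      have : ∀ x ∈ Set.uIcc α β, |t b lam 1 x| = 0 := by
        intro x hx
        rw [Set.uIcc_of_le hab] at hx
        rw [hzero x hx, abs_zero]
      rw [intervalIntegral.integral_congr this, intervalIntegral.integral_zero]
    rw [hzint]
    have hS0 : 0 ≤ S := le_trans (abs_nonneg _) (hS α (hsub ⟨le_refl _, hab⟩))
    positivity
  · set Z := {x ∈ Set.Ioo α β | t b lam 1 x = 0} with hZdef
    have hZIoo : Z ⊆ Set.Ioo α β := fun x hx => hx.1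
    have hfc : Z.Finite ∧ Z.ncard ≤ 2 * w - 1 := by
      by_contra hcon
      have hbig : ∃ T : Set ℝ, T ⊆ Z ∧ T.Finite ∧ T.ncard = 2 * w := by
        by_cases hfin : Z.Finite
        · have hnc : 2 * w ≤ Z.ncard := by
            rcases not_and_or.mp hcon with h | h
            · exact absurd hfin h
            · omega
          obtain ⟨T, hT, hTcard⟩ := Set.exists_subset_card_eq hnc
          exact ⟨T, hT, hfin.subset hT, hTcard⟩
        · exact Set.Infinite.exists_subset_ncard_eq hfin (2 * w)
      obtain ⟨T, hTsub, hTfin, hTcard⟩ := hbig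
      have hFcard : hTfin.toFinset.card = 2 * w := by
        rw [← hTcard, Set.ncard_eq_toFinset_card T hTfin]
      set e := hTfin.toFinset.orderEmbOfFin hFcard with he
      apply hz
      refine ⟨fun i => e i, e.strictMono, fun i => ?_, fun i => ?_⟩
      · have : (e i : ℝ) ∈ T := by
          have := Finset.orderEmbOfFin_mem hTfin.toFinset hFcard i
          rwa [Set.Finite.mem_toFinset] at this
        exact Set.Ioo_subset_Icc_self (hZIoo (hTsub this))
      · have : (e i : ℝ) ∈ T := by
          have := Finset.orderEmbOfFin_mem hTfin.toFinset hFcard i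
          rwa [Set.Finite.mem_toFinset] at this
        exact (hTsub this).2
    have hpb := piece_bound b lam S hpos hS (2 * w - 1) α β hab hsub hfc.1 hfc.2
    have hcast : ((2 * w - 1 : ℕ) : ℝ) + 1 = (2 * w : ℝ) := by
      have h1 : 1 ≤ 2 * w := by omega
      push_cast [Nat.cast_sub h1]
      ring
    rw [hcast] at hpb
    calc ∫ x in α..β, |t b lam 1 x| ≤ (2 * (w:ℝ)) * S := by
          convert hpb using 2 <;> push_cast <;> ring
      _ = (2 * w) * S := by push_cast; ring


lemma total_var (hlam : ∀ i, (lam i) ^ 2 ≤ 4 * Real.pi ^ 2) (hw : 1 ≤ w) (S : ℝ)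
    (hpos : ∀ u, 0 ≤ t b lam 0 u)
    (hS : ∀ x ∈ Set.Icc (0:ℝ) 1, |t b lam 0 x| ≤ S) :
    ∫ x in (0:ℝ)..1, |t b lam 1 x| ≤ 22 * w ^ 2 * S := by
  have hMpos : (0:ℝ) < 11 * w := by
    have : (1:ℝ) ≤ (w:ℝ) := by exact_mod_cast hw
    linarith
  set a : ℕ → ℝ := fun k => k / (11 * w) with ha
  have hint : ∀ k, IntervalIntegrable (fun x => |t b lam 1 x|) volume (a k) (a (k+1)) :=
    fun k => ((continuous_t b lam 1).abs).intervalIntegrable _ _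
  have hsum := intervalIntegral.sum_integral_adjacent_intervals
    (a := a) (n := 11 * w) (μ := volume) (f := fun x => |t b lam 1 x|) (fun k _ => hint k)
  have ha0 : a 0 = 0 := by simp [ha]
  have haN : a (11 * w) = 1 := by
    simp only [ha]; push_cast; exact div_self hMpos.ne'
  rw [ha0, haN] at hsum
  rw [← hsum]
  have hpiece : ∀ k, k < 11 * w → ∫ x in a k..a (k+1), |t b lam 1 x| ≤ (2 * w) * S := by
    intro k hk
    have hk1 : ((k:ℝ) + 1) ≤ 11 * w := by exact_mod_cast Nat.succ_le_of_lt hk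
    have hab : a k ≤ a (k + 1) := by
      apply div_le_div_of_nonneg_right _ hMpos.le
      push_cast; linarith
    have hsub : Set.Icc (a k) (a (k+1)) ⊆ Set.Icc 0 1 := by
      intro x hx
      constructor
      · refine le_trans ?_ hx.1
        positivity
      · refine le_trans hx.2 ?_
        rw [div_le_one hMpos]
        push_cast; linarith
    have hlen : a (k+1) - a k ≤ 1 / (11 * w) := by
      have : a (k+1) - a k = 1 / (11 * w) := by
        simp only [ha]; push_cast; ring
      rw [this]
    exact seg b lam hlam hw S hpos hS hab hsub hlen
  calc ∑ k ∈ Finset.range (11 * w), ∫ x in a k..a (k+1), |t b lam 1 x|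
      ≤ ∑ _k ∈ Finset.range (11 * w), (2 * w) * S := by
        apply Finset.sum_le_sum
        intro k hk
        exact hpiece k (Finset.mem_range.mp hk)
    _ = (11 * w) * ((2 * w) * S) := by
        rw [Finset.sum_const, Finset.card_range]
        push_cast; ring
    _ = 22 * w ^ 2 * S := by push_cast; ring

lemma riemann (N : ℕ) (hN : 1 ≤ N) :
    |(∫ u in (0:ℝ)..1, t b lam 0 u) -
        (1 / (N:ℝ)) * ∑ k ∈ Finset.range N, t b lam 0 (k / N)| ≤
      (1 / (N:ℝ)) * ∫ x in (0:ℝ)..1, |t b lam 1 x| := by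
  have hN0 : (0:ℝ) < N := by exact_mod_cast hN
  set a : ℕ → ℝ := fun k => k / N with ha
  have hint0 : ∀ (u v : ℝ), IntervalIntegrable (t b lam 0) volume u v :=
    fun u v => (continuous_t b lam 0).intervalIntegrable _ _
  have hsum := intervalIntegral.sum_integral_adjacent_intervals
    (a := a) (n := N) (μ := volume) (f := t b lam 0) (fun k _ => hint0 _ _)
  have ha0 : a 0 = 0 := by simp [ha]
  have haN : a N = 1 := by simp only [ha]; exact div_self hN0.ne'
  have hstep : ∀ k : ℕ, a (k+1) - a k = 1 / N := by
    intro k; simp only [ha]; push_cast; ring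
  have hab : ∀ k : ℕ, a k ≤ a (k+1) := by
    intro k
    have := hstep k
    have h1N : (0:ℝ) < 1 / N := by positivity
    linarith
  -- decompose the difference
  have hdec : (∫ u in (0:ℝ)..1, t b lam 0 u) -
      (1 / (N:ℝ)) * ∑ k ∈ Finset.range N, t b lam 0 (k / N) =
      ∑ k ∈ Finset.range N, ∫ u in a k..a (k+1), (t b lam 0 u - t b lam 0 (a k)) := by
    have h1 : (∫ u in (0:ℝ)..1, t b lam 0 u) =
        ∑ k ∈ Finset.range N, ∫ u in a k..a (k+1), t b lam 0 u := by
      rw [hsum, ha0, haN]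
    rw [h1, Finset.mul_sum, ← Finset.sum_sub_distrib]
    refine Finset.sum_congr rfl fun k _ => ?_
    have hc : ∫ _u in a k..a (k+1), t b lam 0 (a k) = (1/(N:ℝ)) * t b lam 0 (a k) := by
      rw [intervalIntegral.integral_const, smul_eq_mul, hstep k]
    rw [intervalIntegral.integral_sub (hint0 _ _) (intervalIntegrable_const), hc]
  rw [hdec]
  -- bound each summand
  have hbound : ∀ k : ℕ, |∫ u in a k..a (k+1), (t b lam 0 u - t b lam 0 (a k))| ≤
      (1 / N) * ∫ x in a k..a (k+1), |t b lam 1 x| := by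
    intro k
    have hVk0 : 0 ≤ ∫ x in a k..a (k+1), |t b lam 1 x| :=
      intervalIntegral.integral_nonneg (hab k) (fun u _ => abs_nonneg _)
    have hptw : ∀ u ∈ Set.uIoc (a k) (a (k+1)),
        ‖t b lam 0 u - t b lam 0 (a k)‖ ≤ ∫ x in a k..a (k+1), |t b lam 1 x| := by
      intro u hu
      rw [Set.uIoc_of_le (hab k)] at hu
      have hftc : ∫ x in a k..u, t b lam 1 x = t b lam 0 u - t b lam 0 (a k) :=
        integral_eq_sub_of_hasDerivAt (fun y _ => hasDerivAt_t b lam 0 y)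
          ((continuous_t b lam 1).intervalIntegrable _ _)
      rw [Real.norm_eq_abs, ← hftc]
      calc |∫ x in a k..u, t b lam 1 x| ≤ ∫ x in a k..u, |t b lam 1 x| :=
            intervalIntegral.abs_integral_le_integral_abs (le_of_lt hu.1)
        _ ≤ ∫ x in a k..a (k+1), |t b lam 1 x| := by
            apply intervalIntegral.integral_mono_interval (le_refl (a k)) (le_of_lt hu.1) hu.2
            · exact Filter.Eventually.of_forall fun x => abs_nonneg _
            · exact ((continuous_t b lam 1).abs).intervalIntegrable _ _
    have := intervalIntegral.norm_integral_le_of_norm_le_const hptw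
    rw [Real.norm_eq_abs] at this
    calc |∫ u in a k..a (k+1), (t b lam 0 u - t b lam 0 (a k))| ≤
        (∫ x in a k..a (k+1), |t b lam 1 x|) * |a (k+1) - a k| := this
      _ = (1 / N) * ∫ x in a k..a (k+1), |t b lam 1 x| := by
          rw [hstep k, abs_of_pos (by positivity : (0:ℝ) < 1 / N)]
          ring
  calc |∑ k ∈ Finset.range N, ∫ u in a k..a (k+1), (t b lam 0 u - t b lam 0 (a k))|
      ≤ ∑ k ∈ Finset.range N, |∫ u in a k..a (k+1), (t b lam 0 u - t b lam 0 (a k))| :=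
        Finset.abs_sum_le_sum_abs _ _
    _ ≤ ∑ k ∈ Finset.range N, (1 / N) * ∫ x in a k..a (k+1), |t b lam 1 x| :=
        Finset.sum_le_sum fun k _ => hbound k
    _ = (1 / N) * ∑ k ∈ Finset.range N, ∫ x in a k..a (k+1), |t b lam 1 x| := by
        rw [Finset.mul_sum]
    _ = (1 / N) * ∫ x in (0:ℝ)..1, |t b lam 1 x| := by
        congr 1
        rw [← ha0, ← haN]
        exact intervalIntegral.sum_integral_adjacent_intervals
          (fun k _ => ((continuous_t b lam 1).abs).intervalIntegrable _ _)

end RSA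



/-- Riemann-sum approximation for nonnegative exponential sums: there is an absolute
constant `C` such that if `T : ℝ → ℝ` is a nonnegative exponential sum of degree at most
`w = ℓ² − ℓ + 1` whose real frequencies are bounded by `τNΔ ≤ 2π` in absolute value, and
`N ≥ 1` is an integer, then
`|∫_0^1 T − (1/N) ∑_{k=0}^N T(k/N)| ≤ (C ℓ^5 / N) ‖T‖_{L∞[0,1]}`. -/
theorem riemann_sum_approx :
    ∃ C : ℝ, 0 < C ∧
      ∀ (ℓ N : ℕ) (τ Δ : ℝ) (b : Fin (ℓ ^ 2 - ℓ + 1) → ℂ)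
        (lam : Fin (ℓ ^ 2 - ℓ + 1) → ℝ) (T : ℝ → ℝ),
        1 ≤ ℓ → 1 ≤ N →
        (∀ i, |lam i| ≤ τ * N * Δ) → τ * N * Δ ≤ 2 * Real.pi →
        (∀ u : ℝ, ((T u : ℝ) : ℂ) = ∑ i, b i * Complex.exp (Complex.I * u * lam i)) →
        (∀ u : ℝ, 0 ≤ T u) →
        |(∫ u in (0:ℝ)..1, T u) - (1 / (N : ℝ)) * ∑ k ∈ Finset.range (N + 1), T (k / N)| ≤
          C * (ℓ : ℝ) ^ 5 / N * sSup ((fun u : ℝ => |T u|) '' Set.Icc (0:ℝ) 1) := by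
  refine ⟨23, by norm_num, ?_⟩
  intro ℓ N τ Δ b lam T hℓ hN hlam hτ hTrep hTpos
  have hw : 1 ≤ ℓ ^ 2 - ℓ + 1 := Nat.le_add_left 1 _
  have hT0 : ∀ u, T u = RSA.t b lam 0 u := by
    intro u
    have h := hTrep u
    have h2 : T u = (∑ i, b i * Complex.exp (Complex.I * u * lam i)).re := by
      rw [← h, Complex.ofReal_re]
    rw [h2]
    unfold RSA.t RSA.phi
    congr 1
    refine Finset.sum_congr rfl fun i _ => ?_
    rw [pow_zero, mul_one]
  have hTeq : T = RSA.t b lam 0 := funext hT0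
  set S := sSup ((fun u : ℝ => |T u|) '' Set.Icc (0:ℝ) 1) with hSdef
  have hbdd : BddAbove ((fun u : ℝ => |T u|) '' Set.Icc (0:ℝ) 1) := by
    rw [hTeq]
    exact (isCompact_Icc.image_of_continuousOn
      ((RSA.continuous_t b lam 0).abs.continuousOn)).bddAbove
  have hS : ∀ x ∈ Set.Icc (0:ℝ) 1, |RSA.t b lam 0 x| ≤ S := fun x hx => by
    rw [← hT0]
    exact le_csSup hbdd ⟨x, hx, rfl⟩
  have hS0 : (0:ℝ) ≤ S := le_trans (abs_nonneg _) (hS 0 ⟨le_refl _, zero_le_one⟩)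
  have hpos : ∀ u, 0 ≤ RSA.t b lam 0 u := fun u => (hT0 u) ▸ hTpos u
  have hlam2 : ∀ i, (lam i) ^ 2 ≤ 4 * Real.pi ^ 2 := by
    intro i
    have h1 : |lam i| ≤ 2 * Real.pi := le_trans (hlam i) hτ
    have h2 : (0:ℝ) ≤ |lam i| := abs_nonneg _
    nlinarith [_root_.sq_abs (lam i)]
  have hTV := RSA.total_var b lam hlam2 hw S hpos hS
  have hRie := RSA.riemann b lam N hN
  have hN0 : (0:ℝ) < N := by exact_mod_cast hN
  have hNN : ((N:ℝ)) / N = 1 := div_self (ne_of_gt hN0)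
  rw [hTeq]
  rw [Finset.sum_range_succ]
  have hlast : RSA.t b lam 0 ((N:ℝ) / N) = RSA.t b lam 0 1 := by rw [hNN]
  rw [hlast]
  have hbd1 : |(∫ u in (0:ℝ)..1, RSA.t b lam 0 u) -
      (1 / (N:ℝ)) * ((∑ k ∈ Finset.range N, RSA.t b lam 0 (k / N)) + RSA.t b lam 0 1)| ≤
      (1 / (N:ℝ)) * (22 * ((ℓ ^ 2 - ℓ + 1 : ℕ):ℝ) ^ 2 * S) + (1 / (N:ℝ)) * S := by
    have e1 : (∫ u in (0:ℝ)..1, RSA.t b lam 0 u) -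
        (1 / (N:ℝ)) * ((∑ k ∈ Finset.range N, RSA.t b lam 0 (k / N)) + RSA.t b lam 0 1) =
        ((∫ u in (0:ℝ)..1, RSA.t b lam 0 u) -
          (1 / (N:ℝ)) * ∑ k ∈ Finset.range N, RSA.t b lam 0 (k / N)) -
          (1 / (N:ℝ)) * RSA.t b lam 0 1 := by ring
    rw [e1]
    refine le_trans (abs_sub _ _) ?_
    gcongr
    · exact le_trans hRie (by
        have h1N : (0:ℝ) ≤ 1 / (N:ℝ) := by positivity
        exact mul_le_mul_of_nonneg_left hTV h1N)
    · rw [abs_mul]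
      have : |(1:ℝ) / (N:ℝ)| = 1 / (N:ℝ) := abs_of_pos (by positivity)
      rw [this]
      exact mul_le_mul_of_nonneg_left (hS 1 ⟨zero_le_one, le_refl _⟩) (by positivity)
  refine le_trans hbd1 ?_
  have hwl : ((ℓ ^ 2 - ℓ + 1 : ℕ):ℝ) ≤ ((ℓ:ℝ)) ^ 2 := by
    have hn : (ℓ ^ 2 - ℓ + 1 : ℕ) ≤ ℓ ^ 2 := by
      have hmul : ℓ ≤ ℓ * ℓ := Nat.le_mul_of_pos_left ℓ (by omega)
      have e : ℓ ^ 2 = ℓ * ℓ := by ring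
      omega
    calc ((ℓ ^ 2 - ℓ + 1 : ℕ):ℝ) ≤ ((ℓ ^ 2 : ℕ):ℝ) := by exact_mod_cast hn
      _ = ((ℓ:ℝ)) ^ 2 := by push_cast; ring
  have hl1 : (1:ℝ) ≤ (ℓ:ℝ) := by exact_mod_cast hℓ
  have hwpos : (0:ℝ) ≤ ((ℓ ^ 2 - ℓ + 1 : ℕ):ℝ) := Nat.cast_nonneg _
  have hkey : 22 * ((ℓ ^ 2 - ℓ + 1 : ℕ):ℝ) ^ 2 + 1 ≤ 23 * (ℓ:ℝ) ^ 5 := by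
    have h1 : ((ℓ ^ 2 - ℓ + 1 : ℕ):ℝ) ^ 2 ≤ ((ℓ:ℝ) ^ 2) ^ 2 := by
      apply pow_le_pow_left₀ hwpos hwl
    have h2 : (1:ℝ) ≤ (ℓ:ℝ) ^ 4 := one_le_pow₀ hl1
    have h3 : (ℓ:ℝ) ^ 4 ≤ (ℓ:ℝ) ^ 5 := by
      apply pow_le_pow_right₀ hl1
      omega
    nlinarith
  calc (1 / (N:ℝ)) * (22 * ((ℓ ^ 2 - ℓ + 1 : ℕ):ℝ) ^ 2 * S) + (1 / (N:ℝ)) * S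
      = (22 * ((ℓ ^ 2 - ℓ + 1 : ℕ):ℝ) ^ 2 + 1) * S / N := by ring
    _ ≤ (23 * (ℓ:ℝ) ^ 5) * S / N := by
        apply div_le_div_of_nonneg_right _ hN0.le
        exact mul_le_mul_of_nonneg_right hkey hS0
    _ = 23 * (ℓ:ℝ) ^ 5 / N * S := by ring
end
end
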